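/- arXiv:1401.0854 — 11 statements merged into one kernel-verified Lean document; each statement's English description precedes it below -/
import Mathlib

section
/- Let F be the multiplicative inverse, in the ring of formal power series ℤ[[x1, x2, x3, x4]], of the polynomial (1 - x1 - x2)(1 - x3 - x4) - x1·x2·x3·x4 (which has constant term 1 and hence is invertible). Then for every natural number n, the coefficient of x1^n·x2^n·x3^n·x4^n in F equals the Apéry number A(n) = Σ_{k=0}^{n} C(n, k)²·C(n+k, k)², where C denotes the usual binomial coefficient. -/
namespace Stmt0Aux

def c (m a b : ℕ) : ℤ := ((a + b + m).choose m : ℤ) * ((a + b).choose a : ℤ)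

lemma pascal_c (m a b : ℕ) :
    c (m+1) a b - (if a = 0 then 0 else c (m+1) (a-1) b)
      - (if b = 0 then 0 else c (m+1) a (b-1)) = c m a b := by
  rcases a with _ | a <;> rcases b with _ | b
  · simp [c]
  · simp only [c, if_pos rfl, if_neg (Nat.succ_ne_zero b), Nat.add_sub_cancel,
      Nat.zero_add, Nat.choose_zero_right, mul_one, sub_zero]
    rw [show b + 1 + (m+1) = b + 1 + m + 1 by omega, Nat.choose_succ_succ' (b+1+m) m,
      show b + (m+1) = b + 1 + m by omega]
    push_cast; ring
  · simp only [c, if_pos rfl, if_neg (Nat.succ_ne_zero a), Nat.add_sub_cancel,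
      Nat.add_zero, Nat.choose_self, mul_one, sub_zero]
    rw [show a + 1 + (m+1) = a + 1 + m + 1 by omega, Nat.choose_succ_succ' (a+1+m) m,
      show a + (m+1) = a + 1 + m by omega]
    push_cast; ring
  · simp only [c, if_neg (Nat.succ_ne_zero a), if_neg (Nat.succ_ne_zero b), Nat.add_sub_cancel]
    rw [show a + 1 + (b+1) + (m+1) = a + b + 2 + m + 1 by omega,
      Nat.choose_succ_succ' (a+b+2+m) m,
      show a + (b+1) + (m+1) = a + b + 2 + m by omega,
      show a + 1 + b + (m+1) = a + b + 2 + m by omega,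
      show a + 1 + (b+1) = a + b + 1 + 1 by omega,
      Nat.choose_succ_succ' (a+b+1) a,
      show a + (b+1) = a + b + 1 by omega,
      show a + 1 + b = a + b + 1 by omega]
    push_cast; ring

def δ2 (a b : ℕ) : ℤ := if a = 0 ∧ b = 0 then 1 else 0

lemma pascal_c0 (a b : ℕ) :
    c 0 a b - (if a = 0 then 0 else c 0 (a-1) b)
      - (if b = 0 then 0 else c 0 a (b-1)) = δ2 a b := by
  rcases a with _ | a <;> rcases b with _ | b
  · simp [c, δ2]
  · simp [c, δ2, Nat.succ_ne_zero]
  · simp [c, δ2, Nat.succ_ne_zero]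
  · simp only [c, δ2, if_neg (Nat.succ_ne_zero a), if_neg (Nat.succ_ne_zero b),
      Nat.add_sub_cancel, Nat.choose_zero_right, Nat.add_zero, Nat.zero_add,
      Nat.choose_self, one_mul, mul_one]
    rw [show a + 1 + (b+1) = a + b + 1 + 1 by omega, Nat.choose_succ_succ' (a+b+1) a,
      show a + (b+1) = a + b + 1 by omega, show a + 1 + b = a + b + 1 by omega]
    push_cast
    simp [Nat.choose_zero_right]

end Stmt0Aux
namespace Stmt0Aux
open MvPowerSeries Finsupp Finset

def Vb (f g : ℕ → ℕ → ℤ) : MvPowerSeries (Fin 4) ℤ :=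
  fun e => f (e 0) (e 1) * g (e 2) (e 3)

lemma coeff_Vb (f g : ℕ → ℕ → ℤ) (e : Fin 4 →₀ ℕ) :
    MvPowerSeries.coeff e (Vb f g) = f (e 0) (e 1) * g (e 2) (e 3) := rfl

lemma coeff_X_mul (i : Fin 4) (φ : MvPowerSeries (Fin 4) ℤ) (e : Fin 4 →₀ ℕ) :
    MvPowerSeries.coeff e (X i * φ)
      = if e i = 0 then 0 else MvPowerSeries.coeff (e - Finsupp.single i 1) φ := by
  rw [X_def, coeff_monomial_mul]
  by_cases h : e i = 0
  · rw [if_neg, if_pos h]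
    rw [Finsupp.single_le_iff, h]
    omega
  · rw [if_pos, if_neg h, one_mul]
    rw [Finsupp.single_le_iff]
    omega

lemma sub_single_apply (e : Fin 4 →₀ ℕ) (i j : Fin 4) :
    ((e - Finsupp.single i 1) : Fin 4 →₀ ℕ) j = if j = i then e j - 1 else e j := by
  rw [Finsupp.tsub_apply, Finsupp.single_apply]
  split <;> rename_i h
  · rw [if_pos h.symm]
  · rw [if_neg (fun hh => h hh.symm)]; omega

end Stmt0Aux
namespace Stmt0Aux
open MvPowerSeries Finsupp Finset

lemma mul_front (f' f g : ℕ → ℕ → ℤ)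
    (hf : ∀ a b, f' a b - (if a = 0 then 0 else f' (a-1) b)
      - (if b = 0 then 0 else f' a (b-1)) = f a b) :
    (1 - X 0 - X 1) * Vb f' g = Vb f g := by
  ext e
  rw [sub_mul, sub_mul, one_mul, map_sub, map_sub, coeff_X_mul, coeff_X_mul,
    coeff_Vb, coeff_Vb]
  simp only [coeff_Vb, sub_single_apply,
    show (1:Fin 4) ≠ 0 by decide, show (2:Fin 4) ≠ 0 by decide,
    show (3:Fin 4) ≠ 0 by decide, show (0:Fin 4) ≠ 1 by decide,
    show (2:Fin 4) ≠ 1 by decide, show (3:Fin 4) ≠ 1 by decide,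
    if_pos rfl, if_neg, ite_true, ite_false, if_true, if_false]
  have H := hf (e 0) (e 1)
  split_ifs at H ⊢ <;> linear_combination g (e 2) (e 3) * H

lemma mul_back (f g' g : ℕ → ℕ → ℤ)
    (hg : ∀ a b, g' a b - (if a = 0 then 0 else g' (a-1) b)
      - (if b = 0 then 0 else g' a (b-1)) = g a b) :
    (1 - X 2 - X 3) * Vb f g' = Vb f g := by
  ext e
  rw [sub_mul, sub_mul, one_mul, map_sub, map_sub, coeff_X_mul, coeff_X_mul,
    coeff_Vb, coeff_Vb]
  simp only [coeff_Vb, sub_single_apply,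
    show (0:Fin 4) ≠ 2 by decide, show (1:Fin 4) ≠ 2 by decide,
    show (3:Fin 4) ≠ 2 by decide, show (0:Fin 4) ≠ 3 by decide,
    show (1:Fin 4) ≠ 3 by decide, show (2:Fin 4) ≠ 3 by decide,
    if_pos rfl, if_neg, ite_true, ite_false, if_true, if_false]
  have H := hg (e 2) (e 3)
  split_ifs at H ⊢ <;> linear_combination f (e 0) (e 1) * H

def W (m : ℕ) : MvPowerSeries (Fin 4) ℤ := Vb (c m) (c m)

lemma Vb_delta : Vb δ2 δ2 = 1 := by
  ext e
  rw [coeff_Vb, MvPowerSeries.coeff_one]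
  unfold δ2
  by_cases h : e = 0
  · simp [h]
  · rw [if_neg h]
    have h4 : ¬ (e 0 = 0 ∧ e 1 = 0 ∧ e 2 = 0 ∧ e 3 = 0) := by
      intro ⟨h0, h1, h2, h3⟩
      apply h
      ext i
      fin_cases i <;> assumption
    by_cases h0 : e 0 = 0 ∧ e 1 = 0 <;> by_cases h1 : e 2 = 0 ∧ e 3 = 0
    · exact absurd ⟨h0.1, h0.2, h1.1, h1.2⟩ h4
    · rw [if_neg h1, mul_zero]
    · rw [if_neg h0, zero_mul]
    · rw [if_neg h0, zero_mul]

lemma uvW_succ (m : ℕ) : (1 - X 0 - X 1) * ((1 - X 2 - X 3) * W (m+1)) = W m := by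
  rw [W, W, mul_back (c (m+1)) (c (m+1)) (c m) (pascal_c m),
    mul_front (c (m+1)) (c m) (c m) (pascal_c m)]

lemma uvW_zero : (1 - X 0 - X 1) * ((1 - X 2 - X 3) * W 0) = 1 := by
  rw [W, mul_back (c 0) (c 0) δ2 pascal_c0, mul_front (c 0) δ2 δ2 pascal_c0, Vb_delta]

end Stmt0Aux
namespace Stmt0Aux
open MvPowerSeries Finsupp Finset

noncomputable def dd : Fin 4 →₀ ℕ :=
  Finsupp.single 0 1 + Finsupp.single 1 1 + Finsupp.single 2 1 + Finsupp.single 3 1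

lemma dd_apply (i : Fin 4) : dd i = 1 := by
  fin_cases i <;> simp [dd, Finsupp.single_apply]

noncomputable def Q : MvPowerSeries (Fin 4) ℤ := X 0 * X 1 * X 2 * X 3

lemma Q_eq : Q = monomial dd 1 := by
  rw [Q, X_def, X_def, X_def, X_def, monomial_mul_monomial, monomial_mul_monomial,
    monomial_mul_monomial, dd]
  norm_num

lemma Q_pow (m : ℕ) : Q ^ m = monomial (m • dd) 1 := by
  induction m with
  | zero => simp [MvPowerSeries.monomial_zero_one]
  | succ k ih =>
      rw [pow_succ, ih, Q_eq, monomial_mul_monomial, succ_nsmul, one_mul]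

noncomputable def G (N : ℕ) : MvPowerSeries (Fin 4) ℤ :=
  ∑ m ∈ Finset.range (N + 1), Q ^ m * W m

lemma MG (N : ℕ) :
    ((1 - X 0 - X 1) * (1 - X 2 - X 3) - Q) * G N = 1 - Q ^ (N + 1) * W N := by
  induction N with
  | zero =>
      have h0 := uvW_zero
      rw [G, Finset.sum_range_one]
      linear_combination h0
  | succ k ih =>
      have hs : G (k+1) = G k + Q ^ (k+1) * W (k+1) := by
        rw [G, G, Finset.sum_range_succ]
      have h1 := uvW_succ k
      rw [hs]
      linear_combination ih + (Q ^ (k+1)) * h1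

end Stmt0Aux
open Stmt0Aux MvPowerSeries

/-- The Apéry numbers `A(n) = ∑_{k=0}^n C(n,k)² C(n+k,k)²` are the diagonal Taylor
coefficients of the inverse of `(1 - x₁ - x₂)(1 - x₃ - x₄) - x₁x₂x₃x₄`. -/
theorem stmt0 (F : MvPowerSeries (Fin 4) ℤ)
    (hF : ((1 - MvPowerSeries.X 0 - MvPowerSeries.X 1) *
        (1 - MvPowerSeries.X 2 - MvPowerSeries.X 3) -
        MvPowerSeries.X 0 * MvPowerSeries.X 1 * MvPowerSeries.X 2 * MvPowerSeries.X 3) * F = 1)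
    (n : ℕ) :
    MvPowerSeries.coeff (Finsupp.equivFunOnFinite.symm fun _ => n) F =
      ∑ k ∈ Finset.range (n + 1), (n.choose k : ℤ) ^ 2 * ((n + k).choose k : ℤ) ^ 2 := by
  classical
  set E : Fin 4 →₀ ℕ := Finsupp.equivFunOnFinite.symm fun _ => n with hEdef
  have hE : ∀ i, E i = n := fun i => rfl
  have hF' : ((1 - X 0 - X 1) * (1 - X 2 - X 3) - Q) * F = 1 := by rw [Q]; exact hF
  have h2 := MG n
  have key : F = G n + F * (Q ^ (n+1) * W n) := by
    calc F = F * (((1 - X 0 - X 1) * (1 - X 2 - X 3) - Q) * G n)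
            + F * (Q ^ (n+1) * W n) := by rw [h2]; ring
      _ = G n + F * (Q ^ (n+1) * W n) := by
          rw [show F * (((1 - X 0 - X 1) * (1 - X 2 - X 3) - Q) * G n)
              = (((1 - X 0 - X 1) * (1 - X 2 - X 3) - Q) * F) * G n by ring, hF', one_mul]
  rw [key, map_add]
  have hz : MvPowerSeries.coeff E (F * (Q ^ (n+1) * W n)) = 0 := by
    rw [show F * (Q ^ (n+1) * W n) = Q ^ (n+1) * (F * W n) by ring, Q_pow,
      coeff_monomial_mul, if_neg]
    intro hle
    have h0 := (Finsupp.le_def.mp hle) 0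
    rw [Finsupp.smul_apply, dd_apply, hE, smul_eq_mul, mul_one] at h0
    omega
  rw [hz, add_zero, G, map_sum]
  have hsum : ∀ m ∈ Finset.range (n+1), MvPowerSeries.coeff E (Q ^ m * W m)
      = c m (n - m) (n - m) * c m (n - m) (n - m) := by
    intro m hm
    rw [Finset.mem_range] at hm
    rw [Q_pow, coeff_monomial_mul, if_pos, one_mul]
    · have hc : ∀ i, ((E - m • dd : Fin 4 →₀ ℕ)) i = n - m := by
        intro i
        rw [Finsupp.tsub_apply, Finsupp.smul_apply, dd_apply, hE, smul_eq_mul, mul_one]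
      rw [W, coeff_Vb, hc 0, hc 1, hc 2, hc 3]
    · rw [Finsupp.le_def]
      intro i
      rw [Finsupp.smul_apply, dd_apply, hE, smul_eq_mul, mul_one]
      omega
  rw [Finset.sum_congr rfl hsum]
  refine Eq.trans (Finset.sum_range_reflect _ _).symm (Finset.sum_congr rfl fun k hk => ?_)
  rw [Finset.mem_range] at hk
  rw [show n + 1 - 1 - k = n - k by omega, show n - (n - k) = k by omega]
  have e1 : k + k + (n - k) = n + k := by omega
  simp only [c]
  rw [e1]
  have h3 := Nat.choose_mul (n := n + k) (show k ≤ k + k by omega)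
  rw [show (n + k) - k = n by omega, show (k + k) - k = k by omega] at h3
  have h4 : (n + k).choose (n - k) = (n + k).choose (k + k) := by
    have h5 := Nat.choose_symm (show k + k ≤ n + k by omega)
    rw [show (n + k) - (k + k) = n - k by omega] at h5
    exact h5
  have hzz : ((n + k).choose (n - k) : ℤ) * ((k + k).choose k)
      = ((n + k).choose k) * (n.choose k) := by
    rw [h4]; exact_mod_cast h3
  linear_combination (((n + k).choose (n - k) : ℤ) * ((k + k).choose k)
    + ((n + k).choose k : ℤ) * (n.choose k)) * hzz
end

section
/- Let F be the multiplicative inverse, in the ring of formal power series ℤ[[x1, x2, x3, x4]], of the polynomial (1 - x1 - x2)(1 - x3 - x4) - x1·x2·x3·x4. Then for all natural numbers n1, n2, n3, n4, the coefficient of x1^{n1}·x2^{n2}·x3^{n3}·x4^{n4} in F equals Σ_{k=0}^{min(n1,n2,n3,n4)} C(n1, k)·C(n3, k)·C(n1+n2-k, n1)·C(n3+n4-k, n3), where C denotes the usual binomial coefficient. -/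
namespace Stmt1Aux

open MvPowerSeries Finsupp

/-- Pair coefficient: coefficient of `x^a y^b` in `(xy)^k / (1-x-y)^(k+1)`. -/
def B (a b k : ℕ) : ℤ := (a.choose k : ℤ) * ((a + b - k).choose a : ℤ)

lemma B_zero₁ {a b k : ℕ} (h : a < k) : B a b k = 0 := by
  simp [B, Nat.choose_eq_zero_of_lt h]

lemma B_zero₂ {a b k : ℕ} (h : b < k) : B a b k = 0 := by
  rcases lt_or_ge a k with h' | h'
  · exact B_zero₁ h'
  · have : a + b - k < a := by omega
    simp [B, Nat.choose_eq_zero_of_lt this]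

lemma B_apply0 (a b : ℕ) : B a b 0 = ((a + b).choose a : ℤ) := by simp [B]

lemma B_degen {a b : ℕ} (h : a = 0 ∨ b = 0) (k : ℕ) :
    B a b k = if k = 0 then 1 else 0 := by
  rcases k with _ | k
  · rcases h with h | h <;> subst h <;> simp [B]
  · rcases h with h | h <;> subst h
    · simp [B]
    · rcases lt_or_ge a (k+1) with h' | h'
      · simp [B_zero₁ h']
      · have : a - (k+1) < a := by omega
        simp [B, Nat.choose_eq_zero_of_lt this]

lemma B_pascal (a b k : ℕ) :
    B (a+1) (b+1) (k+1) = B a (b+1) (k+1) + B (a+1) b (k+1) + B a b k := by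
  rcases le_or_gt k (a + b) with h | h
  · have e1 : a + 1 + (b + 1) - (k + 1) = (a + b - k) + 1 := by omega
    have e2 : a + (b + 1) - (k + 1) = a + b - k := by omega
    have e3 : a + 1 + b - (k + 1) = a + b - k := by omega
    simp only [B, e1, e2, e3, Nat.choose_succ_succ]
    push_cast
    ring
  · have h1 : a < k := by omega
    have h2 : a < k + 1 := by omega
    have h3 : a + 1 < k + 1 := by omega
    simp [B_zero₁ h1, B_zero₁ h2, B_zero₁ h3]

lemma B_pascal0 (a b : ℕ) : B (a+1) (b+1) 0 = B a (b+1) 0 + B (a+1) b 0 := by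
  rw [B_apply0, B_apply0, B_apply0]
  have e1 : a + 1 + (b + 1) = (a + b + 1) + 1 := by omega
  have e2 : a + (b + 1) = a + b + 1 := by omega
  have e3 : a + 1 + b = a + b + 1 := by omega
  rw [e1, e2, e3, Nat.choose_succ_succ (a + b + 1) a]
  push_cast
  ring

def S (N a b c d : ℕ) : ℤ := ∑ k ∈ Finset.range N, B a b k * B c d k

def A (a b c d : ℕ) : ℤ := S (a + 1) a b c d

lemma A_eq_S {N a b c d : ℕ} (h : a + 1 ≤ N) : A a b c d = S N a b c d := by
  refine Finset.sum_subset (Finset.range_subset_range.2 h) fun x _ hx => ?_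
  rw [B_zero₁ (by simpa using hx), zero_mul]

lemma A_left {a b : ℕ} (h : a = 0 ∨ b = 0) (c d : ℕ) :
    A a b c d = ((c + d).choose c : ℤ) := by
  rw [A, S, Finset.sum_eq_single 0]
  · rw [B_degen h, if_pos rfl, one_mul, B_apply0]
  · intro k _ hk
    rw [B_degen h, if_neg hk, zero_mul]
  · simp

lemma A_right {c d : ℕ} (h : c = 0 ∨ d = 0) (a b : ℕ) :
    A a b c d = ((a + b).choose a : ℤ) := by
  rw [A, S, Finset.sum_eq_single 0]
  · rw [B_degen h, if_pos rfl, mul_one, B_apply0]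
  · intro k _ hk
    rw [B_degen h, if_neg hk, mul_zero]
  · simp

lemma master_core (a b c d : ℕ) :
    A (a+1) (b+1) (c+1) (d+1) =
      A a (b+1) (c+1) (d+1) + A (a+1) b (c+1) (d+1) +
      A (a+1) (b+1) c (d+1) + A (a+1) (b+1) (c+1) d -
      A a (b+1) c (d+1) - A a (b+1) (c+1) d -
      A (a+1) b c (d+1) - A (a+1) b (c+1) d + A a b c d := by
  set N := a + 2 with hN
  have key : ∑ k ∈ Finset.range (N + 1),
      (B (a+1) (b+1) k - B a (b+1) k - B (a+1) b k) *
      (B (c+1) (d+1) k - B c (d+1) k - B (c+1) d k) = S N a b c d := by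
    rw [Finset.sum_range_succ']
    have h0 : B (a+1) (b+1) 0 - B a (b+1) 0 - B (a+1) b 0 = 0 := by
      rw [B_pascal0]; ring
    rw [h0, zero_mul, add_zero]
    refine Finset.sum_congr rfl fun k _ => ?_
    have h1 : B (a+1) (b+1) (k+1) - B a (b+1) (k+1) - B (a+1) b (k+1) = B a b k := by
      rw [B_pascal]; ring
    have h2 : B (c+1) (d+1) (k+1) - B c (d+1) (k+1) - B (c+1) d (k+1) = B c d k := by
      rw [B_pascal]; ring
    rw [h1, h2]
  have expand : ∑ k ∈ Finset.range (N + 1),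
      (B (a+1) (b+1) k - B a (b+1) k - B (a+1) b k) *
      (B (c+1) (d+1) k - B c (d+1) k - B (c+1) d k) =
      S (N+1) (a+1) (b+1) (c+1) (d+1) - S (N+1) a (b+1) (c+1) (d+1) - S (N+1) (a+1) b (c+1) (d+1)
      - S (N+1) (a+1) (b+1) c (d+1) + S (N+1) a (b+1) c (d+1) + S (N+1) (a+1) b c (d+1)
      - S (N+1) (a+1) (b+1) (c+1) d + S (N+1) a (b+1) (c+1) d + S (N+1) (a+1) b (c+1) d := by
    simp only [S, sub_mul, mul_sub, Finset.sum_sub_distrib]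
    ring
  rw [expand] at key
  rw [A_eq_S (show a+1+1 ≤ N+1 by omega), A_eq_S (show a+1 ≤ N+1 by omega),
      A_eq_S (show a+1+1 ≤ N+1 by omega), A_eq_S (show a+1+1 ≤ N+1 by omega),
      A_eq_S (show a+1+1 ≤ N+1 by omega), A_eq_S (show a+1 ≤ N+1 by omega),
      A_eq_S (show a+1 ≤ N+1 by omega), A_eq_S (show a+1+1 ≤ N+1 by omega),
      A_eq_S (show a+1+1 ≤ N+1 by omega), A_eq_S (show a+1 ≤ N by omega)]
  linarith [key]

lemma choose_pascal' (x y : ℕ) :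
    ((x+1 + (y+1)).choose (x+1) : ℤ) = ((x + (y+1)).choose x : ℤ) + ((x+1+y).choose (x+1) : ℤ) := by
  have e1 : x+1+(y+1) = (x+y+1)+1 := by omega
  have e2 : x + (y+1) = x+y+1 := by omega
  have e3 : x+1+y = x+y+1 := by omega
  rw [e1, e2, e3, Nat.choose_succ_succ]; push_cast; ring

lemma master (a b c d : ℕ) :
    A a b c d =
      (if 0 < a then A (a-1) b c d else 0) + (if 0 < b then A a (b-1) c d else 0) +
      (if 0 < c then A a b (c-1) d else 0) + (if 0 < d then A a b c (d-1) else 0) -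
      (if 0 < a ∧ 0 < c then A (a-1) b (c-1) d else 0) -
      (if 0 < a ∧ 0 < d then A (a-1) b c (d-1) else 0) -
      (if 0 < b ∧ 0 < c then A a (b-1) (c-1) d else 0) -
      (if 0 < b ∧ 0 < d then A a (b-1) c (d-1) else 0) +
      (if 0 < a ∧ 0 < b ∧ 0 < c ∧ 0 < d then A (a-1) (b-1) (c-1) (d-1) else 0) +
      (if a = 0 ∧ b = 0 ∧ c = 0 ∧ d = 0 then 1 else 0) := by
  rcases a with _ | a <;> rcases b with _ | b <;> rcases c with _ | c <;> rcases d with _ | d <;>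
    simp only [Nat.succ_pos, Nat.zero_lt_succ, lt_self_iff_false, if_true, if_false,
      true_and, and_true, false_and, and_false, Nat.succ_sub_one,
      Nat.succ_ne_zero, ite_true, ite_false, add_zero, zero_add, sub_zero]
  case succ.succ.succ.succ => linarith [master_core a b c d]
  all_goals first
      | (simp [A_left, A_right]; done)
      | (simp [A_left, A_right, choose_pascal']; done)
      | (simp [A_left, A_right]; try rw [choose_pascal']; ring)

noncomputable def G : MvPowerSeries (Fin 4) ℤ := fun m => A (m 0) (m 1) (m 2) (m 3)

lemma coeff_G (m : Fin 4 →₀ ℕ) : coeff m G = A (m 0) (m 1) (m 2) (m 3) := rfl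

lemma coeff_single_mul (s : Fin 4) (m : Fin 4 →₀ ℕ) (φ : MvPowerSeries (Fin 4) ℤ) :
    coeff m (X s * φ) =
      if 0 < m s then coeff (m - single s 1) φ else 0 := by
  rw [X, coeff_monomial_mul]
  simp [Finsupp.single_le_iff, Nat.one_le_iff_ne_zero, Nat.pos_iff_ne_zero]

lemma le_two {s t : Fin 4} (hst : s ≠ t) (m : Fin 4 →₀ ℕ) :
    single s 1 + single t 1 ≤ m ↔ 0 < m s ∧ 0 < m t := by
  rw [Finsupp.le_def]
  constructor
  · intro H
    constructor
    · have := H s; simp [Finsupp.single_apply, hst.symm] at this; omega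
    · have := H t; simp [Finsupp.single_apply, hst] at this; omega
  · intro ⟨h1, h2⟩ i
    simp only [Finsupp.add_apply, Finsupp.single_apply]
    by_cases hs : s = i <;> by_cases ht : t = i <;> subst_vars <;> simp_all <;> omega

lemma coeff_two_mul {s t : Fin 4} (hst : s ≠ t) (m : Fin 4 →₀ ℕ) (φ : MvPowerSeries (Fin 4) ℤ) :
    coeff m (X s * X t * φ) =
      if 0 < m s ∧ 0 < m t then coeff (m - single s 1 - single t 1) φ else 0 := by
  rw [X, X, monomial_mul_monomial, coeff_monomial_mul]
  simp only [le_two hst, one_mul, tsub_add_eq_tsub_tsub]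

lemma le_four (m : Fin 4 →₀ ℕ) :
    single (0 : Fin 4) 1 + single 1 1 + single 2 1 + single 3 1 ≤ m ↔
      0 < m 0 ∧ 0 < m 1 ∧ 0 < m 2 ∧ 0 < m 3 := by
  rw [Finsupp.le_def]
  constructor
  · intro H
    refine ⟨?_, ?_, ?_, ?_⟩
    · have := H 0; simp [Finsupp.single_apply] at this; omega
    · have := H 1; simp [Finsupp.single_apply] at this; omega
    · have := H 2; simp [Finsupp.single_apply] at this; omega
    · have := H 3; simp [Finsupp.single_apply] at this; omega
  · intro ⟨h1, h2, h3, h4⟩ i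
    fin_cases i <;> simp [Finsupp.single_apply] <;> omega

lemma coeff_four_mul (m : Fin 4 →₀ ℕ) (φ : MvPowerSeries (Fin 4) ℤ) :
    coeff m (X 0 * X 1 * X 2 * X 3 * φ) =
      if 0 < m 0 ∧ 0 < m 1 ∧ 0 < m 2 ∧ 0 < m 3 then
        coeff (m - single 0 1 - single 1 1 - single 2 1 - single 3 1) φ else 0 := by
  rw [X, X, X, X, monomial_mul_monomial, monomial_mul_monomial, monomial_mul_monomial,
    coeff_monomial_mul]
  simp only [le_four, one_mul, tsub_add_eq_tsub_tsub]

lemma eq_zero_iff (m : Fin 4 →₀ ℕ) :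
    m = 0 ↔ m 0 = 0 ∧ m 1 = 0 ∧ m 2 = 0 ∧ m 3 = 0 := by
  constructor
  · intro h; subst h; simp
  · intro ⟨h1, h2, h3, h4⟩
    ext i; fin_cases i <;> simpa

lemma hPG : ((1 - X 0 - X 1) * (1 - X 2 - X 3) -
    X 0 * X 1 * X 2 * X 3 : MvPowerSeries (Fin 4) ℤ) * G = 1 := by
  apply MvPowerSeries.ext; intro m
  have expand : ((1 - X 0 - X 1) * (1 - X 2 - X 3) -
      X 0 * X 1 * X 2 * X 3 : MvPowerSeries (Fin 4) ℤ) * G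
      = G - X 0 * G - X 1 * G - X 2 * G - X 3 * G
        + (X 0 * X 2 * G + X 0 * X 3 * G + X 1 * X 2 * G + X 1 * X 3 * G)
        - X 0 * X 1 * X 2 * X 3 * G := by ring
  rw [expand]
  simp only [map_sub, map_add]
  rw [coeff_single_mul, coeff_single_mul, coeff_single_mul, coeff_single_mul,
      coeff_two_mul (by decide), coeff_two_mul (by decide), coeff_two_mul (by decide),
      coeff_two_mul (by decide), coeff_four_mul, coeff_one]
  simp only [coeff_G, Finsupp.tsub_apply, Finsupp.single_apply, eq_zero_iff m]
  simp only [Fin.reduceEq, reduceIte, Nat.sub_zero]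
  have := master (m 0) (m 1) (m 2) (m 3)
  linarith

lemma A_eq_sum (n1 n2 n3 n4 : ℕ) :
    A n1 n2 n3 n4 = ∑ k ∈ Finset.range (min (min n1 n2) (min n3 n4) + 1),
      (n1.choose k : ℤ) * (n3.choose k : ℤ) *
        ((n1 + n2 - k).choose n1 : ℤ) * ((n3 + n4 - k).choose n3 : ℤ) := by
  have hsub : Finset.range (min (min n1 n2) (min n3 n4) + 1) ⊆ Finset.range (n1 + 1) :=
    Finset.range_subset_range.2 (by omega)
  have hz : ∀ x ∈ Finset.range (n1 + 1),
      x ∉ Finset.range (min (min n1 n2) (min n3 n4) + 1) → B n1 n2 x * B n3 n4 x = 0 := by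
    intro x _ hx
    simp only [Finset.mem_range] at hx
    have : n1 < x ∨ n2 < x ∨ n3 < x ∨ n4 < x := by omega
    rcases this with h | h | h | h
    · rw [B_zero₁ h, zero_mul]
    · rw [B_zero₂ h, zero_mul]
    · rw [B_zero₁ h, mul_zero]
    · rw [B_zero₂ h, mul_zero]
  calc A n1 n2 n3 n4 = ∑ k ∈ Finset.range (min (min n1 n2) (min n3 n4) + 1),
        B n1 n2 k * B n3 n4 k := (Finset.sum_subset hsub hz).symm
    _ = _ := Finset.sum_congr rfl fun k _ => by simp only [B]; ring

end Stmt1Aux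

/-- The Taylor coefficients of the inverse of `(1 - x₁ - x₂)(1 - x₃ - x₄) - x₁x₂x₃x₄` are
`A(n₁,n₂,n₃,n₄) = ∑_k C(n₁,k) C(n₃,k) C(n₁+n₂-k,n₁) C(n₃+n₄-k,n₃)`. -/
theorem stmt1 (F : MvPowerSeries (Fin 4) ℤ)
    (hF : ((1 - MvPowerSeries.X 0 - MvPowerSeries.X 1) *
        (1 - MvPowerSeries.X 2 - MvPowerSeries.X 3) -
        MvPowerSeries.X 0 * MvPowerSeries.X 1 * MvPowerSeries.X 2 * MvPowerSeries.X 3) * F = 1)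
    (n1 n2 n3 n4 : ℕ) :
    MvPowerSeries.coeff (Finsupp.equivFunOnFinite.symm ![n1, n2, n3, n4]) F =
      ∑ k ∈ Finset.range (min (min n1 n2) (min n3 n4) + 1),
        (n1.choose k : ℤ) * (n3.choose k : ℤ) *
          ((n1 + n2 - k).choose n1 : ℤ) * ((n3 + n4 - k).choose n3 : ℤ) := by
  have hFG : F = Stmt1Aux.G := by
    calc F = 1 * F := (one_mul F).symm
    _ = (((1 - MvPowerSeries.X 0 - MvPowerSeries.X 1) *
        (1 - MvPowerSeries.X 2 - MvPowerSeries.X 3) -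
        MvPowerSeries.X 0 * MvPowerSeries.X 1 * MvPowerSeries.X 2 * MvPowerSeries.X 3) *
          Stmt1Aux.G) * F := by rw [Stmt1Aux.hPG]
    _ = Stmt1Aux.G * (((1 - MvPowerSeries.X 0 - MvPowerSeries.X 1) *
        (1 - MvPowerSeries.X 2 - MvPowerSeries.X 3) -
        MvPowerSeries.X 0 * MvPowerSeries.X 1 * MvPowerSeries.X 2 * MvPowerSeries.X 3) * F) := by
          ring
    _ = Stmt1Aux.G := by rw [hF, mul_one]
  rw [hFG, Stmt1Aux.coeff_G]
  have e : ∀ i : Fin 4, (Finsupp.equivFunOnFinite.symm ![n1, n2, n3, n4]) i = ![n1, n2, n3, n4] i :=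
    fun i => rfl
  rw [e 0, e 1, e 2, e 3]
  simp only [Matrix.cons_val_zero, Matrix.cons_val_one, Matrix.head_cons,
    Matrix.cons_val_two, Matrix.tail_cons, Matrix.cons_val_three]
  exact Stmt1Aux.A_eq_sum n1 n2 n3 n4
end

section
/- Define A(n) = Σ_{k ∈ ℤ} binom(n, k)²·binom(n+k, k)² for every integer n (this sum has only finitely many nonzero terms). Then for every integer n, A(-n) = A(n-1). -/
/-- The generalized binomial coefficient for integer entries: for `k ≥ 0` it is
`n(n-1)⋯(n-k+1)/k!`; for `k < 0` and `n - k ≥ 0` it is `binom n (n-k)`; and it is `0`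
when `k < 0` and `n - k < 0`. -/
def binom (n k : ℤ) : ℤ :=
  if 0 ≤ k then (∏ i ∈ Finset.range k.toNat, (n - (i : ℤ))) / (k.toNat.factorial : ℤ)
  else if 0 ≤ n - k then
    (∏ i ∈ Finset.range (n - k).toNat, (n - (i : ℤ))) / ((n - k).toNat.factorial : ℤ)
  else 0

/-- The Apéry numbers extended to all integers:
`A(n) = ∑_{k ∈ ℤ} binom(n,k)² binom(n+k,k)²` (a finite sum). -/
noncomputable def A (n : ℤ) : ℤ :=
  ∑ᶠ k : ℤ, binom n k ^ 2 * binom (n + k) k ^ 2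

/-- Reflecting the falling product gives a sign. -/
lemma prod_reflect_aux (m : ℤ) (K : ℕ) :
    ∏ i ∈ Finset.range K, (((K : ℤ) - 1 - m) - (i : ℤ))
      = (-1) ^ K * ∏ i ∈ Finset.range K, (m - (i : ℤ)) := by
  rw [← Finset.prod_range_reflect (fun i => ((K : ℤ) - 1 - m) - (i : ℤ)) K]
  have h : ∀ j ∈ Finset.range K,
      ((K : ℤ) - 1 - m) - ((K - 1 - j : ℕ) : ℤ) = (-1) * (m - (j : ℤ)) := by
    intro j hj
    rw [Finset.mem_range] at hj
    omega
  rw [Finset.prod_congr rfl h, Finset.prod_mul_distrib, Finset.prod_const,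
    Finset.card_range]

/-- `K!` divides the product of `K` consecutive integers below `m`. -/
lemma fact_dvd_prod (m : ℤ) (K : ℕ) :
    (K.factorial : ℤ) ∣ ∏ i ∈ Finset.range K, (m - (i : ℤ)) := by
  rcases le_or_gt 0 m with hm | hm
  · rcases lt_or_ge m.toNat K with h | h
    · have : (∏ i ∈ Finset.range K, (m - (i : ℤ))) = 0 := by
        apply Finset.prod_eq_zero (Finset.mem_range.mpr h)
        omega
      simp [this]
    · have : (∏ i ∈ Finset.range K, (m - (i : ℤ)))
          = ((m.toNat.descFactorial K : ℕ) : ℤ) := by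
        rw [Nat.descFactorial_eq_prod_range, Nat.cast_prod]
        refine Finset.prod_congr rfl fun i hi => ?_
        rw [Finset.mem_range] at hi
        omega
      rw [this]
      exact_mod_cast Int.natCast_dvd_natCast.mpr (Nat.factorial_dvd_descFactorial _ _)
  · have h1 : (∏ i ∈ Finset.range K, (m - (i : ℤ)))
        = (-1) ^ K * ∏ i ∈ Finset.range K, (((K : ℤ) - 1 - m) - (i : ℤ)) := by
      rw [prod_reflect_aux m K, ← mul_assoc, ← mul_pow]
      simp
    rw [h1]
    apply Dvd.dvd.mul_left
    -- now the "upper" argument is nonnegative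
    rcases lt_or_ge ((K : ℤ) - 1 - m).toNat K with h | h
    · have : (∏ i ∈ Finset.range K, (((K : ℤ) - 1 - m) - (i : ℤ))) = 0 := by
        apply Finset.prod_eq_zero (Finset.mem_range.mpr h)
        omega
      simp [this]
    · have : (∏ i ∈ Finset.range K, (((K : ℤ) - 1 - m) - (i : ℤ)))
          = ((((K : ℤ) - 1 - m).toNat.descFactorial K : ℕ) : ℤ) := by
        rw [Nat.descFactorial_eq_prod_range, Nat.cast_prod]
        refine Finset.prod_congr rfl fun i hi => ?_
        rw [Finset.mem_range] at hi
        omega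
      rw [this]
      exact_mod_cast Int.natCast_dvd_natCast.mpr (Nat.factorial_dvd_descFactorial _ _)

/-- Upper negation formula. -/
lemma binom_reflect (m k : ℤ) (hk : 0 ≤ k) :
    binom (k - m - 1) k = (-1) ^ k.toNat * binom m k := by
  have hK : ((k.toNat : ℤ)) = k := Int.toNat_of_nonneg hk
  unfold binom
  rw [if_pos hk, if_pos hk]
  have harg : (k - m - 1) = ((k.toNat : ℤ) - 1 - m) := by omega
  rw [harg]
  have h2 : ∀ i ∈ Finset.range k.toNat,
      ((k.toNat : ℤ) - 1 - m) - (i : ℤ) = ((k.toNat : ℤ) - 1 - m) - (i : ℤ) := fun _ _ => rfl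
  rw [show (∏ i ∈ Finset.range k.toNat, (((k.toNat : ℤ) - 1 - m) - (i : ℤ)))
      = (-1) ^ k.toNat * ∏ i ∈ Finset.range k.toNat, (m - (i : ℤ)) from
    prod_reflect_aux m k.toNat]
  exact Int.mul_ediv_assoc _ (fact_dvd_prod m k.toNat)

lemma binom_sq_reflect (m k : ℤ) (hk : 0 ≤ k) :
    binom (k - m - 1) k ^ 2 = binom m k ^ 2 := by
  rw [binom_reflect m k hk, mul_pow, ← pow_mul, mul_comm k.toNat 2, pow_mul]
  simp

lemma binom_mul_eq_zero (m k : ℤ) (hk : k < 0) : binom m k * binom (m + k) k = 0 := by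
  rcases le_or_gt 0 m with hm | hm
  · have h1 : binom m k = 0 := by
      unfold binom
      rw [if_neg (not_le.mpr hk), if_pos (by omega : (0:ℤ) ≤ m - k)]
      have hmem : m.toNat ∈ Finset.range (m - k).toNat := by
        rw [Finset.mem_range]; omega
      rw [Finset.prod_eq_zero hmem (by omega)]
      simp
    rw [h1, zero_mul]
  · have h2 : binom (m + k) k = 0 := by
      unfold binom
      rw [if_neg (not_le.mpr hk), if_neg (by omega)]
    rw [h2, mul_zero]

/-- The reflection identity `A(-n) = A(n-1)` for the extended Apéry numbers. -/
theorem stmt3 (n : ℤ) : A (-n) = A (n - 1) := by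
  unfold A
  apply finsum_congr
  intro k
  rcases le_or_gt 0 k with hk | hk
  · have h1 : binom (-n) k ^ 2 = binom (n - 1 + k) k ^ 2 := by
      have := binom_sq_reflect (n - 1 + k) k hk
      rw [show k - (n - 1 + k) - 1 = -n by ring] at this
      exact this
    have h2 : binom (-n + k) k ^ 2 = binom (n - 1) k ^ 2 := by
      have := binom_sq_reflect (n - 1) k hk
      rw [show k - (n - 1) - 1 = -n + k by ring] at this
      exact this
    rw [h1, h2, mul_comm]
  · have z1 : binom (-n) k ^ 2 * binom (-n + k) k ^ 2
        = (binom (-n) k * binom (-n + k) k) ^ 2 := by ring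
    have z2 : binom (n - 1) k ^ 2 * binom (n - 1 + k) k ^ 2
        = (binom (n - 1) k * binom (n - 1 + k) k) ^ 2 := by ring
    rw [z1, z2, binom_mul_eq_zero _ _ hk, binom_mul_eq_zero _ _ hk]
end

section
/- Let F be the multiplicative inverse, in the ring of formal power series ℤ[[x1, x2, x3, x4]], of the polynomial (1 - x1 - x2)(1 - x3 - x4) - x1·x2·x3·x4. Then for all natural numbers n1, n2, n3, n4, the coefficient of x1^{n1}·x2^{n2}·x3^{n3}·x4^{n4} in F equals the coefficient of x1^{n1}·x2^{n2}·x3^{n3}·x4^{n4} in the polynomial (x1 + x2 + x3)^{n1}·(x1 + x2)^{n2}·(x3 + x4)^{n3}·(x2 + x3 + x4)^{n4}. -/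
set_option maxHeartbeats 1600000

open MvPolynomial

noncomputable section
namespace Stmt4Aux

def A : MvPolynomial (Fin 4) ℤ := X 0 + X 1 + X 2
def B : MvPolynomial (Fin 4) ℤ := X 0 + X 1
def C : MvPolynomial (Fin 4) ℤ := X 2 + X 3
def D : MvPolynomial (Fin 4) ℤ := X 1 + X 2 + X 3

def QQ (a b c d : ℕ) : MvPolynomial (Fin 4) ℤ := A ^ a * B ^ b * C ^ c * D ^ d
def Q (m : Fin 4 →₀ ℕ) : MvPolynomial (Fin 4) ℤ := QQ (m 0) (m 1) (m 2) (m 3)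
def s (i : Fin 4) : Fin 4 →₀ ℕ := Finsupp.single i 1

def G : MvPowerSeries (Fin 4) ℤ := fun m => (Q m).coeff m

def Pser : MvPowerSeries (Fin 4) ℤ :=
  (1 - MvPowerSeries.X 0 - MvPowerSeries.X 1) *
    (1 - MvPowerSeries.X 2 - MvPowerSeries.X 3) -
    MvPowerSeries.X 0 * MvPowerSeries.X 1 * MvPowerSeries.X 2 * MvPowerSeries.X 3

def Em (m : Fin 4 →₀ ℕ) : MvPolynomial (Fin 4) ℤ :=
  Q m - X 0 * Q (m - s 0) - X 1 * Q (m - s 1) - X 2 * Q (m - s 2) - X 3 * Q (m - s 3)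
  + X 0 * X 2 * Q (m - (s 0 + s 2)) + X 0 * X 3 * Q (m - (s 0 + s 3))
  + X 1 * X 2 * Q (m - (s 1 + s 2)) + X 1 * X 3 * Q (m - (s 1 + s 3))
  - X 0 * X 1 * X 2 * X 3 * Q (m - (s 0 + s 1 + s 2 + s 3))

lemma Em_eq (m : Fin 4 →₀ ℕ) : Em m =
  QQ (m 0) (m 1) (m 2) (m 3)
  - X 0 * QQ (m 0 - 1) (m 1) (m 2) (m 3) - X 1 * QQ (m 0) (m 1 - 1) (m 2) (m 3)
  - X 2 * QQ (m 0) (m 1) (m 2 - 1) (m 3) - X 3 * QQ (m 0) (m 1) (m 2) (m 3 - 1)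
  + X 0 * X 2 * QQ (m 0 - 1) (m 1) (m 2 - 1) (m 3) + X 0 * X 3 * QQ (m 0 - 1) (m 1) (m 2) (m 3 - 1)
  + X 1 * X 2 * QQ (m 0) (m 1 - 1) (m 2 - 1) (m 3) + X 1 * X 3 * QQ (m 0) (m 1 - 1) (m 2) (m 3 - 1)
  - X 0 * X 1 * X 2 * X 3 * QQ (m 0 - 1) (m 1 - 1) (m 2 - 1) (m 3 - 1) := by
  simp [Em, Q, s, Finsupp.tsub_apply, Finsupp.single_apply]

lemma coeff_G (m : Fin 4 →₀ ℕ) : MvPowerSeries.coeff m G = (Q m).coeff m := rfl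

lemma transfer (d m : Fin 4 →₀ ℕ) :
    MvPowerSeries.coeff m (MvPowerSeries.monomial d 1 * G) =
    (MvPolynomial.monomial d (1:ℤ) * Q (m - d)).coeff m := by
  rw [MvPowerSeries.coeff_monomial_mul, MvPolynomial.coeff_monomial_mul']
  split_ifs with h
  · rfl
  · rfl

lemma transX (i : Fin 4) (m : Fin 4 →₀ ℕ) :
    MvPowerSeries.coeff m (MvPowerSeries.X i * G) =
    (X i * Q (m - s i)).coeff m := by
  have h1 : (MvPowerSeries.X i : MvPowerSeries (Fin 4) ℤ) = MvPowerSeries.monomial (s i) 1 := rfl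
  have h2 : (X i : MvPolynomial (Fin 4) ℤ) = MvPolynomial.monomial (s i) 1 := rfl
  rw [h1, h2, transfer]

lemma transXX (i j : Fin 4) (m : Fin 4 →₀ ℕ) :
    MvPowerSeries.coeff m (MvPowerSeries.X i * MvPowerSeries.X j * G) =
    (X i * X j * Q (m - (s i + s j))).coeff m := by
  have h1 : (MvPowerSeries.X i * MvPowerSeries.X j : MvPowerSeries (Fin 4) ℤ)
      = MvPowerSeries.monomial (s i + s j) 1 := by
    rw [MvPowerSeries.X_def, MvPowerSeries.X_def, MvPowerSeries.monomial_mul_monomial, mul_one]; rfl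
  have h2 : (X i * X j : MvPolynomial (Fin 4) ℤ) = MvPolynomial.monomial (s i + s j) 1 := by
    rw [X, X, monomial_mul, mul_one]; rfl
  rw [h1, h2, transfer]

lemma transX4 (m : Fin 4 →₀ ℕ) :
    MvPowerSeries.coeff m
      (MvPowerSeries.X 0 * MvPowerSeries.X 1 * MvPowerSeries.X 2 * MvPowerSeries.X 3 * G) =
    (X 0 * X 1 * X 2 * X 3 * Q (m - (s 0 + s 1 + s 2 + s 3))).coeff m := by
  have h1 : (MvPowerSeries.X 0 * MvPowerSeries.X 1 * MvPowerSeries.X 2 * MvPowerSeries.X 3 :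
      MvPowerSeries (Fin 4) ℤ) = MvPowerSeries.monomial (s 0 + s 1 + s 2 + s 3) 1 := by
    simp only [MvPowerSeries.X_def, MvPowerSeries.monomial_mul_monomial, mul_one]; rfl
  have h2 : (X 0 * X 1 * X 2 * X 3 : MvPolynomial (Fin 4) ℤ)
      = MvPolynomial.monomial (s 0 + s 1 + s 2 + s 3) 1 := by
    simp only [X, monomial_mul, mul_one]; rfl
  rw [h1, h2, transfer]

lemma master (m : Fin 4 →₀ ℕ) :
    MvPowerSeries.coeff m (Pser * G) = (Em m).coeff m := by
  have hexp : Pser * G = G - MvPowerSeries.X 0 * G - MvPowerSeries.X 1 * G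
      - MvPowerSeries.X 2 * G - MvPowerSeries.X 3 * G
      + MvPowerSeries.X 0 * MvPowerSeries.X 2 * G + MvPowerSeries.X 0 * MvPowerSeries.X 3 * G
      + MvPowerSeries.X 1 * MvPowerSeries.X 2 * G + MvPowerSeries.X 1 * MvPowerSeries.X 3 * G
      - MvPowerSeries.X 0 * MvPowerSeries.X 1 * MvPowerSeries.X 2 * MvPowerSeries.X 3 * G := by
    simp only [Pser]; ring
  rw [hexp]
  simp only [map_sub, map_add]
  rw [coeff_G, transX 0, transX 1, transX 2, transX 3, transXX 0 2, transXX 0 3,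
    transXX 1 2, transXX 1 3, transX4]
  simp only [Em, MvPolynomial.coeff_sub, MvPolynomial.coeff_add]

lemma czero {m : Fin 4 →₀ ℕ} {i : Fin 4} (h : m i = 0) (p : MvPolynomial (Fin 4) ℤ) :
    MvPolynomial.coeff m (X i * p) = 0 := by
  rw [MvPolynomial.coeff_X_mul']
  simp [Finsupp.mem_support_iff, h]

lemma hPG : Pser * G = 1 := by
  apply MvPowerSeries.ext
  intro m
  rw [master, MvPowerSeries.coeff_one]
  rcases eq_or_ne (m 0) 0 with h0 | h0 <;> rcases eq_or_ne (m 1) 0 with h1 | h1 <;>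
    rcases eq_or_ne (m 2) 0 with h2 | h2 <;> rcases eq_or_ne (m 3) 0 with h3 | h3
  · have hm : m = 0 := by ext i; fin_cases i <;> simp [h0, h1, h2, h3]
    rw [if_pos hm]
    have hd : Em m = 1 + X 0 * (-1 + X 3 + X 2 + (-1) * X 1 * X 2 * X 3) + X 1 * (-1 + X 3 + X 2) + X 2 * (-1) + X 3 * (-1) := by
      rw [Em_eq, h0, h1, h2, h3]
      simp only [Nat.zero_sub, QQ, A, B, C, D]
      ring
    rw [hd]
    simp only [MvPolynomial.coeff_add, czero h0, czero h1, czero h2, czero h3, add_zero]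
    rw [hm]; simp
  · obtain ⟨k3, h3⟩ := Nat.exists_eq_succ_of_ne_zero h3
    have hm : m ≠ 0 := by intro hh; rw [hh] at h3; simp at h3
    rw [if_neg hm]
    have hd : Em m = X 0 * (((-1) * X 2 + X 2 * X 3 + X 2 ^ 2 + (-1) * X 1 + X 1 * X 2 + (-1) * X 1 * X 2 * X 3) * (D ^ k3)) + X 1 * ((1 + (-2) * X 2 + X 2 * X 3 + X 2 ^ 2 + (-1) * X 1 + X 1 * X 2) * (D ^ k3)) + X 2 * ((1 + (-1) * X 3 + (-1) * X 2) * (D ^ k3)) := by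
      rw [Em_eq, h0, h1, h2, h3]
      simp only [Nat.succ_eq_add_one, Nat.add_sub_cancel, Nat.zero_sub, QQ, A, B, C, D]
      ring
    rw [hd]
    simp only [MvPolynomial.coeff_add, czero h0, czero h1, czero h2, add_zero, zero_add]
  · obtain ⟨k2, h2⟩ := Nat.exists_eq_succ_of_ne_zero h2
    have hm : m ≠ 0 := by intro hh; rw [hh] at h2; simp at h2
    rw [if_neg hm]
    have hd : Em m = X 0 * (((-1) * X 3 + X 3 ^ 2 + X 2 * X 3 + (-1) * X 1 * X 2 * X 3) * (C ^ k2)) + X 1 * (((-1) * X 3 + X 3 ^ 2 + X 2 * X 3) * (C ^ k2)) + X 3 * ((1 + (-1) * X 3 + (-1) * X 2) * (C ^ k2)) := by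
      rw [Em_eq, h0, h1, h2, h3]
      simp only [Nat.succ_eq_add_one, Nat.add_sub_cancel, Nat.zero_sub, QQ, A, B, C, D]
      ring
    rw [hd]
    simp only [MvPolynomial.coeff_add, czero h0, czero h1, czero h3, add_zero, zero_add]
  · obtain ⟨k2, h2⟩ := Nat.exists_eq_succ_of_ne_zero h2
    obtain ⟨k3, h3⟩ := Nat.exists_eq_succ_of_ne_zero h3
    have hm : m ≠ 0 := by intro hh; rw [hh] at h2; simp at h2
    rw [if_neg hm]
    have hd : Em m = X 0 * (((-1) * X 1 * X 3 + (-1) * X 1 * X 2 * X 3) * (C ^ k2 * D ^ k3)) + X 1 * ((X 3 + (-1) * X 1 * X 3) * (C ^ k2 * D ^ k3)) := by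
      rw [Em_eq, h0, h1, h2, h3]
      simp only [Nat.succ_eq_add_one, Nat.add_sub_cancel, Nat.zero_sub, QQ, A, B, C, D]
      ring
    rw [hd]
    simp only [MvPolynomial.coeff_add, czero h0, czero h1, add_zero, zero_add]
  · obtain ⟨k1, h1⟩ := Nat.exists_eq_succ_of_ne_zero h1
    have hm : m ≠ 0 := by intro hh; rw [hh] at h1; simp at h1
    rw [if_neg hm]
    have hd : Em m = X 0 * ((1 + (-1) * X 3 + (-1) * X 2 + (-1) * X 1 + X 1 * X 3 + X 1 * X 2 + (-1) * X 1 * X 2 * X 3 + (-1) * X 0 + X 0 * X 3 + X 0 * X 2) * (B ^ k1)) := by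
      rw [Em_eq, h0, h1, h2, h3]
      simp only [Nat.succ_eq_add_one, Nat.add_sub_cancel, Nat.zero_sub, QQ, A, B, C, D]
      ring
    rw [hd]
    simp only [MvPolynomial.coeff_add, czero h0, czero h2, czero h3, add_zero, zero_add]
  · obtain ⟨k1, h1⟩ := Nat.exists_eq_succ_of_ne_zero h1
    obtain ⟨k3, h3⟩ := Nat.exists_eq_succ_of_ne_zero h3
    have hm : m ≠ 0 := by intro hh; rw [hh] at h1; simp at h1
    rw [if_neg hm]
    have hd : Em m = X 0 * ((X 2 + (-1) * X 2 * X 3 + (-1) * X 2 ^ 2 + X 1 + (-2) * X 1 * X 2 + X 1 * X 2 ^ 2 + (-1) * X 1 ^ 2 + X 1 ^ 2 * X 2 + (-1) * X 0 * X 2 + X 0 * X 2 * X 3 + X 0 * X 2 ^ 2 + (-1) * X 0 * X 1 + X 0 * X 1 * X 2) * (B ^ k1 * D ^ k3)) := by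
      rw [Em_eq, h0, h1, h2, h3]
      simp only [Nat.succ_eq_add_one, Nat.add_sub_cancel, Nat.zero_sub, QQ, A, B, C, D]
      ring
    rw [hd]
    simp only [MvPolynomial.coeff_add, czero h0, czero h2, add_zero, zero_add]
  · obtain ⟨k1, h1⟩ := Nat.exists_eq_succ_of_ne_zero h1
    obtain ⟨k2, h2⟩ := Nat.exists_eq_succ_of_ne_zero h2
    have hm : m ≠ 0 := by intro hh; rw [hh] at h1; simp at h1
    rw [if_neg hm]
    have hd : Em m = X 0 * ((X 3 + (-1) * X 3 ^ 2 + (-1) * X 2 * X 3 + (-1) * X 1 * X 3 + X 1 * X 3 ^ 2 + (-1) * X 0 * X 3 + X 0 * X 3 ^ 2 + X 0 * X 2 * X 3) * (B ^ k1 * C ^ k2)) := by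
      rw [Em_eq, h0, h1, h2, h3]
      simp only [Nat.succ_eq_add_one, Nat.add_sub_cancel, Nat.zero_sub, QQ, A, B, C, D]
      ring
    rw [hd]
    simp only [MvPolynomial.coeff_add, czero h0, czero h3, add_zero, zero_add]
  · obtain ⟨k1, h1⟩ := Nat.exists_eq_succ_of_ne_zero h1
    obtain ⟨k2, h2⟩ := Nat.exists_eq_succ_of_ne_zero h2
    obtain ⟨k3, h3⟩ := Nat.exists_eq_succ_of_ne_zero h3
    have hm : m ≠ 0 := by intro hh; rw [hh] at h1; simp at h1
    rw [if_neg hm]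
    have hd : Em m = X 0 * ((X 1 * X 3 + (-1) * X 1 * X 2 * X 3 + (-1) * X 1 ^ 2 * X 3 + (-1) * X 0 * X 1 * X 3) * (B ^ k1 * C ^ k2 * D ^ k3)) := by
      rw [Em_eq, h0, h1, h2, h3]
      simp only [Nat.succ_eq_add_one, Nat.add_sub_cancel, Nat.zero_sub, QQ, A, B, C, D]
      ring
    rw [hd]
    exact czero h0 _
  · obtain ⟨k0, h0⟩ := Nat.exists_eq_succ_of_ne_zero h0
    have hm : m ≠ 0 := by intro hh; rw [hh] at h0; simp at h0
    rw [if_neg hm]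
    have hd : Em m = X 1 * ((1 + (-1) * X 3 + (-2) * X 2 + X 2 * X 3 + X 2 ^ 2 + (-1) * X 1 + X 1 * X 3 + X 1 * X 2 + (-1) * X 0 + X 0 * X 3 + X 0 * X 2 + (-1) * X 0 * X 2 * X 3) * (A ^ k0)) + X 2 * ((1 + (-1) * X 3 + (-1) * X 2) * (A ^ k0)) := by
      rw [Em_eq, h0, h1, h2, h3]
      simp only [Nat.succ_eq_add_one, Nat.add_sub_cancel, Nat.zero_sub, QQ, A, B, C, D]
      ring
    rw [hd]
    simp only [MvPolynomial.coeff_add, czero h1, czero h2, czero h3, add_zero, zero_add]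
  · obtain ⟨k0, h0⟩ := Nat.exists_eq_succ_of_ne_zero h0
    obtain ⟨k3, h3⟩ := Nat.exists_eq_succ_of_ne_zero h3
    have hm : m ≠ 0 := by intro hh; rw [hh] at h0; simp at h0
    rw [if_neg hm]
    have hd : Em m = X 1 * (((2) * X 2 + (-1) * X 2 * X 3 + (-3) * X 2 ^ 2 + X 2 ^ 2 * X 3 + X 2 ^ 3 + X 1 + (-3) * X 1 * X 2 + X 1 * X 2 * X 3 + (2) * X 1 * X 2 ^ 2 + (-1) * X 1 ^ 2 + X 1 ^ 2 * X 2 + (-1) * X 0 * X 2 + X 0 * X 2 ^ 2 + (-1) * X 0 * X 1 + X 0 * X 1 * X 2) * (A ^ k0 * D ^ k3)) + X 2 * ((X 2 + (-1) * X 2 * X 3 + (-1) * X 2 ^ 2) * (A ^ k0 * D ^ k3)) := by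
      rw [Em_eq, h0, h1, h2, h3]
      simp only [Nat.succ_eq_add_one, Nat.add_sub_cancel, Nat.zero_sub, QQ, A, B, C, D]
      ring
    rw [hd]
    simp only [MvPolynomial.coeff_add, czero h1, czero h2, add_zero, zero_add]
  · obtain ⟨k0, h0⟩ := Nat.exists_eq_succ_of_ne_zero h0
    obtain ⟨k2, h2⟩ := Nat.exists_eq_succ_of_ne_zero h2
    have hm : m ≠ 0 := by intro hh; rw [hh] at h0; simp at h0
    rw [if_neg hm]
    have hd : Em m = X 1 * ((X 3 + (-1) * X 3 ^ 2 + (-2) * X 2 * X 3 + X 2 * X 3 ^ 2 + X 2 ^ 2 * X 3 + (-1) * X 1 * X 3 + X 1 * X 3 ^ 2 + X 1 * X 2 * X 3 + (-1) * X 0 * X 3 + X 0 * X 3 ^ 2) * (A ^ k0 * C ^ k2)) + X 3 * ((X 2 + (-1) * X 2 * X 3 + (-1) * X 2 ^ 2) * (A ^ k0 * C ^ k2)) := by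
      rw [Em_eq, h0, h1, h2, h3]
      simp only [Nat.succ_eq_add_one, Nat.add_sub_cancel, Nat.zero_sub, QQ, A, B, C, D]
      ring
    rw [hd]
    simp only [MvPolynomial.coeff_add, czero h1, czero h3, add_zero, zero_add]
  · obtain ⟨k0, h0⟩ := Nat.exists_eq_succ_of_ne_zero h0
    obtain ⟨k2, h2⟩ := Nat.exists_eq_succ_of_ne_zero h2
    obtain ⟨k3, h3⟩ := Nat.exists_eq_succ_of_ne_zero h3
    have hm : m ≠ 0 := by intro hh; rw [hh] at h0; simp at h0
    rw [if_neg hm]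
    have hd : Em m = X 1 * ((X 2 * X 3 + X 1 * X 3 + (-1) * X 1 * X 2 * X 3 + (-1) * X 1 ^ 2 * X 3 + (-1) * X 0 * X 2 * X 3 + (-1) * X 0 * X 1 * X 3) * (A ^ k0 * C ^ k2 * D ^ k3)) := by
      rw [Em_eq, h0, h1, h2, h3]
      simp only [Nat.succ_eq_add_one, Nat.add_sub_cancel, Nat.zero_sub, QQ, A, B, C, D]
      ring
    rw [hd]
    exact czero h1 _
  · obtain ⟨k0, h0⟩ := Nat.exists_eq_succ_of_ne_zero h0
    obtain ⟨k1, h1⟩ := Nat.exists_eq_succ_of_ne_zero h1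
    have hm : m ≠ 0 := by intro hh; rw [hh] at h0; simp at h0
    rw [if_neg hm]
    have hd : Em m = X 2 * ((X 0 + (-1) * X 0 * X 3 + (-1) * X 0 * X 2 + (-1) * X 0 * X 1 * X 3) * (A ^ k0 * B ^ k1)) := by
      rw [Em_eq, h0, h1, h2, h3]
      simp only [Nat.succ_eq_add_one, Nat.add_sub_cancel, Nat.zero_sub, QQ, A, B, C, D]
      ring
    rw [hd]
    simp only [MvPolynomial.coeff_add, czero h2, czero h3, add_zero, zero_add]
  · obtain ⟨k0, h0⟩ := Nat.exists_eq_succ_of_ne_zero h0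
    obtain ⟨k1, h1⟩ := Nat.exists_eq_succ_of_ne_zero h1
    obtain ⟨k3, h3⟩ := Nat.exists_eq_succ_of_ne_zero h3
    have hm : m ≠ 0 := by intro hh; rw [hh] at h0; simp at h0
    rw [if_neg hm]
    have hd : Em m = X 2 * ((X 0 * X 2 + (-1) * X 0 * X 2 * X 3 + (-1) * X 0 * X 2 ^ 2 + X 0 * X 1 + (-1) * X 0 * X 1 * X 3 + (-1) * X 0 * X 1 * X 2) * (A ^ k0 * B ^ k1 * D ^ k3)) := by
      rw [Em_eq, h0, h1, h2, h3]
      simp only [Nat.succ_eq_add_one, Nat.add_sub_cancel, Nat.zero_sub, QQ, A, B, C, D]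
      ring
    rw [hd]
    exact czero h2 _
  · obtain ⟨k0, h0⟩ := Nat.exists_eq_succ_of_ne_zero h0
    obtain ⟨k1, h1⟩ := Nat.exists_eq_succ_of_ne_zero h1
    obtain ⟨k2, h2⟩ := Nat.exists_eq_succ_of_ne_zero h2
    have hm : m ≠ 0 := by intro hh; rw [hh] at h0; simp at h0
    rw [if_neg hm]
    have hd : Em m = X 3 * ((X 0 * X 2 + (-1) * X 0 * X 2 * X 3 + (-1) * X 0 * X 2 ^ 2 + (-1) * X 0 * X 1 * X 2) * (A ^ k0 * B ^ k1 * C ^ k2)) := by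
      rw [Em_eq, h0, h1, h2, h3]
      simp only [Nat.succ_eq_add_one, Nat.add_sub_cancel, Nat.zero_sub, QQ, A, B, C, D]
      ring
    rw [hd]
    exact czero h3 _
  · obtain ⟨k0, h0⟩ := Nat.exists_eq_succ_of_ne_zero h0
    obtain ⟨k1, h1⟩ := Nat.exists_eq_succ_of_ne_zero h1
    obtain ⟨k2, h2⟩ := Nat.exists_eq_succ_of_ne_zero h2
    obtain ⟨k3, h3⟩ := Nat.exists_eq_succ_of_ne_zero h3
    have hm : m ≠ 0 := by intro hh; rw [hh] at h0; simp at h0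
    rw [if_neg hm]
    have hd : Em m = 0 := by
      rw [Em_eq, h0, h1, h2, h3]
      simp only [Nat.succ_eq_add_one, Nat.add_sub_cancel, Nat.zero_sub, QQ, A, B, C, D]
      ring
    rw [hd]
    simp

end Stmt4Aux
end

open Stmt4Aux in
/-- The coefficient of `x₁^{n₁}x₂^{n₂}x₃^{n₃}x₄^{n₄}` in the inverse of
`(1 - x₁ - x₂)(1 - x₃ - x₄) - x₁x₂x₃x₄` equals the coefficient of the same monomial in
`(x₁+x₂+x₃)^{n₁} (x₁+x₂)^{n₂} (x₃+x₄)^{n₃} (x₂+x₃+x₄)^{n₄}`. -/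
theorem stmt4 (F : MvPowerSeries (Fin 4) ℤ)
    (hF : ((1 - MvPowerSeries.X 0 - MvPowerSeries.X 1) *
        (1 - MvPowerSeries.X 2 - MvPowerSeries.X 3) -
        MvPowerSeries.X 0 * MvPowerSeries.X 1 * MvPowerSeries.X 2 * MvPowerSeries.X 3) * F = 1)
    (n1 n2 n3 n4 : ℕ) :
    MvPowerSeries.coeff (Finsupp.equivFunOnFinite.symm ![n1, n2, n3, n4]) F =
      MvPolynomial.coeff (Finsupp.equivFunOnFinite.symm ![n1, n2, n3, n4])
        ((MvPolynomial.X 0 + MvPolynomial.X 1 + MvPolynomial.X 2) ^ n1 *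
          (MvPolynomial.X 0 + MvPolynomial.X 1) ^ n2 *
          (MvPolynomial.X 2 + MvPolynomial.X 3) ^ n3 *
          (MvPolynomial.X 1 + MvPolynomial.X 2 + MvPolynomial.X 3) ^ n4 :
          MvPolynomial (Fin 4) ℤ) := by
  have hF' : Pser * F = 1 := hF
  have hFG : F = G := by
    calc F = (Pser * G) * F := by rw [hPG, one_mul]
    _ = (Pser * F) * G := by ring
    _ = G := by rw [hF', one_mul]
  rw [hFG, coeff_G]
  have hn0 : (Finsupp.equivFunOnFinite.symm ![n1, n2, n3, n4] : Fin 4 →₀ ℕ) 0 = n1 := by simp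
  have hn1 : (Finsupp.equivFunOnFinite.symm ![n1, n2, n3, n4] : Fin 4 →₀ ℕ) 1 = n2 := by simp
  have hn2 : (Finsupp.equivFunOnFinite.symm ![n1, n2, n3, n4] : Fin 4 →₀ ℕ) 2 = n3 := by simp
  have hn3 : (Finsupp.equivFunOnFinite.symm ![n1, n2, n3, n4] : Fin 4 →₀ ℕ) 3 = n4 := by simp
  simp only [Stmt4Aux.Q, Stmt4Aux.QQ, Stmt4Aux.A, Stmt4Aux.B, Stmt4Aux.C, Stmt4Aux.D, hn0, hn1, hn2, hn3]
end

section
/- Let G be the multiplicative inverse, in the ring of formal power series ℤ[[x1, x2, x3]], of the polynomial (1 - x1 - x2)(1 - x3) - x1·x2·x3. Then for all natural numbers n1, n2, n3, the coefficient of x1^{n1}·x2^{n2}·x3^{n3} in G equals Σ_{k=0}^{min(n1,n2,n3)} C(n1, k)·C(n3, k)·C(n1+n2-k, n1); in particular, for every natural number n the coefficient of x1^n·x2^n·x3^n in G equals B(n) = Σ_{k=0}^{n} C(n, k)²·C(n+k, k), where C denotes the usual binomial coefficient. -/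
open Finset MvPowerSeries

namespace Stmt8Aux

/-- The triple-index coefficient. -/
def bb (a b c : ℕ) : ℤ :=
  ∑ k ∈ Finset.range (min a (min b c) + 1),
    (a.choose k : ℤ) * (c.choose k : ℤ) * ((a + b - k).choose a : ℤ)

lemma term_zero {a b c k : ℕ} (h : min a (min b c) < k) :
    (a.choose k : ℤ) * (c.choose k : ℤ) * ((a + b - k).choose a : ℤ) = 0 := by
  rcases lt_or_ge a k with ha | ha
  · simp [Nat.choose_eq_zero_of_lt ha]
  · rcases lt_or_ge c k with hc | hc
    · simp [Nat.choose_eq_zero_of_lt hc]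
    · have hb : b < k := by omega
      have : a + b - k < a := by omega
      simp [Nat.choose_eq_zero_of_lt this]

lemma bb_eq (a b c N : ℕ) (hN : min a (min b c) + 1 ≤ N) :
    bb a b c = ∑ k ∈ Finset.range N,
      (a.choose k : ℤ) * (c.choose k : ℤ) * ((a + b - k).choose a : ℤ) := by
  unfold bb
  refine Finset.sum_subset (Finset.range_subset_range.2 hN) ?_
  intro k hk hk'
  simp only [Finset.mem_range, not_lt] at hk hk'
  exact term_zero (by omega)

lemma ptwise (a b c k : ℕ) :
    ((a+1).choose (k+1) : ℤ) * ((c+1).choose (k+1)) * ((a+b+2-(k+1)).choose (a+1))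
      - (a.choose (k+1) : ℤ) * ((c+1).choose (k+1)) * ((a+b+1-(k+1)).choose a)
      - ((a+1).choose (k+1) : ℤ) * ((c+1).choose (k+1)) * ((a+b+1-(k+1)).choose (a+1))
      - ((a+1).choose (k+1) : ℤ) * (c.choose (k+1)) * ((a+b+2-(k+1)).choose (a+1))
      + (a.choose (k+1) : ℤ) * (c.choose (k+1)) * ((a+b+1-(k+1)).choose a)
      + ((a+1).choose (k+1) : ℤ) * (c.choose (k+1)) * ((a+b+1-(k+1)).choose (a+1))
      - (a.choose (k+1) : ℤ) * (c.choose (k+1)) * ((a+b-(k+1)).choose a) =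
    ((a.choose k : ℤ) * (c.choose k) * ((a+b-k).choose a))
      - ((a.choose (k+1) : ℤ) * (c.choose (k+1)) * ((a+b-(k+1)).choose a)) := by
  rcases le_or_gt k (a+b) with hk | hk
  · have h1 : a+b+2-(k+1) = (a+b-k)+1 := by omega
    have h2 : a+b+1-(k+1) = a+b-k := by omega
    rw [h1, h2]
    have e1 : (a+1).choose (k+1) = a.choose k + a.choose (k+1) := Nat.choose_succ_succ a k
    have e2 : (c+1).choose (k+1) = c.choose k + c.choose (k+1) := Nat.choose_succ_succ c k
    have e3 : ((a+b-k)+1).choose (a+1) = (a+b-k).choose a + (a+b-k).choose (a+1) :=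
      Nat.choose_succ_succ _ _
    rw [e1, e2, e3]
    push_cast
    ring
  · have h1 : a < k := by omega
    have h2 : a < k + 1 := by omega
    have h3 : a + 1 < k + 1 := by omega
    simp [Nat.choose_eq_zero_of_lt h1, Nat.choose_eq_zero_of_lt h2, Nat.choose_eq_zero_of_lt h3]

lemma bb_rec (a b c : ℕ) :
    bb (a+1) (b+1) (c+1) = bb a (b+1) (c+1) + bb (a+1) b (c+1) + bb (a+1) (b+1) c
      - bb a (b+1) c - bb (a+1) b c + bb a b c := by
  have F : ℕ → ℤ := fun k => (a.choose k : ℤ) * (c.choose k) * ((a+b-k).choose a)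
  set t1 : ℕ → ℤ := fun k =>
    ((a+1).choose k : ℤ) * ((c+1).choose k) * ((a+b+2-k).choose (a+1)) with ht1
  set t2 : ℕ → ℤ := fun k =>
    (a.choose k : ℤ) * ((c+1).choose k) * ((a+b+1-k).choose a) with ht2
  set t3 : ℕ → ℤ := fun k =>
    ((a+1).choose k : ℤ) * ((c+1).choose k) * ((a+b+1-k).choose (a+1)) with ht3
  set t4 : ℕ → ℤ := fun k =>
    ((a+1).choose k : ℤ) * (c.choose k) * ((a+b+2-k).choose (a+1)) with ht4
  set t5 : ℕ → ℤ := fun k =>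
    (a.choose k : ℤ) * (c.choose k) * ((a+b+1-k).choose a) with ht5
  set t6 : ℕ → ℤ := fun k =>
    ((a+1).choose k : ℤ) * (c.choose k) * ((a+b+1-k).choose (a+1)) with ht6
  set t7 : ℕ → ℤ := fun k =>
    (a.choose k : ℤ) * (c.choose k) * ((a+b-k).choose a) with ht7
  have hsum : ∑ k ∈ Finset.range (a+3),
      (t1 k - t2 k - t3 k - t4 k + t5 k + t6 k - t7 k) = 0 := by
    rw [Finset.sum_range_succ']
    have hpt : ∀ k, t1 (k+1) - t2 (k+1) - t3 (k+1) - t4 (k+1) + t5 (k+1) + t6 (k+1) - t7 (k+1)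
        = t7 k - t7 (k+1) := by
      intro k
      simpa [ht1, ht2, ht3, ht4, ht5, ht6, ht7] using ptwise a b c k
    have h0 : t1 0 - t2 0 - t3 0 - t4 0 + t5 0 + t6 0 - t7 0 = -(t7 0) := by
      simp [ht1, ht2, ht3, ht4, ht5, ht6, ht7]
      ring
    rw [h0]
    rw [Finset.sum_congr rfl (fun k _ => hpt k)]
    rw [Finset.sum_range_sub' t7 (a+2)]
    have : t7 (a+2) = 0 := by
      simp [ht7, Nat.choose_eq_zero_of_lt (show a < a + 2 by omega)]
    rw [this]
    ring
  have e1 := bb_eq (a+1) (b+1) (c+1) (a+3) (by omega)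
  have e2 := bb_eq a (b+1) (c+1) (a+3) (by omega)
  have e3 := bb_eq (a+1) b (c+1) (a+3) (by omega)
  have e4 := bb_eq (a+1) (b+1) c (a+3) (by omega)
  have e5 := bb_eq a (b+1) c (a+3) (by omega)
  have e6 := bb_eq (a+1) b c (a+3) (by omega)
  have e7 := bb_eq a b c (a+3) (by omega)
  have n1 : a+1+(b+1) = a+b+2 := by ring
  have n2 : a+(b+1) = a+b+1 := by ring
  have n3 : a+1+b = a+b+1 := by ring
  rw [n1] at e1 e4
  rw [n2] at e2 e5
  rw [n3] at e3 e6
  have expand : ∑ k ∈ Finset.range (a+3),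
      (t1 k - t2 k - t3 k - t4 k + t5 k + t6 k - t7 k)
      = (∑ k ∈ Finset.range (a+3), t1 k) - (∑ k ∈ Finset.range (a+3), t2 k)
        - (∑ k ∈ Finset.range (a+3), t3 k) - (∑ k ∈ Finset.range (a+3), t4 k)
        + (∑ k ∈ Finset.range (a+3), t5 k) + (∑ k ∈ Finset.range (a+3), t6 k)
        - (∑ k ∈ Finset.range (a+3), t7 k) := by
    simp [Finset.sum_sub_distrib, Finset.sum_add_distrib]
  rw [expand] at hsum
  rw [e1, e2, e3, e4, e5, e6, e7]
  simp only [ht1, ht2, ht3, ht4, ht5, ht6, ht7] at hsum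
  linarith [hsum]

-- boundary values
lemma bb_0bc (b c : ℕ) : bb 0 b c = 1 := by
  simp [bb]

lemma bb_a0c (a c : ℕ) : bb a 0 c = 1 := by
  simp [bb]

lemma bb_ab0 (a b : ℕ) : bb a b 0 = ((a+b).choose a : ℤ) := by
  simp [bb]

/-- Our exponent vector. -/
noncomputable def ee (a b c : ℕ) : Fin 3 →₀ ℕ := Finsupp.equivFunOnFinite.symm ![a, b, c]

lemma ee_apply (a b c : ℕ) (i : Fin 3) : ee a b c i = ![a, b, c] i := rfl

lemma le_ee {d : Fin 3 →₀ ℕ} {a b c : ℕ} :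
    d ≤ ee a b c ↔ d 0 ≤ a ∧ d 1 ≤ b ∧ d 2 ≤ c := by
  rw [Finsupp.le_def]
  constructor
  · intro h
    exact ⟨h 0, h 1, h 2⟩
  · rintro ⟨h0, h1, h2⟩ i
    fin_cases i <;> simpa [ee_apply]

lemma ee_sub (a b c x y z : ℕ) : ee a b c - ee x y z = ee (a-x) (b-y) (c-z) := by
  ext i
  rw [Finsupp.tsub_apply]
  fin_cases i <;> rfl

lemma single0 : (Finsupp.single (0 : Fin 3) 1) = ee 1 0 0 := by
  ext i; fin_cases i <;> simp [ee_apply, Finsupp.single_apply]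

lemma single1 : (Finsupp.single (1 : Fin 3) 1) = ee 0 1 0 := by
  ext i; fin_cases i <;> simp [ee_apply, Finsupp.single_apply]

lemma single2 : (Finsupp.single (2 : Fin 3) 1) = ee 0 0 1 := by
  ext i; fin_cases i <;> simp [ee_apply, Finsupp.single_apply]

lemma ee_add (a b c x y z : ℕ) : ee a b c + ee x y z = ee (a+x) (b+y) (c+z) := by
  ext i
  rw [Finsupp.add_apply]
  fin_cases i <;> rfl

lemma ee_eq_zero {a b c : ℕ} : ee a b c = 0 ↔ a = 0 ∧ b = 0 ∧ c = 0 := by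
  constructor
  · intro h
    refine ⟨?_, ?_, ?_⟩
    · have := congrArg (fun f : Fin 3 →₀ ℕ => f 0) h; simpa [ee_apply] using this
    · have := congrArg (fun f : Fin 3 →₀ ℕ => f 1) h; simpa [ee_apply] using this
    · have := congrArg (fun f : Fin 3 →₀ ℕ => f 2) h; simpa [ee_apply] using this
  · rintro ⟨rfl, rfl, rfl⟩
    ext i; fin_cases i <;> rfl

end Stmt8Aux

open Stmt8Aux

/-- The Taylor coefficients of the inverse of `(1 - x₁ - x₂)(1 - x₃) - x₁x₂x₃` are
`B(n₁,n₂,n₃) = ∑_k C(n₁,k) C(n₃,k) C(n₁+n₂-k,n₁)`; in particular the diagonal coefficients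
are the Apéry-like numbers `B(n) = ∑_k C(n,k)² C(n+k,k)` related to ζ(2). -/
theorem stmt8 (G : MvPowerSeries (Fin 3) ℤ)
    (hG : ((1 - MvPowerSeries.X 0 - MvPowerSeries.X 1) * (1 - MvPowerSeries.X 2) -
        MvPowerSeries.X 0 * MvPowerSeries.X 1 * MvPowerSeries.X 2) * G = 1) :
    (∀ n1 n2 n3 : ℕ,
      MvPowerSeries.coeff (Finsupp.equivFunOnFinite.symm ![n1, n2, n3]) G =
        ∑ k ∈ Finset.range (min n1 (min n2 n3) + 1),
          (n1.choose k : ℤ) * (n3.choose k : ℤ) * ((n1 + n2 - k).choose n1 : ℤ)) ∧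
    (∀ n : ℕ,
      MvPowerSeries.coeff (Finsupp.equivFunOnFinite.symm fun _ => n) G =
        ∑ k ∈ Finset.range (n + 1),
          (n.choose k : ℤ) ^ 2 * ((n + k).choose k : ℤ)) := by
  classical
  -- master coefficient recurrence
  have hexp : G = 1 + MvPowerSeries.monomial (ee 1 0 0) 1 * G
      + MvPowerSeries.monomial (ee 0 1 0) 1 * G
      + MvPowerSeries.monomial (ee 0 0 1) 1 * G
      - MvPowerSeries.monomial (ee 1 0 1) 1 * G
      - MvPowerSeries.monomial (ee 0 1 1) 1 * G
      + MvPowerSeries.monomial (ee 1 1 1) 1 * G := by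
    have x0 : (MvPowerSeries.X 0 : MvPowerSeries (Fin 3) ℤ)
        = MvPowerSeries.monomial (ee 1 0 0) 1 := by rw [MvPowerSeries.X_def, single0]
    have x1 : (MvPowerSeries.X 1 : MvPowerSeries (Fin 3) ℤ)
        = MvPowerSeries.monomial (ee 0 1 0) 1 := by rw [MvPowerSeries.X_def, single1]
    have x2 : (MvPowerSeries.X 2 : MvPowerSeries (Fin 3) ℤ)
        = MvPowerSeries.monomial (ee 0 0 1) 1 := by rw [MvPowerSeries.X_def, single2]
    have m02 : MvPowerSeries.monomial (ee 1 0 1) (1:ℤ)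
        = MvPowerSeries.monomial (ee 1 0 0) 1 * MvPowerSeries.monomial (ee 0 0 1) 1 := by
      rw [MvPowerSeries.monomial_mul_monomial, one_mul, ee_add]
    have m12 : MvPowerSeries.monomial (ee 0 1 1) (1:ℤ)
        = MvPowerSeries.monomial (ee 0 1 0) 1 * MvPowerSeries.monomial (ee 0 0 1) 1 := by
      rw [MvPowerSeries.monomial_mul_monomial, one_mul, ee_add]
    have m012 : MvPowerSeries.monomial (ee 1 1 1) (1:ℤ)
        = MvPowerSeries.monomial (ee 1 0 0) 1 * MvPowerSeries.monomial (ee 0 1 0) 1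
          * MvPowerSeries.monomial (ee 0 0 1) 1 := by
      rw [MvPowerSeries.monomial_mul_monomial, MvPowerSeries.monomial_mul_monomial,
        one_mul, one_mul, ee_add, ee_add]
    rw [m02, m12, m012, ← x0, ← x1, ← x2]
    linear_combination hG
  have key : ∀ a b c : ℕ,
      MvPowerSeries.coeff (ee a b c) G =
        (if a = 0 ∧ b = 0 ∧ c = 0 then 1 else 0)
        + (if 1 ≤ a then MvPowerSeries.coeff (ee (a-1) b c) G else 0)
        + (if 1 ≤ b then MvPowerSeries.coeff (ee a (b-1) c) G else 0)
        + (if 1 ≤ c then MvPowerSeries.coeff (ee a b (c-1)) G else 0)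
        - (if 1 ≤ a ∧ 1 ≤ c then MvPowerSeries.coeff (ee (a-1) b (c-1)) G else 0)
        - (if 1 ≤ b ∧ 1 ≤ c then MvPowerSeries.coeff (ee a (b-1) (c-1)) G else 0)
        + (if 1 ≤ a ∧ 1 ≤ b ∧ 1 ≤ c then
            MvPowerSeries.coeff (ee (a-1) (b-1) (c-1)) G else 0) := by
    intro a b c
    conv_lhs => rw [hexp]
    simp only [map_add, map_sub]
    rw [MvPowerSeries.coeff_one]
    rw [MvPowerSeries.coeff_monomial_mul, MvPowerSeries.coeff_monomial_mul,
      MvPowerSeries.coeff_monomial_mul, MvPowerSeries.coeff_monomial_mul,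
      MvPowerSeries.coeff_monomial_mul, MvPowerSeries.coeff_monomial_mul]
    rw [ee_sub, ee_sub, ee_sub, ee_sub, ee_sub, ee_sub]
    simp only [le_ee, ee_apply, ee_eq_zero, one_mul]
    norm_num [Matrix.cons_val_zero, Matrix.cons_val_one, Matrix.cons_val_two, Matrix.tail_cons, Matrix.head_cons]
  -- main induction
  have main : ∀ n a b c : ℕ, a + b + c = n →
      MvPowerSeries.coeff (ee a b c) G = bb a b c := by
    intro n
    induction n using Nat.strong_induction_on with
    | _ n ih =>
      intro a b c hn
      rcases a with _ | a <;> rcases b with _ | b <;> rcases c with _ | c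
      · rw [key]; simp [bb_0bc]
      · rw [key]; simp only [le_refl, Nat.le_zero]
        norm_num
        rw [ih (c) (by omega) 0 0 c (by omega)]
        simp [bb_0bc]
      · rw [key]; simp only []
        norm_num
        rw [ih b (by omega) 0 b 0 (by omega)]
        simp [bb_0bc]
      · rw [key]
        norm_num
        rw [ih (b + c + 1) (by omega) 0 b (c+1) (by omega),
          ih (b + c + 1) (by omega) 0 (b+1) c (by omega),
          ih (b + c) (by omega) 0 b c (by omega)]
        simp [bb_0bc]
      · rw [key]
        norm_num
        rw [ih a (by omega) a 0 0 (by omega)]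
        simp [bb_a0c]
      · rw [key]
        norm_num
        rw [ih (a + c + 1) (by omega) a 0 (c+1) (by omega),
          ih (a + c + 1) (by omega) (a+1) 0 c (by omega),
          ih (a + c) (by omega) a 0 c (by omega)]
        simp [bb_a0c]
      · rw [key]
        norm_num
        rw [ih (a + b + 1) (by omega) a (b+1) 0 (by omega),
          ih (a + b + 1) (by omega) (a+1) b 0 (by omega)]
        rw [bb_ab0, bb_ab0, bb_ab0]
        have : (a+1) + (b+1) = (a + (b+1)) + 1 := by ring
        rw [this]
        have h2 : (a + (b+1)) + 1 = ((a+1) + b) + 1 := by ring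
        have := Nat.choose_succ_succ (a + (b+1)) a
        rw [this]
        push_cast
        have h3 : a + (b+1) = a + 1 + b := by ring
        rw [h3]
      · rw [key]
        norm_num
        rw [ih (a+b+c+2) (by omega) a (b+1) (c+1) (by omega),
          ih (a+b+c+2) (by omega) (a+1) b (c+1) (by omega),
          ih (a+b+c+2) (by omega) (a+1) (b+1) c (by omega),
          ih (a+b+c+1) (by omega) a (b+1) c (by omega),
          ih (a+b+c+1) (by omega) (a+1) b c (by omega),
          ih (a+b+c) (by omega) a b c (by omega)]
        rw [bb_rec]
  constructor
  · intro n1 n2 n3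
    exact main (n1+n2+n3) n1 n2 n3 rfl
  · intro n
    have hv : (Finsupp.equivFunOnFinite.symm fun _ : Fin 3 => n) = ee n n n := by
      unfold ee
      congr 1
      funext i
      fin_cases i <;> rfl
    rw [hv, main (n+n+n) n n n rfl]
    unfold bb
    rw [min_self, min_self]
    rw [← Finset.sum_range_reflect]
    refine Finset.sum_congr rfl ?_
    intro j hj
    have hj' : j ≤ n := by
      simp only [Finset.mem_range] at hj; omega
    have h1 : n + 1 - 1 - j = n - j := by omega
    rw [h1]
    have h2 : n.choose (n - j) = n.choose j := Nat.choose_symm hj'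
    have h3 : n + n - (n - j) = n + j := by omega
    rw [h2, h3]
    have h4 : (n + j).choose n = (n + j).choose j := by
      have := Nat.choose_symm (show j ≤ n + j by omega)
      simpa [show n + j - j = n by omega] using this
    rw [h4]
    ring
end

section
/- For every natural number n, Σ_{k=0}^{n} C(n, k)²·C(n+k, k) = Σ_{k=0}^{n} (-1)^{n+k}·C(n, k)·C(n+k, k)², where C denotes the usual binomial coefficient and the identity is an equality of integers. -/
open Finset

/-- The `m`-th finite difference identity:
`∑_{i=0}^m (-1)^{m+i} C(m,i) C(c+i, m+j) = C(c, j)`. -/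
lemma aux_diff (c j : ℕ) : ∀ m : ℕ,
    ∑ i ∈ range (m + 1),
      (-1 : ℤ) ^ (m + i) * (m.choose i : ℤ) * ((c + i).choose (m + j) : ℤ)
      = (c.choose j : ℤ) := by
  intro m
  induction m with
  | zero => simp
  | succ m ih =>
    have key : ∀ i, ((c + i + 1).choose (m + 1 + j) : ℤ)
        = ((c + i).choose (m + 1 + j) : ℤ) + ((c + i).choose (m + j) : ℤ) := by
      intro i
      have := Nat.choose_succ_succ (c + i) (m + j)
      have h1 : (c + i + 1).choose (m + j + 1)
          = (c + i).choose (m + j) + (c + i).choose (m + j + 1) := this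
      have h2 : m + 1 + j = m + j + 1 := by ring
      rw [h2, h1]
      push_cast
      ring
    -- peel off i = 0 and shift
    rw [Finset.sum_range_succ' _ (m + 1)]
    have hshift : ∀ i, ((m + 1).choose (i + 1) : ℤ) = (m.choose i : ℤ) + (m.choose (i + 1) : ℤ) := by
      intro i; exact_mod_cast congrArg (Nat.cast (R := ℤ)) (Nat.choose_succ_succ m i)
    have expand : ∑ i ∈ range (m + 1),
        (-1 : ℤ) ^ (m + 1 + (i + 1)) * ((m + 1).choose (i + 1) : ℤ)
          * ((c + (i + 1)).choose (m + 1 + j) : ℤ)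
        = (∑ i ∈ range (m + 1),
            (-1 : ℤ) ^ (m + i) * (m.choose i : ℤ) * ((c + i + 1).choose (m + 1 + j) : ℤ))
          + ∑ i ∈ range (m + 1),
            (-1 : ℤ) ^ (m + i) * (m.choose (i + 1) : ℤ) * ((c + i + 1).choose (m + 1 + j) : ℤ) := by
      rw [← Finset.sum_add_distrib]
      refine Finset.sum_congr rfl fun i _ => ?_
      rw [hshift i]
      have hsign : (-1 : ℤ) ^ (m + 1 + (i + 1)) = (-1 : ℤ) ^ (m + i) := by
        have : m + 1 + (i + 1) = (m + i) + 2 := by ring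
        rw [this, pow_add]; norm_num
      rw [hsign]; ring
    rw [expand]
    -- second sum: reindex, telescopes against the i = 0 term
    have hB : ∑ i ∈ range (m + 1),
        (-1 : ℤ) ^ (m + i) * (m.choose (i + 1) : ℤ) * ((c + i + 1).choose (m + 1 + j) : ℤ)
        = -(∑ i ∈ range (m + 1),
            (-1 : ℤ) ^ (m + i) * (m.choose i : ℤ) * ((c + i).choose (m + 1 + j) : ℤ))
          - (-1 : ℤ) ^ (m + 1 + 0) * ((m + 1).choose 0 : ℤ) * ((c + 0).choose (m + 1 + j) : ℤ) := by
      have h0 : ∑ i ∈ range (m + 2),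
          (-1 : ℤ) ^ (m + 1 + i) * (m.choose i : ℤ) * ((c + i).choose (m + 1 + j) : ℤ)
          = ∑ i ∈ range (m + 1),
            (-1 : ℤ) ^ (m + 1 + i) * (m.choose i : ℤ) * ((c + i).choose (m + 1 + j) : ℤ) := by
        rw [Finset.sum_range_succ]
        simp [Nat.choose_succ_self]
      rw [Finset.sum_range_succ' (fun i => (-1 : ℤ) ^ (m + 1 + i) * (m.choose i : ℤ)
          * ((c + i).choose (m + 1 + j) : ℤ)) (m + 1)] at h0
      have hre : ∀ i, (-1 : ℤ) ^ (m + 1 + (i + 1)) * (m.choose (i + 1) : ℤ)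
          * ((c + (i + 1)).choose (m + 1 + j) : ℤ)
          = (-1 : ℤ) ^ (m + i) * (m.choose (i + 1) : ℤ) * ((c + i + 1).choose (m + 1 + j) : ℤ) := by
        intro i
        have hsign : (-1 : ℤ) ^ (m + 1 + (i + 1)) = (-1 : ℤ) ^ (m + i) := by
          have : m + 1 + (i + 1) = (m + i) + 2 := by ring
          rw [this, pow_add]; norm_num
        rw [hsign]
        norm_num [add_assoc]
      rw [Finset.sum_congr rfl (fun i _ => hre i)] at h0
      have hneg : ∑ i ∈ range (m + 1),
          (-1 : ℤ) ^ (m + 1 + i) * (m.choose i : ℤ) * ((c + i).choose (m + 1 + j) : ℤ)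
          = -(∑ i ∈ range (m + 1),
            (-1 : ℤ) ^ (m + i) * (m.choose i : ℤ) * ((c + i).choose (m + 1 + j) : ℤ)) := by
        rw [← Finset.sum_neg_distrib]
        refine Finset.sum_congr rfl fun i _ => ?_
        have : m + 1 + i = (m + i) + 1 := by ring
        rw [this, pow_succ]; ring
      have hm1 : (m.choose 0 : ℤ) = ((m + 1).choose 0 : ℤ) := by simp
      linarith [h0, hneg, hm1 ▸ h0]
    rw [hB]
    have : (∑ i ∈ range (m + 1),
        (-1 : ℤ) ^ (m + i) * (m.choose i : ℤ) * ((c + i + 1).choose (m + 1 + j) : ℤ))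
        - (∑ i ∈ range (m + 1),
            (-1 : ℤ) ^ (m + i) * (m.choose i : ℤ) * ((c + i).choose (m + 1 + j) : ℤ))
        = ∑ i ∈ range (m + 1),
            (-1 : ℤ) ^ (m + i) * (m.choose i : ℤ) * ((c + i).choose (m + j) : ℤ) := by
      rw [← Finset.sum_sub_distrib]
      refine Finset.sum_congr rfl fun i _ => ?_
      rw [key i]; ring
    linarith [this, ih]

/-- Key lemma: `∑_k (-1)^{n+k} C(n,k) C(k,j) C(n+k,k) = C(n,j) C(n+j,j)` for `j ≤ n`. -/
lemma aux_key (n j : ℕ) (hj : j ≤ n) :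
    ∑ k ∈ range (n + 1),
      (-1 : ℤ) ^ (n + k) * (n.choose k : ℤ) * (k.choose j : ℤ) * ((n + k).choose k : ℤ)
      = (n.choose j : ℤ) * ((n + j).choose j : ℤ) := by
  -- terms with k < j vanish
  have hsplit : ∑ k ∈ range (n + 1),
      (-1 : ℤ) ^ (n + k) * (n.choose k : ℤ) * (k.choose j : ℤ) * ((n + k).choose k : ℤ)
      = ∑ k ∈ Ico j (n + 1),
        (-1 : ℤ) ^ (n + k) * (n.choose k : ℤ) * (k.choose j : ℤ) * ((n + k).choose k : ℤ) := by
    rw [Finset.range_eq_Ico, ← Finset.sum_Ico_consecutive _ (Nat.zero_le j) (by omega)]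
    have : ∑ k ∈ Ico 0 j,
        (-1 : ℤ) ^ (n + k) * (n.choose k : ℤ) * (k.choose j : ℤ) * ((n + k).choose k : ℤ) = 0 := by
      refine Finset.sum_eq_zero fun k hk => ?_
      have : k < j := (Finset.mem_Ico.mp hk).2
      rw [Nat.choose_eq_zero_of_lt this]
      simp
    rw [this, zero_add]
  rw [hsplit, Finset.sum_Ico_eq_sum_range]
  have hlen : n + 1 - j = (n - j) + 1 := by omega
  rw [hlen]
  have hterm : ∀ i ∈ range (n - j + 1),
      (-1 : ℤ) ^ (n + (j + i)) * (n.choose (j + i) : ℤ) * ((j + i).choose j : ℤ)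
        * ((n + (j + i)).choose (j + i) : ℤ)
      = (n.choose j : ℤ) * ((-1 : ℤ) ^ ((n - j) + i) * ((n - j).choose i : ℤ)
          * ((n + j + i).choose ((n - j) + j) : ℤ)) := by
    intro i hi
    have hi' : i ≤ n - j := by simpa using Nat.lt_succ_iff.mp (Finset.mem_range.mp hi)
    have hkn : j + i ≤ n := by omega
    have hcm : n.choose (j + i) * (j + i).choose j = n.choose j * (n - j).choose (j + i - j) :=
      Nat.choose_mul (Nat.le_add_right j i)
    have hji : j + i - j = i := by omega
    rw [hji] at hcm
    have hsym : (n + (j + i)).choose (j + i) = (n + j + i).choose n := by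
      have h1 : n + (j + i) = n + j + i := by ring
      rw [h1]
      have := Nat.choose_symm (n := n + j + i) (k := n) (by omega)
      have h2 : n + j + i - n = j + i := by omega
      rw [h2] at this
      exact this
    have hnj : (n - j) + j = n := by omega
    have hsign : (-1 : ℤ) ^ (n + (j + i)) = (-1 : ℤ) ^ ((n - j) + i) := by
      have : n + (j + i) = ((n - j) + i) + 2 * j := by omega
      rw [this, pow_add, pow_mul]; norm_num
    rw [hsym, hnj, hsign]
    have hc : (n.choose (j + i) : ℤ) * ((j + i).choose j : ℤ)
        = (n.choose j : ℤ) * ((n - j).choose i : ℤ) := by exact_mod_cast hcm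
    linear_combination ((-1 : ℤ) ^ (n - j + i) * ((n + j + i).choose n : ℤ)) * hc
  rw [Finset.sum_congr rfl hterm, ← Finset.mul_sum, aux_diff (n + j) j (n - j)]

theorem vander (n k : ℕ) (hk : k ≤ n) :
    ((n + k).choose k : ℤ) = ∑ j ∈ range (n + 1), (n.choose j : ℤ) * (k.choose j : ℤ) := by
  have h := Nat.add_choose_eq n k k
  rw [Finset.Nat.sum_antidiagonal_eq_sum_range_succ_mk] at h
  have h2 : ∑ j ∈ range (k + 1), n.choose j * k.choose (k - j)
      = ∑ j ∈ range (k + 1), n.choose j * k.choose j := by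
    refine Finset.sum_congr rfl fun j hj => ?_
    have hjk : j ≤ k := Nat.lt_succ_iff.mp (Finset.mem_range.mp hj)
    rw [Nat.choose_symm hjk]
  rw [h2] at h
  have h3 : ∑ j ∈ range (n + 1), n.choose j * k.choose j
      = ∑ j ∈ range (k + 1), n.choose j * k.choose j := by
    symm
    apply Finset.sum_subset
    · intro x hx
      simp only [Finset.mem_range] at *
      omega
    · intro x _ hx
      simp only [Finset.mem_range, not_lt] at hx
      rw [Nat.choose_eq_zero_of_lt (by omega : k < x)]
      simp
  rw [h, ← h3]
  push_cast
  rfl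

/-- The curious identity `∑_{k=0}^n C(n,k)² C(n+k,k) = ∑_{k=0}^n (-1)^{n+k} C(n,k) C(n+k,k)²`. -/
theorem stmt10 (n : ℕ) :
    ∑ k ∈ Finset.range (n + 1), (n.choose k : ℤ) ^ 2 * ((n + k).choose k : ℤ) =
      ∑ k ∈ Finset.range (n + 1),
        (-1 : ℤ) ^ (n + k) * (n.choose k : ℤ) * ((n + k).choose k : ℤ) ^ 2 := by
  have hR : ∑ k ∈ Finset.range (n + 1),
      (-1 : ℤ) ^ (n + k) * (n.choose k : ℤ) * ((n + k).choose k : ℤ) ^ 2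
      = ∑ k ∈ Finset.range (n + 1), ∑ j ∈ Finset.range (n + 1),
        (-1 : ℤ) ^ (n + k) * (n.choose k : ℤ) * (k.choose j : ℤ) * ((n + k).choose k : ℤ)
          * (n.choose j : ℤ) := by
    refine Finset.sum_congr rfl fun k hk => ?_
    have hkn : k ≤ n := Nat.lt_succ_iff.mp (Finset.mem_range.mp hk)
    have hv := vander n k hkn
    calc (-1 : ℤ) ^ (n + k) * (n.choose k : ℤ) * ((n + k).choose k : ℤ) ^ 2
        = (-1 : ℤ) ^ (n + k) * (n.choose k : ℤ) * ((n + k).choose k : ℤ)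
          * ((n + k).choose k : ℤ) := by ring
      _ = (-1 : ℤ) ^ (n + k) * (n.choose k : ℤ) * ((n + k).choose k : ℤ)
          * ∑ j ∈ range (n + 1), (n.choose j : ℤ) * (k.choose j : ℤ) := by rw [← hv]
      _ = _ := by
          rw [Finset.mul_sum]
          refine Finset.sum_congr rfl fun j _ => by ring
  rw [hR, Finset.sum_comm]
  refine Finset.sum_congr rfl fun j hj => ?_
  have hjn : j ≤ n := Nat.lt_succ_iff.mp (Finset.mem_range.mp hj)
  have : ∑ k ∈ range (n + 1),
      (-1 : ℤ) ^ (n + k) * (n.choose k : ℤ) * (k.choose j : ℤ) * ((n + k).choose k : ℤ)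
        * (n.choose j : ℤ)
      = (∑ k ∈ range (n + 1),
          (-1 : ℤ) ^ (n + k) * (n.choose k : ℤ) * (k.choose j : ℤ) * ((n + k).choose k : ℤ))
        * (n.choose j : ℤ) := by
    rw [Finset.sum_mul]
  rw [this, aux_key n j hjn]
  ring
end

section
/- Define B(m) = Σ_{k ∈ ℤ} binom(m, k)²·binom(m+k, k) for every integer m (this sum has only finitely many nonzero terms). Then for every integer n > 0, B(-n) = (-1)^{n-1}·B(n-1). -/
open Finset

/-- The Apéry-like numbers (for ζ(2)) extended to all integers:
`B(m) = ∑_{k ∈ ℤ} binom(m,k)² binom(m+k,k)` (a finite sum). -/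
noncomputable def B (m : ℤ) : ℤ :=
  ∑ᶠ k : ℤ, binom m k ^ 2 * binom (m + k) k

lemma prodTop (a b : ℕ) : ∏ i ∈ range b, ((a:ℤ) - i) = (b.factorial : ℤ) * (a.choose b) := by
  induction b with
  | zero => simp
  | succ b ih =>
    rw [prod_range_succ, ih]
    rcases le_or_gt b a with h | h
    · have hc : ((a.choose (b+1) : ℕ):ℤ) * (b+1) = ((a.choose b : ℕ):ℤ) * ((a:ℤ) - b) := by
        have := congrArg (Nat.cast : ℕ → ℤ) (Nat.choose_succ_right_eq a b)
        push_cast [h] at this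
        exact this
      rw [Nat.factorial_succ]; push_cast
      linear_combination (-(b.factorial : ℤ)) * hc
    · rw [Nat.choose_eq_zero_of_lt (by omega : a < b+1), Nat.choose_eq_zero_of_lt h]
      simp

lemma prodNegTop (n b : ℕ) (hn : 0 < n) :
    ∏ i ∈ range b, ((-(n:ℤ)) - i) = (-1:ℤ)^b * (b.factorial : ℤ) * ((n-1+b).choose b) := by
  induction b with
  | zero => simp
  | succ b ih =>
    rw [prod_range_succ, ih]
    have hc : (n + b) * ((n-1+b).choose b) = (n+b).choose (b+1) * (b+1) := by
      have := Nat.add_one_mul_choose_eq (n-1+b) b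
      rw [show n-1+b+1 = n + b by omega] at this
      simpa using this
    have hc' : ((n:ℤ) + b) * (((n-1+b).choose b : ℕ):ℤ) = (((n+b).choose (b+1) : ℕ):ℤ) * ((b:ℤ)+1) := by
      exact_mod_cast congrArg (Nat.cast : ℕ → ℤ) hc
    rw [show n-1+(b+1) = n+b by omega, Nat.factorial_succ]
    push_cast
    linear_combination (- ((-1:ℤ)^b * (b.factorial:ℤ))) * hc'

lemma binom_natnat (a b : ℕ) : binom (a:ℤ) (b:ℤ) = a.choose b := by
  unfold binom
  rw [if_pos (Int.natCast_nonneg b), Int.toNat_natCast, prodTop]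
  exact Int.mul_ediv_cancel_left _ (by exact_mod_cast b.factorial_ne_zero)

lemma binom_negnat (n b : ℕ) (hn : 0 < n) :
    binom (-(n:ℤ)) (b:ℤ) = (-1:ℤ)^b * ((n-1+b).choose b) := by
  unfold binom
  rw [if_pos (Int.natCast_nonneg b), Int.toNat_natCast, prodNegTop n b hn,
    show (-1:ℤ)^b * (b.factorial:ℤ) * (((n-1+b).choose b : ℕ):ℤ)
      = (b.factorial:ℤ) * ((-1:ℤ)^b * (((n-1+b).choose b : ℕ):ℤ)) by ring]
  exact Int.mul_ediv_cancel_left _ (by exact_mod_cast b.factorial_ne_zero)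

lemma binom_nat_negk (N : ℕ) (k : ℤ) (hk : k < 0) : binom (N:ℤ) k = 0 := by
  unfold binom
  rw [if_neg (by omega), if_pos (by omega : (0:ℤ) ≤ (N:ℤ) - k)]
  have hmem : N ∈ range ((N:ℤ) - k).toNat := by
    simp only [mem_range]; omega
  rw [Finset.prod_eq_zero hmem (by simp)]
  simp

lemma binom_neg_negk (n k : ℤ) (h : n - k < 0) (hk : k < 0) : binom n k = 0 := by
  unfold binom; rw [if_neg (by omega), if_neg (by omega)]

lemma Bnat (N : ℕ) : B (N:ℤ)
    = ∑ k ∈ range (N+1), ((N.choose k : ℕ):ℤ)^2 * (((N+k).choose k : ℕ):ℤ) := by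
  rw [B]
  have hs : ∑ᶠ k : ℤ, binom (N:ℤ) k ^2 * binom ((N:ℤ) + k) k
      = ∑ k ∈ (range (N+1)).map ⟨(Nat.cast : ℕ → ℤ), Nat.cast_injective⟩,
          binom (N:ℤ) k ^2 * binom ((N:ℤ)+k) k := by
    apply finsum_eq_finset_sum_of_support_subset
    intro k hk
    simp only [Function.mem_support] at hk
    simp only [coe_map, Set.mem_image, mem_coe, mem_range, Function.Embedding.coeFn_mk]
    rcases lt_or_ge k 0 with hneg | hpos
    · exact absurd (by rw [binom_nat_negk N k hneg]; ring) hk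
    · obtain ⟨b, rfl⟩ := Int.eq_ofNat_of_zero_le hpos
      refine ⟨b, ?_, rfl⟩
      by_contra h'
      apply hk
      rw [binom_natnat N b, Nat.choose_eq_zero_of_lt (by omega : N < b)]
      simp
  rw [hs, Finset.sum_map]
  apply Finset.sum_congr rfl
  intro b hb
  simp only [Function.Embedding.coeFn_mk]
  rw [binom_natnat N b, show (N:ℤ) + (b:ℤ) = ((N+b : ℕ):ℤ) by push_cast; ring,
    binom_natnat (N+b) b]

lemma Bneg (n : ℕ) (hn : 0 < n) : B (-(n:ℤ))
    = ∑ k ∈ range n, (-1:ℤ)^k * (((n-1+k).choose k : ℕ):ℤ)^2 * (((n-1).choose k : ℕ):ℤ) := by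
  rw [B]
  have hterm : ∀ b : ℕ, b < n →
      binom (-(n:ℤ)) (b:ℤ) ^2 * binom (-(n:ℤ) + (b:ℤ)) (b:ℤ)
      = (-1:ℤ)^b * (((n-1+b).choose b : ℕ):ℤ)^2 * (((n-1).choose b : ℕ):ℤ) := by
    intro b hb
    rw [binom_negnat n b hn,
      show -(n:ℤ) + (b:ℤ) = -(((n - b : ℕ):ℕ):ℤ) by push_cast [Nat.cast_sub hb.le]; ring,
      binom_negnat (n-b) b (by omega), show n-b-1+b = n-1 by omega]
    have hsq : ((-1:ℤ)^b)^2 = 1 := by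
      rw [← pow_mul, mul_comm, pow_mul]; simp
    rw [mul_pow, hsq]
    ring
  have hs : ∑ᶠ k : ℤ, binom (-(n:ℤ)) k ^2 * binom (-(n:ℤ) + k) k
      = ∑ k ∈ (range n).map ⟨(Nat.cast : ℕ → ℤ), Nat.cast_injective⟩,
          binom (-(n:ℤ)) k ^2 * binom (-(n:ℤ)+k) k := by
    apply finsum_eq_finset_sum_of_support_subset
    intro k hk
    simp only [Function.mem_support] at hk
    simp only [coe_map, Set.mem_image, mem_coe, mem_range, Function.Embedding.coeFn_mk]
    rcases lt_or_ge k 0 with hneg | hpos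
    · refine absurd ?_ hk
      rw [binom_neg_negk (-(n:ℤ) + k) k (by omega) hneg]
      ring
    · obtain ⟨b, rfl⟩ := Int.eq_ofNat_of_zero_le hpos
      refine ⟨b, ?_, rfl⟩
      by_contra h'
      apply hk
      rw [show -(n:ℤ) + (b:ℤ) = ((b - n : ℕ):ℤ) by push_cast [Nat.cast_sub (by omega : n ≤ b)]; ring,
        binom_natnat (b-n) b, Nat.choose_eq_zero_of_lt (by omega : b - n < b)]
      simp
  rw [hs, Finset.sum_map]
  apply Finset.sum_congr rfl
  intro b hb
  simp only [Function.Embedding.coeFn_mk]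
  exact hterm b (by simpa using hb)

/-- Finite difference lemma. -/
lemma diffL (M : ℕ) : ∀ a c : ℕ, M ≤ c →
    ∑ i ∈ range (M+1), (-1:ℤ)^i * (M.choose i) * ((a+i).choose c) =
      (-1:ℤ)^M * (a.choose (c - M)) := by
  induction M with
  | zero => intro a c _; simp
  | succ M ih =>
    intro a c hMc
    have hM : M ≤ c := Nat.le_of_succ_le hMc
    have IH1 := ih a c hM
    have IH2 := ih (a+1) c hM
    have hsplit : ∀ i ∈ range (M+1),
        (-1:ℤ)^(i+1) * (((M+1).choose (i+1) : ℕ) : ℤ) * (((a+(i+1)).choose c : ℕ) : ℤ)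
        = ((-1:ℤ)^(i+1) * ((M.choose (i+1) : ℕ) : ℤ) * (((a+(i+1)).choose c : ℕ) : ℤ))
          - ((-1:ℤ)^i * ((M.choose i : ℕ) : ℤ) * (((a+1+i).choose c : ℕ) : ℤ)) := by
      intro i _
      rw [Nat.choose_succ_succ, show a+1+i = a+(i+1) by omega]
      push_cast
      ring
    have hA : ∑ i ∈ range (M+1), (-1:ℤ)^i * (M.choose i) * ((a+i).choose c)
        = (∑ i ∈ range (M+1), (-1:ℤ)^(i+1) * (M.choose (i+1)) * ((a+(i+1)).choose c))
          + (-1:ℤ)^0 * ((M.choose 0 : ℕ) : ℤ) * ((a+0).choose c) := by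
      rw [← Finset.sum_range_succ' (fun i => (-1:ℤ)^i * (M.choose i) * ((a+i).choose c)) (M+1),
        Finset.sum_range_succ _ (M+1)]
      simp
    rw [Finset.sum_range_succ' (fun i => (-1:ℤ)^i * ((M+1).choose i) * ((a+i).choose c)) (M+1)]
    rw [Finset.sum_congr rfl hsplit, Finset.sum_sub_distrib]
    have hB : ∑ i ∈ range (M+1), (-1:ℤ)^(i+1) * (M.choose (i+1)) * ((a+(i+1)).choose c)
        = (-1:ℤ)^M * (a.choose (c - M)) - (-1:ℤ)^0 * ((M.choose 0 : ℕ) : ℤ) * ((a+0).choose c) := by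
      rw [← IH1, hA]; ring
    rw [hB, IH2]
    have hpas : ((a+1).choose (c - M) : ℤ) = (a.choose (c - (M+1)) : ℤ) + (a.choose (c - M) : ℤ) := by
      rw [show c - M = (c - (M+1)) + 1 by omega, Nat.choose_succ_succ]
      push_cast; ring
    rw [hpas]
    simp
    ring

lemma L2 (N j : ℕ) (hj : j ≤ N) :
    ∑ k ∈ range (N+1), (-1:ℤ)^k * (N.choose k) * ((N+k).choose k) * (k.choose j)
      = (-1:ℤ)^N * (N.choose j) * ((N+j).choose j) := by
  have hsub : Ico j (N+1) ⊆ range (N+1) := by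
    intro x hx; simp only [mem_Ico] at hx; simp only [mem_range]; omega
  rw [← Finset.sum_subset hsub (by
    intro x hx hxn
    simp only [mem_range] at hx
    simp only [mem_Ico] at hxn
    rw [Nat.choose_eq_zero_of_lt (by omega : x < j)]
    simp)]
  rw [Finset.sum_Ico_eq_sum_range, show N + 1 - j = (N - j) + 1 by omega]
  have hcongr : ∀ i ∈ range ((N-j)+1),
      (-1:ℤ)^(j+i) * (N.choose (j+i)) * ((N+(j+i)).choose (j+i)) * ((j+i).choose j)
      = ((-1:ℤ)^j * (N.choose j)) * ((-1:ℤ)^i * ((N-j).choose i) * (((N+j)+i).choose N)) := by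
    intro i hi
    simp only [mem_range] at hi
    have hiN : j + i ≤ N := by omega
    have h1 : (N.choose (j+i)) * ((j+i).choose j) = N.choose j * ((N-j).choose i) := by
      have := Nat.choose_mul (n := N) (Nat.le_add_right j i)
      simpa using this
    have h2 : (N+(j+i)).choose (j+i) = ((N+j)+i).choose N := by
      rw [show (N+j)+i = N+(j+i) by omega,
        ← Nat.choose_symm (Nat.le_add_left (j+i) N)]
      congr 1; omega
    have h1' : ((N.choose (j+i) : ℕ):ℤ) * (((j+i).choose j : ℕ):ℤ)
        = ((N.choose j : ℕ):ℤ) * (((N-j).choose i : ℕ):ℤ) := by exact_mod_cast congrArg Nat.cast h1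
    rw [h2, pow_add]
    linear_combination ((-1:ℤ)^j * (-1:ℤ)^i * ((((N+j)+i).choose N : ℕ):ℤ)) * h1'
  rw [Finset.sum_congr rfl hcongr, ← Finset.mul_sum,
    diffL (N-j) (N+j) N (by omega), show N - (N-j) = j by omega]
  have hs : (-1:ℤ)^j * (-1:ℤ)^(N-j) = (-1:ℤ)^N := by
    rw [← pow_add, show j + (N-j) = N by omega]
  linear_combination ((N.choose j : ℤ) * (((N+j).choose j : ℕ):ℤ)) * hs

lemma L3 (N k : ℕ) (hk : k ≤ N) :
    (((N+k).choose k : ℕ) : ℤ) = ∑ j ∈ range (N+1), ((N.choose j : ℕ):ℤ) * ((k.choose j : ℕ):ℤ) := by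
  have h : (N+k).choose k = ∑ j ∈ range (k+1), N.choose j * k.choose (k - j) := by
    rw [Nat.add_choose_eq]
    exact Finset.Nat.sum_antidiagonal_eq_sum_range_succ (fun i j => N.choose i * k.choose j) k
  have h2 : ∑ j ∈ range (k+1), N.choose j * k.choose (k-j)
      = ∑ j ∈ range (k+1), N.choose j * k.choose j := by
    apply Finset.sum_congr rfl; intro j hj; simp only [mem_range] at hj
    rw [Nat.choose_symm (by omega)]
  have h3 : ∑ j ∈ range (N+1), N.choose j * k.choose j
      = ∑ j ∈ range (k+1), N.choose j * k.choose j := by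
    symm
    apply Finset.sum_subset (by intro x hx; simp only [mem_range] at *; omega)
    intro x hx hxn; simp only [mem_range] at hx hxn
    rw [Nat.choose_eq_zero_of_lt (by omega : k < x)]
    simp
  rw [h, h2, ← h3]
  push_cast
  rfl

lemma keyId (N : ℕ) :
    ∑ k ∈ range (N+1), ((-1:ℤ)^k * (((N+k).choose k : ℕ):ℤ)^2 * ((N.choose k : ℕ):ℤ))
      = (-1:ℤ)^N * ∑ k ∈ range (N+1), ((N.choose k : ℕ):ℤ)^2 * (((N+k).choose k : ℕ):ℤ) := by
  have step1 : ∀ k ∈ range (N+1),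
      (-1:ℤ)^k * (((N+k).choose k : ℕ):ℤ)^2 * ((N.choose k : ℕ):ℤ)
      = ∑ j ∈ range (N+1), ((N.choose j : ℕ):ℤ) *
          ((-1:ℤ)^k * ((N.choose k : ℕ):ℤ) * (((N+k).choose k : ℕ):ℤ) * ((k.choose j : ℕ):ℤ)) := by
    intro k hk; simp only [mem_range] at hk
    rw [show (-1:ℤ)^k * (((N+k).choose k : ℕ):ℤ)^2 * ((N.choose k : ℕ):ℤ)
      = ((-1:ℤ)^k * ((N.choose k : ℕ):ℤ) * (((N+k).choose k : ℕ):ℤ)) * (((N+k).choose k : ℕ):ℤ) by ring]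
    nth_rewrite 2 [L3 N k (by omega)]
    rw [Finset.mul_sum]
    apply Finset.sum_congr rfl; intro j _; ring
  rw [Finset.sum_congr rfl step1, Finset.sum_comm]
  have step2 : ∀ j ∈ range (N+1),
      (∑ k ∈ range (N+1), ((N.choose j : ℕ):ℤ) *
        ((-1:ℤ)^k * ((N.choose k : ℕ):ℤ) * (((N+k).choose k : ℕ):ℤ) * ((k.choose j : ℕ):ℤ)))
      = ((N.choose j : ℕ):ℤ) * ((-1:ℤ)^N * ((N.choose j : ℕ):ℤ) * (((N+j).choose j : ℕ):ℤ)) := by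
    intro j hj; simp only [mem_range] at hj
    rw [← Finset.mul_sum, L2 N j (by omega)]
  rw [Finset.sum_congr rfl step2, Finset.mul_sum]
  apply Finset.sum_congr rfl; intro j _; ring

/-- The reflection identity `B(-n) = (-1)^{n-1} B(n-1)` for `n > 0`. -/
theorem stmt11 (n : ℤ) (hn : 0 < n) : B (-n) = (-1 : ℤ) ^ (n - 1).toNat * B (n - 1) := by
  obtain ⟨m, rfl⟩ := Int.eq_ofNat_of_zero_le hn.le
  have hm : 0 < m := by exact_mod_cast hn
  have h1 : ((m:ℤ) - 1) = ((m - 1 : ℕ):ℤ) := by push_cast [Nat.cast_sub hm]; ring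
  have h2 : ((m:ℤ) - 1).toNat = m - 1 := by omega
  rw [h2, h1, Bneg m hm, Bnat (m-1)]
  have := keyId (m-1)
  simp only [show m-1+1 = m by omega] at this ⊢
  exact this
end

section
/- Let d ≥ 1 and let H be the multiplicative inverse, in the ring of formal power series ℤ[[x1, …, xd]], of the polynomial (1 - x1)(1 - x2)···(1 - xd) - x1·x2···xd. Then for every n = (n1, …, nd) ∈ ℕ^d, the coefficient of x1^{n1}···xd^{nd} in H equals Y_d(n) = Σ_{k=0}^{min(n1, …, nd)} C(n1, k)·C(n2, k)···C(nd, k), where C denotes the usual binomial coefficient. -/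
open Finset MvPowerSeries

section Aux
variable {d : ℕ}

lemma pascalZ (a k : ℕ) (ha : 1 ≤ a) :
    -(((a - 1).choose (k + 1) : ℤ)) + (a.choose (k + 1) : ℤ) = ((a - 1).choose k : ℤ) := by
  obtain ⟨b, rfl⟩ := Nat.exists_eq_add_of_le ha
  have h1 : 1 + b - 1 = b := by omega
  have h2 : 1 + b = b + 1 := by omega
  rw [h1, h2, Nat.choose_succ_succ]
  push_cast; ring

lemma split_prod (m : Fin d →₀ ℕ) (T t : Finset (Fin d)) (ht : t ⊆ T)
    (ind : Finset (Fin d) → (Fin d →₀ ℕ))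
    (hind : ∀ S j, ind S j = if j ∈ S then 1 else 0) (k : ℕ) :
    ((-1 : ℤ))^t.card * ∏ i : Fin d, (((m i - ind t i).choose k : ℤ))
      = ((∏ i ∈ t, -(((m i - 1).choose k : ℤ))) * ∏ i ∈ T \ t, ((m i).choose k : ℤ))
          * ∏ i ∈ univ \ T, ((m i).choose k : ℤ) := by
  classical
  have hsets : (univ : Finset (Fin d)) \ t = (T \ t) ∪ (univ \ T) := by
    ext i; simp only [mem_sdiff, mem_union, mem_univ, true_and]
    constructor
    · intro h; by_cases hi : i ∈ T
      · exact Or.inl ⟨hi, h⟩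
      · exact Or.inr hi
    · rintro (⟨_, h⟩ | h)
      · exact h
      · exact fun hit => h (ht hit)
  have hdisj : Disjoint (T \ t) ((univ : Finset (Fin d)) \ T) := by
    rw [Finset.disjoint_left]; intro i hi hi'
    exact (mem_sdiff.1 hi').2 (mem_sdiff.1 hi).1
  rw [← Finset.prod_sdiff (subset_univ t)]
  have h1 : ∏ i ∈ t, ((m i - ind t i).choose k : ℤ) = ∏ i ∈ t, ((m i - 1).choose k : ℤ) :=
    Finset.prod_congr rfl fun i hi => by rw [hind, if_pos hi]
  have h2 : ∏ i ∈ univ \ t, ((m i - ind t i).choose k : ℤ)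
      = ∏ i ∈ univ \ t, ((m i).choose k : ℤ) :=
    Finset.prod_congr rfl fun i hi => by rw [hind, if_neg (mem_sdiff.1 hi).2, Nat.sub_zero]
  have h3 : ∏ i ∈ t, -(((m i - 1).choose k : ℤ))
      = ((-1 : ℤ))^t.card * ∏ i ∈ t, ((m i - 1).choose k : ℤ) := by
    simp only [neg_eq_neg_one_mul ((_ : ℕ) : ℤ)]
    rw [Finset.prod_mul_distrib, prod_const]
  rw [h1, h2, hsets, Finset.prod_union hdisj, h3]
  ring

variable {d : ℕ}

lemma aux_min_exists [Nonempty (Fin d)] (p : Fin d → ℕ) : ∃ i0, (⨅ i, p i) = p i0 := by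
  obtain ⟨i0, hi0⟩ := Finite.exists_min p
  exact ⟨i0, le_antisymm (ciInf_le (OrderBot.bddBelow _) i0) (le_ciInf hi0)⟩

lemma aux_ext [Nonempty (Fin d)] (p : Fin d → ℕ) (N : ℕ) (hN : (⨅ i, p i) + 1 ≤ N) :
    ∑ k ∈ range N, ∏ i, ((p i).choose k : ℤ)
      = ∑ k ∈ range ((⨅ i, p i) + 1), ∏ i, ((p i).choose k : ℤ) := by
  apply (Finset.sum_subset (range_subset_range.2 hN) ?_).symm
  intro k hk hk'
  obtain ⟨i0, hi0⟩ := aux_min_exists p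
  apply Finset.prod_eq_zero (mem_univ i0)
  rw [Nat.choose_eq_zero_of_lt]
  · simp
  · simp only [mem_range, not_lt] at hk hk'; omega

lemma aux_prod_monomial (S : Finset (Fin d)) (f : Fin d → (Fin d →₀ ℕ)) (a : Fin d → ℤ) :
    ∏ i ∈ S, monomial (f i) (a i) = monomial (∑ i ∈ S, f i) (∏ i ∈ S, a i) := by
  induction S using Finset.cons_induction with
  | empty => simp [monomial_zero_one]
  | cons i S hi ih => rw [prod_cons, ih, monomial_mul_monomial, sum_cons, prod_cons]

noncomputable def ind (S : Finset (Fin d)) : Fin d →₀ ℕ := ∑ i ∈ S, Finsupp.single i 1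

lemma ind_apply (S : Finset (Fin d)) (j : Fin d) : ind S j = if j ∈ S then 1 else 0 := by
  classical
  simp [ind, Finsupp.finset_sum_apply, Finsupp.single_apply, Finset.sum_ite_eq' S j (fun _ => 1)]

lemma ind_le_iff (S : Finset (Fin d)) (m : Fin d →₀ ℕ) :
    ind S ≤ m ↔ ∀ i ∈ S, 1 ≤ m i := by
  classical
  rw [Finsupp.le_def]
  constructor
  · intro h i hi; have := h i; rwa [ind_apply, if_pos hi] at this
  · intro h i; rw [ind_apply]; split
    · exact h i ‹_›
    · exact Nat.zero_le _

noncomputable def Yser (d : ℕ) : MvPowerSeries (Fin d) ℤ :=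
  fun m => ∑ k ∈ range ((⨅ i, m i) + 1), ∏ i, ((m i).choose k : ℤ)

lemma coeff_Yser (m : Fin d →₀ ℕ) :
    coeff m (Yser d) = ∑ k ∈ range ((⨅ i, m i) + 1), ∏ i, ((m i).choose k : ℤ) := rfl

lemma key (d : ℕ) (hd : 1 ≤ d) :
    ((∏ i : Fin d, (1 - X i)) - ∏ i : Fin d, X i) * Yser d = 1 := by
  classical
  haveI : Nonempty (Fin d) := Fin.pos_iff_nonempty.1 hd
  have hXprod : (∏ i : Fin d, (X i : MvPowerSeries (Fin d) ℤ)) = monomial (ind univ) 1 := by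
    simp only [X_def]
    rw [aux_prod_monomial, prod_const_one]; rfl
  have hprod : (∏ i : Fin d, (1 - X i) : MvPowerSeries (Fin d) ℤ)
      = ∑ t ∈ (univ : Finset (Fin d)).powerset, monomial (ind t) ((-1 : ℤ)^t.card) := by
    have h1 : ∀ i : Fin d, (1 - X i : MvPowerSeries (Fin d) ℤ)
        = monomial (Finsupp.single i 1) (-1) + 1 := by
      intro i
      rw [X_def, sub_eq_neg_add, ← map_neg (monomial (R := ℤ) (Finsupp.single i 1))]
    calc (∏ i : Fin d, (1 - X i) : MvPowerSeries (Fin d) ℤ)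
        = ∏ i : Fin d, (monomial (Finsupp.single i 1) (-1) + 1) := by
          exact Finset.prod_congr rfl fun i _ => h1 i
      _ = ∑ t ∈ (univ : Finset (Fin d)).powerset,
            (∏ i ∈ t, monomial (Finsupp.single i 1) (-1)) * ∏ _i ∈ univ \ t, 1 := by
          exact Finset.prod_add _ _ _
      _ = ∑ t ∈ (univ : Finset (Fin d)).powerset, monomial (ind t) ((-1 : ℤ)^t.card) := by
          refine Finset.sum_congr rfl fun t _ => ?_
          rw [prod_const_one, mul_one, aux_prod_monomial, prod_const]; rfl
  apply MvPowerSeries.ext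
  intro m
  rw [sub_mul, map_sub, hprod, hXprod, Finset.sum_mul, map_sum]
  simp only [coeff_monomial_mul, one_mul]

  set T : Finset (Fin d) := univ.filter (fun i => 1 ≤ m i) with hTdef
  set N : ℕ := (⨅ i, m i) + 1 with hNdef
  have hsub : T.powerset ⊆ (univ : Finset (Fin d)).powerset := powerset_mono.2 (subset_univ T)
  have hzero : ∀ t ∈ (univ : Finset (Fin d)).powerset, t ∉ T.powerset →
      (if ind t ≤ m then ((-1:ℤ))^t.card * coeff (m - ind t) (Yser d) else 0) = 0 := by
    intro t _ ht
    rw [if_neg]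
    intro hle
    apply ht
    rw [mem_powerset]
    intro i hi
    rw [hTdef, mem_filter]
    exact ⟨mem_univ i, (ind_le_iff t m).1 hle i hi⟩
  rw [← Finset.sum_subset hsub hzero]
  have hstep : ∀ t ∈ T.powerset,
      (if ind t ≤ m then ((-1:ℤ))^t.card * coeff (m - ind t) (Yser d) else 0)
        = ∑ k ∈ range N, ((∏ i ∈ t, -(((m i - 1).choose k : ℤ)))
            * ∏ i ∈ T \ t, ((m i).choose k : ℤ)) * ∏ i ∈ univ \ T, ((m i).choose k : ℤ) := by
    intro t ht
    rw [mem_powerset] at ht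
    have hle : ind t ≤ m := (ind_le_iff t m).2 fun i hi => (mem_filter.1 (ht hi)).2
    rw [if_pos hle, coeff_Yser]
    have hinf : (⨅ i, (m - ind t) i) + 1 ≤ N := by
      rw [hNdef]
      have : (⨅ i, (m - ind t) i) ≤ ⨅ i, m i :=
        ciInf_mono (OrderBot.bddBelow _) fun j => by rw [Finsupp.tsub_apply]; omega
      omega
    rw [← aux_ext _ N hinf, Finset.mul_sum]
    refine Finset.sum_congr rfl fun k _ => ?_
    have := split_prod m T t ht ind ind_apply k
    simp only [Finsupp.tsub_apply] at *
    rw [← this]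
  rw [Finset.sum_congr rfl hstep, Finset.sum_comm]
  have hfact : ∀ k ∈ range N,
      (∑ t ∈ T.powerset, ((∏ i ∈ t, -(((m i - 1).choose k : ℤ)))
            * ∏ i ∈ T \ t, ((m i).choose k : ℤ)) * ∏ i ∈ univ \ T, ((m i).choose k : ℤ))
        = (∏ i ∈ T, (-(((m i - 1).choose k : ℤ)) + ((m i).choose k : ℤ)))
            * ∏ i ∈ univ \ T, ((m i).choose k : ℤ) := by
    intro k _
    rw [← Finset.sum_mul, ← Finset.prod_add]
  rw [Finset.sum_congr rfl hfact]
  by_cases hT : T = univ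
  · -- all coordinates positive
    have hall : ∀ i, 1 ≤ m i := by
      intro i
      have hiT : i ∈ T := by rw [hT]; exact mem_univ i
      rw [hTdef, mem_filter] at hiT
      exact hiT.2
    have hinf1 : 1 ≤ ⨅ i, m i := le_ciInf hall
    have hm0 : m ≠ 0 := by
      intro h
      have := hall (Classical.arbitrary (Fin d))
      rw [h] at this; simp at this
    have hle : ind univ ≤ m := (ind_le_iff _ m).2 fun i _ => hall i
    rw [if_pos hle, MvPowerSeries.coeff_one, if_neg hm0, hT]
    simp only [Finset.sdiff_self, Finset.prod_empty, mul_one]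
    have hme : ∀ i, ((m - ind univ : Fin d →₀ ℕ)) i = m i - 1 := fun i => by
      rw [Finsupp.tsub_apply, ind_apply, if_pos (mem_univ i)]
    have hrw : ∀ kk, ∏ i, ((((m - ind univ : Fin d →₀ ℕ)) i).choose kk : ℤ) = ∏ i, ((m i - 1).choose kk : ℤ) :=
      fun kk => Finset.prod_congr rfl fun i _ => by rw [hme]
    have hinf2 : (⨅ i, ((m - ind univ : Fin d →₀ ℕ)) i) + 1 ≤ ⨅ i, m i := by
      obtain ⟨i0, hi0⟩ := aux_min_exists (fun i => m i)
      have h1 : (⨅ i, ((m - ind univ : Fin d →₀ ℕ)) i) ≤ m i0 - 1 := by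
        have := ciInf_le (OrderBot.bddBelow _) (f := fun i => ((m - ind univ : Fin d →₀ ℕ)) i) i0
        rwa [hme] at this
      omega
    have e1 : coeff (m - ind univ) (Yser d)
        = ∑ k ∈ range (⨅ i, m i), ∏ i, ((m i - 1).choose k : ℤ) := by
      rw [coeff_Yser]
      have h := aux_ext (fun i => ((m - ind univ : Fin d →₀ ℕ)) i) (⨅ i, m i) hinf2
      beta_reduce at h
      rw [← h]
      exact Finset.sum_congr rfl fun k _ => hrw k
    rw [e1, hNdef, Finset.sum_range_succ']
    have hz : (∏ i : Fin d, (-(((m i - 1).choose 0 : ℤ)) + ((m i).choose 0 : ℤ))) = 0 := by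
      apply Finset.prod_eq_zero (mem_univ (Classical.arbitrary (Fin d)))
      simp
    rw [hz, add_zero]
    have hp : ∀ j ∈ range (⨅ i, m i),
        (∏ i : Fin d, (-(((m i - 1).choose (j+1) : ℤ)) + ((m i).choose (j+1) : ℤ)))
          = ∏ i : Fin d, ((m i - 1).choose j : ℤ) := fun j _ =>
      Finset.prod_congr rfl fun i _ => pascalZ (m i) j (hall i)
    rw [Finset.sum_congr rfl hp, sub_self]
  · have hex0 : ∃ i0, i0 ∉ T := by
      by_contra h
      push_neg at h
      exact hT (Finset.eq_univ_iff_forall.2 h)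
    obtain ⟨i0, hi0⟩ := hex0
    have hm0i : m i0 = 0 := by
      by_contra h
      exact hi0 (by rw [hTdef]; exact mem_filter.2 ⟨mem_univ _, by omega⟩)
    have hnle : ¬ ind univ ≤ m := by
      intro h
      have := (ind_le_iff univ m).1 h i0 (mem_univ i0)
      omega
    rw [if_neg hnle, sub_zero, MvPowerSeries.coeff_one]
    have hsum : ∑ k ∈ range N,
        (∏ i ∈ T, (-(((m i - 1).choose k : ℤ)) + ((m i).choose k : ℤ)))
          * ∏ i ∈ univ \ T, ((m i).choose k : ℤ)
        = (∏ i ∈ T, (-(((m i - 1).choose 0 : ℤ)) + ((m i).choose 0 : ℤ)))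
          * ∏ i ∈ univ \ T, ((m i).choose 0 : ℤ) := by
      apply Finset.sum_eq_single_of_mem 0 (mem_range.2 (by omega))
      intro k _ hk
      apply mul_eq_zero_of_right
      apply Finset.prod_eq_zero (mem_sdiff.2 ⟨mem_univ i0, hi0⟩)
      rw [hm0i, Nat.choose_eq_zero_of_lt (by omega)]
      simp
    rw [hsum]
    by_cases hm : m = 0
    · rw [if_pos hm]
      have hme : ∀ i, m i = 0 := fun i => by rw [hm]; rfl
      have hTe : T = ∅ := by
        rw [hTdef, Finset.filter_eq_empty_iff]
        intro i _
        rw [hme i]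
        omega
      rw [hTe]
      simp
    · rw [if_neg hm]
      have hex : ∃ i1, m i1 ≠ 0 := by
        by_contra h
        push_neg at h
        exact hm (Finsupp.ext fun i => h i)
      obtain ⟨i1, hi1⟩ := hex
      apply mul_eq_zero_of_left
      apply Finset.prod_eq_zero
        (show i1 ∈ T by rw [hTdef]; exact mem_filter.2 ⟨mem_univ _, by omega⟩)
      simp


end Aux

/-- The Taylor coefficients of the inverse of `(1-x₁)(1-x₂)⋯(1-x_d) - x₁x₂⋯x_d` are
`Y_d(n₁,…,n_d) = ∑_{k=0}^{min nᵢ} C(n₁,k) C(n₂,k) ⋯ C(n_d,k)`. -/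
theorem stmt12 (d : ℕ) (hd : 1 ≤ d) (H : MvPowerSeries (Fin d) ℤ)
    (hH : ((∏ i : Fin d, (1 - MvPowerSeries.X i)) - ∏ i : Fin d, MvPowerSeries.X i) * H = 1)
    (n : Fin d → ℕ) :
    MvPowerSeries.coeff (Finsupp.equivFunOnFinite.symm n) H =
      ∑ k ∈ Finset.range ((⨅ i, n i) + 1), ∏ i : Fin d, ((n i).choose k : ℤ) := by
  have hY := key d hd
  have hHY : H = Yser d := by
    calc H = 1 * H := (one_mul H).symm
      _ = (((∏ i : Fin d, (1 - X i)) - ∏ i : Fin d, X i) * Yser d) * H := by rw [hY]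
      _ = (((∏ i : Fin d, (1 - X i)) - ∏ i : Fin d, X i) * H) * Yser d := by ring
      _ = 1 * Yser d := by rw [hH]
      _ = Yser d := one_mul _
  rw [hHY, coeff_Yser]
  rfl
end

section
/- For d ≥ 2 and n = (n1, …, nd) ∈ ℕ^d define Y_d(n) = Σ_{k=0}^{min(n1, …, nd)} C(n1, k)·C(n2, k)···C(nd, k), where C denotes the usual binomial coefficient. Then for every prime p ≥ 5 and every integer r ≥ 1, Y_d(p^r·n) ≡ Y_d(p^{r-1}·n) (mod p^{3r}). -/
open Finset

/-- `Y_d(n) = ∑_{k=0}^{min nᵢ} ∏ᵢ C(nᵢ,k)`, as an integer. -/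
noncomputable def Y (d : ℕ) (n : Fin d → ℕ) : ℤ :=
  ∑ k ∈ Finset.range ((⨅ i, n i) + 1), ∏ i : Fin d, ((n i).choose k : ℤ)

namespace Aux13

/-- indices in `[0, p*b)` not divisible by `p` -/
def U (p b : ℕ) : Finset ℕ := (Finset.range (p*b)).filter (fun i => ¬ p ∣ i)

/-- product of indices prime to `p` below `p*b` -/
def F (p b : ℕ) : ℕ := ∏ i ∈ U p b, i

lemma mem_U {p b i : ℕ} : i ∈ U p b ↔ i < p * b ∧ ¬ p ∣ i := by
  simp [U]

lemma F_pos {p b : ℕ} (hp : 0 < p) : 0 < F p b := by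
  apply Finset.prod_pos
  intro i hi
  rcases mem_U.1 hi with ⟨_, h2⟩
  rcases Nat.eq_zero_or_pos i with h | h
  · exact absurd (h ▸ dvd_zero p) h2
  · exact h

lemma not_p_dvd_F {p b : ℕ} (hp : p.Prime) : ¬ p ∣ F p b := by
  intro h
  rcases (Nat.Prime.prime hp).dvd_finset_prod_iff id |>.1 h with ⟨i, hi, hdvd⟩
  exact (mem_U.1 hi).2 hdvd

lemma step_filter (p n : ℕ) (hp : 0 < p) :
    (Finset.Ico (p*n) (p*n+p)).filter (fun i => ¬ p ∣ i) = Finset.Ico (p*n+1) (p*n+p) := by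
  ext i
  simp only [Finset.mem_filter, Finset.mem_Ico]
  constructor
  · rintro ⟨⟨h1, h2⟩, h3⟩
    rcases eq_or_lt_of_le h1 with h | h
    · exact absurd (h ▸ Dvd.intro n rfl) h3
    · exact ⟨by omega, h2⟩
  · rintro ⟨h1, h2⟩
    refine ⟨⟨by omega, h2⟩, ?_⟩
    rintro ⟨k, rfl⟩
    have hk1 : n < k := lt_of_mul_lt_mul_left (by omega) (Nat.zero_le p)
    have hk2 : k < n + 1 := lt_of_mul_lt_mul_left (by
      calc p * k < p*n + p := h2
      _ = p * (n+1) := by ring) (Nat.zero_le p)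
    omega

lemma U_succ (p n : ℕ) (hp : 0 < p) :
    U p (n+1) = U p n ∪ Finset.Ico (p*n+1) (p*n+p) := by
  unfold U
  rw [show p*(n+1) = p*n + p by ring, Finset.range_eq_Ico,
    ← Finset.Ico_union_Ico_eq_Ico (Nat.zero_le (p*n)) (Nat.le_add_right _ _),
    Finset.filter_union, ← Finset.range_eq_Ico, step_filter p n hp]

lemma F_succ (p n : ℕ) (hp : 0 < p) :
    F p (n+1) = F p n * ∏ i ∈ Finset.Ico (p*n+1) (p*n+p), i := by
  unfold F
  rw [U_succ p n hp, Finset.prod_union]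
  rw [Finset.disjoint_left]
  intro i hi1 hi2
  rcases mem_U.1 hi1 with ⟨h1, _⟩
  rw [Finset.mem_Ico] at hi2
  omega

lemma factorial_eq (p : ℕ) (hp : 0 < p) (n : ℕ) :
    Nat.factorial (p*n) = p^n * Nat.factorial n * F p n := by
  induction n with
  | zero => simp [F, U]
  | succ n ih =>
    have h1 : (∏ x ∈ Finset.Ico 1 (p*n + p + 1), x) = Nat.factorial (p*n+p) :=
      Finset.prod_Ico_id_eq_factorial _
    have h2 : (∏ x ∈ Finset.Ico 1 (p*n + 1), x) = Nat.factorial (p*n) :=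
      Finset.prod_Ico_id_eq_factorial _
    have h3 : (∏ x ∈ Finset.Ico 1 (p*n+1), x) * ∏ x ∈ Finset.Ico (p*n+1) (p*n+p+1), x
        = ∏ x ∈ Finset.Ico 1 (p*n+p+1), x :=
      Finset.prod_Ico_consecutive _ (by omega) (by omega)
    have h4 : (∏ x ∈ Finset.Ico (p*n+1) (p*n+p+1), x)
        = (∏ x ∈ Finset.Ico (p*n+1) (p*n+p), x) * (p*n+p) :=
      Finset.prod_Ico_succ_top (by omega) _
    have h5 : p*(n+1) = p*n + p := by ring
    rw [h5, ← h1, ← h3, h2, h4, F_succ p n hp, ih, Nat.factorial_succ]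
    ring



lemma F_add (p : ℕ) (hp : 0 < p) (b c : ℕ) :
    F p (c + b) = F p c * ∏ i ∈ U p b, (p*c + i) := by
  unfold F U
  have key : ∀ s : Finset ℕ, ∀ f : ℕ → ℕ, (∏ i ∈ s.filter (fun i => ¬ p ∣ i), f i)
      = ∏ i ∈ s, if ¬ p ∣ i then f i else 1 := fun s f => Finset.prod_filter _ _
  rw [key, key, key, show p*(c+b) = p*c + p*b by ring, Finset.prod_range_add]
  congr 1
  apply Finset.prod_congr rfl
  intro i _
  have : (¬ p ∣ (p*c + i)) ↔ (¬ p ∣ i) := by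
    constructor
    · intro h hi; exact h (Dvd.dvd.add (Dvd.intro c rfl) hi)
    · intro h hi
      have : p ∣ i := (Nat.dvd_add_right (Dvd.intro c rfl)).1 hi
      exact h this
  simp only [this]

lemma keyid (p : ℕ) (hp : 0 < p) (b c : ℕ) :
    (p*(b+c)).choose (p*b) * F p b = (b+c).choose b * ∏ i ∈ U p b, (p*c + i) := by
  have e1 : (p*(b+c)).choose (p*b) * Nat.factorial (p*b) * Nat.factorial (p*c)
      = Nat.factorial (p*(b+c)) := by
    have h := Nat.choose_mul_factorial_mul_factorial
      (show p*b ≤ p*(b+c) from Nat.mul_le_mul_left p (by omega))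
    rwa [show p*(b+c) - p*b = p*c by rw [Nat.mul_add]; omega] at h
  have e2 : (b+c).choose b * Nat.factorial b * Nat.factorial c = Nat.factorial (b+c) := by
    have h := Nat.choose_mul_factorial_mul_factorial (show b ≤ b+c by omega)
    rwa [show b+c - b = c by omega] at h
  have e3 := factorial_eq p hp (b+c)
  have e4 := factorial_eq p hp b
  have e5 := factorial_eq p hp c
  have e6 := F_add p hp b c
  rw [show c + b = b + c by ring] at e6
  have main : ((p*(b+c)).choose (p*b) * F p b) * (p^(b+c) * Nat.factorial b * Nat.factorial c * F p c)
      = ((b+c).choose b * ∏ i ∈ U p b, (p*c + i)) * (p^(b+c) * Nat.factorial b * Nat.factorial c * F p c) := by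
    calc ((p*(b+c)).choose (p*b) * F p b) * (p^(b+c) * Nat.factorial b * Nat.factorial c * F p c)
        = ((p*(b+c)).choose (p*b)) * (p^b * Nat.factorial b * F p b) * (p^c * Nat.factorial c * F p c) := by
          rw [show (p:ℕ)^(b+c) = p^b * p^c from pow_add p b c]; ring
      _ = ((p*(b+c)).choose (p*b)) * Nat.factorial (p*b) * Nat.factorial (p*c) := by
          rw [← e4, ← e5]
      _ = Nat.factorial (p*(b+c)) := e1
      _ = p^(b+c) * Nat.factorial (b+c) * F p (b+c) := e3
      _ = p^(b+c) * ((b+c).choose b * Nat.factorial b * Nat.factorial c) * (F p c * ∏ i ∈ U p b, (p*c + i)) := by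
          rw [← e2, ← e6]
      _ = ((b+c).choose b * ∏ i ∈ U p b, (p*c + i)) * (p^(b+c) * Nat.factorial b * Nat.factorial c * F p c) := by
          ring
  have hpos : 0 < p^(b+c) * Nat.factorial b * Nat.factorial c * F p c :=
    Nat.mul_pos (Nat.mul_pos (Nat.mul_pos (pow_pos hp _) (Nat.factorial_pos b))
      (Nat.factorial_pos c)) (F_pos hp)
  exact Nat.eq_of_mul_eq_mul_right hpos main

/-- reflection `i ↦ p*b - i` on `U p b` -/
lemma prod_reflect {M : Type*} [CommMonoid M] (p b : ℕ) (hp : 0 < p) (g : ℕ → M) :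
    ∏ i ∈ U p b, g i = ∏ i ∈ U p b, g (p*b - i) := by
  apply Finset.prod_nbij' (fun i => p*b - i) (fun i => p*b - i)
  · intro i hi
    rcases mem_U.1 hi with ⟨h1, h2⟩
    have h0 : 0 < i := by
      rcases Nat.eq_zero_or_pos i with rfl | h; · exact absurd (dvd_zero p) h2
      · assumption
    refine mem_U.2 ⟨by omega, ?_⟩
    intro hdvd
    have : p ∣ p*b - (p*b - i) := Nat.dvd_sub (Dvd.intro b rfl) hdvd
    rw [Nat.sub_sub_self (by omega)] at this
    exact h2 this
  · intro i hi
    rcases mem_U.1 hi with ⟨h1, h2⟩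
    have h0 : 0 < i := by
      rcases Nat.eq_zero_or_pos i with rfl | h; · exact absurd (dvd_zero p) h2
      · assumption
    refine mem_U.2 ⟨by omega, ?_⟩
    intro hdvd
    have : p ∣ p*b - (p*b - i) := Nat.dvd_sub (Dvd.intro b rfl) hdvd
    rw [Nat.sub_sub_self (by omega)] at this
    exact h2 this
  · intro i hi
    rcases mem_U.1 hi with ⟨h1, _⟩
    omega
  · intro i hi
    rcases mem_U.1 hi with ⟨h1, _⟩
    omega
  · intro i hi
    rcases mem_U.1 hi with ⟨h1, _⟩
    congr 1
    omega

/-- the squared identity over ℤ -/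
lemma sqid (p : ℕ) (hp : 0 < p) (b c : ℕ) :
    ((p*(b+c)).choose (p*b) : ℤ)^2 * ∏ i ∈ U p b, ((i : ℤ) * ((p*b : ℕ) - (i:ℤ)))
      = ((b+c).choose b : ℤ)^2 *
        ∏ i ∈ U p b, ((i:ℤ) * ((p*b : ℕ) - (i:ℤ)) + (p:ℤ)^2 * (b+c) * c) := by
  have hkey := keyid p hp b c
  have hkeyZ : ((p*(b+c)).choose (p*b) : ℤ) * (F p b : ℤ)
      = ((b+c).choose b : ℤ) * ∏ i ∈ U p b, ((p*c + i : ℕ) : ℤ) := by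
    exact_mod_cast congrArg (Nat.cast : ℕ → ℤ) hkey
  -- F² = ∏ i (pb - i)
  have hF2 : (F p b : ℤ)^2 = ∏ i ∈ U p b, ((i : ℤ) * ((p*b : ℕ) - (i:ℤ))) := by
    have h1 : (F p b : ℤ) = ∏ i ∈ U p b, (i : ℤ) := by
      unfold F; push_cast; rfl
    have h2 : (∏ i ∈ U p b, (i : ℤ)) = ∏ i ∈ U p b, ((p*b - i : ℕ) : ℤ) :=
      prod_reflect p b hp (fun i => (i : ℤ))
    rw [sq, h1]
    nth_rewrite 2 [h2]
    rw [← Finset.prod_mul_distrib]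
    apply Finset.prod_congr rfl
    intro i hi
    rcases mem_U.1 hi with ⟨hlt, _⟩
    rw [Nat.cast_sub (le_of_lt hlt)]
  -- (∏ (pc+i))² = ∏ (i(pb-i) + p² a c)
  have hP2 : (∏ i ∈ U p b, ((p*c + i : ℕ) : ℤ))^2
      = ∏ i ∈ U p b, ((i:ℤ) * ((p*b : ℕ) - (i:ℤ)) + (p:ℤ)^2 * (b+c) * c) := by
    have h2 : (∏ i ∈ U p b, ((p*c + i : ℕ) : ℤ))
        = ∏ i ∈ U p b, ((p*c + (p*b - i) : ℕ) : ℤ) :=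
      prod_reflect p b hp (fun i => ((p*c + i : ℕ) : ℤ))
    rw [sq]
    nth_rewrite 2 [h2]
    rw [← Finset.prod_mul_distrib]
    apply Finset.prod_congr rfl
    intro i hi
    rcases mem_U.1 hi with ⟨hlt, _⟩
    have hle : (i : ℤ) ≤ (p*b : ℕ) := by exact_mod_cast le_of_lt hlt
    push_cast [Nat.cast_sub (le_of_lt hlt)]
    ring
  calc ((p*(b+c)).choose (p*b) : ℤ)^2 * ∏ i ∈ U p b, ((i : ℤ) * ((p*b : ℕ) - (i:ℤ)))
      = (((p*(b+c)).choose (p*b) : ℤ) * (F p b : ℤ))^2 := by rw [mul_pow, hF2]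
    _ = (((b+c).choose b : ℤ) * ∏ i ∈ U p b, ((p*c + i : ℕ) : ℤ))^2 := by rw [hkeyZ]
    _ = ((b+c).choose b : ℤ)^2 * ∏ i ∈ U p b, ((i:ℤ) * ((p*b : ℕ) - (i:ℤ)) + (p:ℤ)^2 * (b+c) * c) := by
        rw [mul_pow, hP2]

/-- telescoping divisibility -/
lemma tele {ι : Type*} (s : Finset ι) (hs : s.Nonempty) (f g : ι → ℤ) (π : ℤ) (w E : ℕ)
    (hf : ∀ i ∈ s, π^w ∣ f i) (hg : ∀ i ∈ s, π^w ∣ g i)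
    (hfg : ∀ i ∈ s, π^E ∣ f i - g i) :
    π^(E + w*(s.card - 1)) ∣ (∏ i ∈ s, f i) - ∏ i ∈ s, g i := by
  classical
  induction hs using Finset.Nonempty.cons_induction with
  | singleton a => simpa using hfg a (Finset.mem_singleton_self a)
  | cons a s ha hne ih =>
    rw [Finset.prod_cons, Finset.prod_cons]
    have hcard : (Finset.cons a s ha).card - 1 = s.card := by
      rw [Finset.card_cons]; omega
    rw [hcard]
    have key : f a * ∏ i ∈ s, f i - g a * ∏ i ∈ s, g i
        = (f a - g a) * ∏ i ∈ s, f i + g a * ((∏ i ∈ s, f i) - ∏ i ∈ s, g i) := by ring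
    rw [key]
    have hmem : ∀ i ∈ s, i ∈ Finset.cons a s ha := fun i hi => Finset.mem_cons_of_mem hi
    have hamem : a ∈ Finset.cons a s ha := Finset.mem_cons_self a s
    apply dvd_add
    · -- (f a - g a) * ∏ f : E + w*card s
      have h1 : π^E ∣ f a - g a := hfg a hamem
      have h2 : π^(w * s.card) ∣ ∏ i ∈ s, f i := by
        have : (∏ _i ∈ s, π^w) ∣ ∏ i ∈ s, f i :=
          Finset.prod_dvd_prod_of_dvd _ _ (fun i hi => hf i (hmem i hi))
        simpa [Finset.prod_const, ← pow_mul] using this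
      have := mul_dvd_mul h1 h2
      rwa [← pow_add] at this
    · have h1 : π^w ∣ g a := hg a hamem
      have h2 : π^(E + w * (s.card - 1)) ∣ (∏ i ∈ s, f i) - ∏ i ∈ s, g i :=
        ih (fun i hi => hf i (hmem i hi)) (fun i hi => hg i (hmem i hi))
          (fun i hi => hfg i (hmem i hi))
      have h3 := mul_dvd_mul h1 h2
      rw [← pow_add] at h3
      refine dvd_trans (pow_dvd_pow π ?_) h3
      have hc1 : 1 ≤ s.card := Finset.card_pos.2 hne
      obtain ⟨c, hc⟩ : ∃ c, s.card = c + 1 := ⟨s.card - 1, by omega⟩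
      rw [hc, Nat.add_sub_cancel, Nat.mul_succ]
      omega

lemma sum_block {A : Type*} [AddCommMonoid A] (q : ℕ) (h : ℕ → A)
    (hper : ∀ i, h (q + i) = h i) (t : ℕ) :
    ∑ i ∈ Finset.range (q*t), h i = t • ∑ i ∈ Finset.range q, h i := by
  have hper' : ∀ s i, h (q*s + i) = h i := by
    intro s
    induction s with
    | zero => simp
    | succ s ihs =>
      intro i
      rw [show q*(s+1) + i = q + (q*s + i) by ring, hper, ihs]
  induction t with
  | zero => simp
  | succ t ih =>
    rw [show q*(t+1) = q*t + q by ring, Finset.sum_range_add, ih, succ_nsmul]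
    congr 1
    exact Finset.sum_congr rfl (fun i _ => hper' t i)

lemma Hlem (p mm : ℕ) (hp : p.Prime) (hp5 : 5 ≤ p) :
    ∑ i ∈ (Finset.range (p^(mm+1))).filter (fun i => ¬ p ∣ i),
      (Ring.inverse ((i : ZMod (p^(mm+1)))))^2 = 0 := by
  classical
  set q := p^(mm+1) with hq
  haveI : NeZero q := ⟨pow_ne_zero _ hp.pos.ne'⟩
  have hcop : ∀ i : ℕ, ¬ p ∣ i → Nat.Coprime i q := by
    intro i hi
    exact Nat.Coprime.pow_right _ ((hp.coprime_iff_not_dvd.2 hi).symm)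
  have step1 : ∑ i ∈ (Finset.range q).filter (fun i => ¬ p ∣ i), (Ring.inverse ((i : ZMod q)))^2
      = ∑ u : (ZMod q)ˣ, (Ring.inverse ((u : (ZMod q)ˣ) : ZMod q))^2 := by
    refine Finset.sum_bij' (i := fun a ha => ZMod.unitOfCoprime a
        (hcop a (Finset.mem_filter.1 ha).2))
      (j := fun u _ => (u : ZMod q).val) ?_ ?_ ?_ ?_ ?_
    · intro a ha; exact Finset.mem_univ _
    · intro u _
      refine Finset.mem_filter.2 ⟨Finset.mem_range.2 (ZMod.val_lt _), ?_⟩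
      intro hdvd
      have hcop2 := ZMod.val_coe_unit_coprime u
      have : p ∣ 1 := hcop2 ▸ Nat.dvd_gcd hdvd (dvd_pow_self p (Nat.succ_ne_zero mm))
      have := Nat.le_of_dvd one_pos this
      have := hp.two_le
      omega
    · intro a ha
      rw [ZMod.coe_unitOfCoprime, ZMod.val_natCast,
        Nat.mod_eq_of_lt (Finset.mem_range.1 (Finset.mem_filter.1 ha).1)]
    · intro u _
      apply Units.ext
      rw [ZMod.coe_unitOfCoprime]
      exact ZMod.natCast_rightInverse _
    · intro a ha
      rw [ZMod.coe_unitOfCoprime]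
  rw [step1]
  have step2 : ∑ u : (ZMod q)ˣ, (Ring.inverse ((u : (ZMod q)ˣ) : ZMod q))^2
      = ∑ u : (ZMod q)ˣ, (((u⁻¹ : (ZMod q)ˣ) : ZMod q))^2 :=
    Finset.sum_congr rfl (fun u _ => by rw [Ring.inverse_unit])
  have step3 : ∑ u : (ZMod q)ˣ, (((u⁻¹ : (ZMod q)ˣ) : ZMod q))^2
      = ∑ u : (ZMod q)ˣ, ((u : ZMod q))^2 :=
    Fintype.sum_bijective (fun u => u⁻¹) (Equiv.inv (ZMod q)ˣ).bijective _ _ (fun u => rfl)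
  rw [step2, step3]
  -- now kill S via multiplication by the unit 2
  have hp2 : ¬ p ∣ 2 := by intro h; have := Nat.le_of_dvd (by norm_num) h; omega
  have hp3 : ¬ p ∣ 3 := by intro h; have := Nat.le_of_dvd (by norm_num) h; omega
  set g2 : (ZMod q)ˣ := ZMod.unitOfCoprime 2 (hcop 2 hp2) with hg2
  set g3 : (ZMod q)ˣ := ZMod.unitOfCoprime 3 (hcop 3 hp3) with hg3
  have hg2c : (g2 : ZMod q) = 2 := by rw [hg2, ZMod.coe_unitOfCoprime]; norm_num
  have hg3c : (g3 : ZMod q) = 3 := by rw [hg3, ZMod.coe_unitOfCoprime]; norm_num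
  set S := ∑ u : (ZMod q)ˣ, ((u : ZMod q))^2 with hS
  have h4 : (4 : ZMod q) * S = S := by
    have e1 : (4 : ZMod q) * S = ∑ u : (ZMod q)ˣ, (((g2*u : (ZMod q)ˣ) : ZMod q))^2 := by
      rw [hS, Finset.mul_sum]
      apply Finset.sum_congr rfl
      intro u _
      rw [Units.val_mul, mul_pow, hg2c]
      norm_num
    have e2 : ∑ u : (ZMod q)ˣ, (((g2*u : (ZMod q)ˣ) : ZMod q))^2
        = ∑ u : (ZMod q)ˣ, ((u : ZMod q))^2 :=
      Fintype.sum_bijective (fun u => g2*u) (Group.mulLeft_bijective g2) _ _ (fun u => rfl)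
    rw [e1, e2]
  have h3' : (g3 : ZMod q) * S = 0 := by
    rw [hg3c]
    have : (3 : ZMod q) * S = (4 : ZMod q) * S - S := by ring
    rw [this, h4, sub_self]
  exact (Units.mul_right_eq_zero g3).1 h3'

lemma Nlem (p : ℕ) (hp : p.Prime) (hp5 : 5 ≤ p) (b m : ℕ) (hb : p^m ∣ b) :
    (p:ℤ)^(m+1) ∣ ∑ i ∈ U p b, ∏ j ∈ (U p b).erase i, ((j:ℤ) * ((p*b : ℕ) - (j:ℤ))) := by
  classical
  set q := p^(m+1) with hq
  haveI : NeZero q := ⟨pow_ne_zero _ hp.pos.ne'⟩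
  obtain ⟨t, hbt⟩ := hb
  have hfin : p * b = q * t := by rw [hq, hbt, pow_succ]; ring
  have cast0 : ((p*b : ℕ) : ZMod q) = 0 :=
    (ZMod.natCast_eq_zero_iff _ _).2 ⟨t, hfin⟩
  rw [show ((p:ℤ)^(m+1)) = ((q:ℕ) : ℤ) by rw [hq]; push_cast; ring]
  rw [← ZMod.intCast_zmod_eq_zero_iff_dvd]
  rw [Int.cast_sum]
  have main : ∀ i ∈ U p b, (((∏ j ∈ (U p b).erase i, ((j:ℤ) * ((p*b : ℕ) - (j:ℤ)))) : ℤ) : ZMod q)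
      = ∏ j ∈ (U p b).erase i, (-((j : ZMod q))^2) := by
    intro i _
    rw [Int.cast_prod]
    apply Finset.prod_congr rfl
    intro j _
    rw [Int.cast_mul, Int.cast_sub, Int.cast_natCast, Int.cast_natCast, cast0]
    ring
  rw [Finset.sum_congr rfl main]
  -- pull out the sign
  have hsign : ∀ i ∈ U p b, ∏ j ∈ (U p b).erase i, (-((j : ZMod q))^2)
      = (-1)^((U p b).card - 1) * (∏ j ∈ (U p b).erase i, (j : ZMod q))^2 := by
    intro i hi
    have e1 : ∏ j ∈ (U p b).erase i, (-((j : ZMod q))^2)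
        = ∏ j ∈ (U p b).erase i, ((-1) * ((j : ZMod q))^2) := by
      apply Finset.prod_congr rfl; intro j _; ring
    rw [e1, Finset.prod_mul_distrib, Finset.prod_const, Finset.card_erase_of_mem hi,
      Finset.prod_pow]
  rw [Finset.sum_congr rfl hsign, ← Finset.mul_sum]
  -- units
  have hunit : ∀ i ∈ U p b, IsUnit ((i : ZMod q)) := by
    intro i hi
    rw [ZMod.isUnit_iff_coprime]
    exact Nat.Coprime.pow_right _ ((hp.coprime_iff_not_dvd.2 (mem_U.1 hi).2).symm)
  set W : ZMod q := ∏ j ∈ U p b, (j : ZMod q) with hW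
  have hw : ∀ i ∈ U p b, ∏ j ∈ (U p b).erase i, (j : ZMod q)
      = W * Ring.inverse (i : ZMod q) := by
    intro i hi
    have h1 : (∏ j ∈ (U p b).erase i, (j : ZMod q)) * (i : ZMod q) = W :=
      Finset.prod_erase_mul _ _ hi
    calc ∏ j ∈ (U p b).erase i, (j : ZMod q)
        = (∏ j ∈ (U p b).erase i, (j : ZMod q)) * ((i:ZMod q) * Ring.inverse (i:ZMod q)) := by
          rw [Ring.mul_inverse_cancel _ (hunit i hi), mul_one]
      _ = W * Ring.inverse (i:ZMod q) := by rw [← mul_assoc, h1]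
  have hsum : ∑ i ∈ U p b, (∏ j ∈ (U p b).erase i, (j:ZMod q))^2
      = W^2 * ∑ i ∈ U p b, (Ring.inverse ((i : ZMod q)))^2 := by
    rw [Finset.mul_sum]
    apply Finset.sum_congr rfl
    intro i hi
    rw [hw i hi, mul_pow]
  rw [hsum]
  -- counting: reduce to one block and apply Hlem
  have hzero : ∑ i ∈ U p b, (Ring.inverse ((i : ZMod q)))^2 = 0 := by
    have hfil : ∀ N : ℕ, ∑ i ∈ (Finset.range N).filter (fun i => ¬ p ∣ i),
        (Ring.inverse ((i : ZMod q)))^2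
        = ∑ i ∈ Finset.range N, (if ¬ p ∣ i then (Ring.inverse ((i : ZMod q)))^2 else 0) :=
      fun N => Finset.sum_filter _ _
    have hper : ∀ i, (if ¬ p ∣ (q + i) then (Ring.inverse (((q+i : ℕ) : ZMod q)))^2 else 0)
        = (if ¬ p ∣ i then (Ring.inverse ((i : ZMod q)))^2 else 0) := by
      intro i
      have hpq : p ∣ q := by rw [hq]; exact dvd_pow_self p (Nat.succ_ne_zero m)
      have hdvd : p ∣ (q + i) ↔ p ∣ i := by
        constructor
        · intro h; exact (Nat.dvd_add_right hpq).1 h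
        · intro h; exact hpq.add h
      have hcast : ((q + i : ℕ) : ZMod q) = (i : ZMod q) := by
        push_cast
        rw [ZMod.natCast_self, zero_add]
      rw [hcast]
      simp only [hdvd]
    have := sum_block q (fun i => if ¬ p ∣ i then (Ring.inverse ((i : ZMod q)))^2 else 0)
      hper t
    unfold U
    rw [hfil, hfin, this, ← hfil, hq]
    rw [Hlem p m hp hp5]
    simp
  rw [hzero, mul_zero, mul_zero]

/-- difference of the two products is divisible by `p^(3+α+2m)` -/
lemma diff_dvd (p : ℕ) (hp : p.Prime) (hp5 : 5 ≤ p) (a b c α m : ℕ)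
    (ha : p^α ∣ a) (hb : p^m ∣ b) (hc : p^m ∣ c) :
    (p:ℤ)^(3+α+2*m) ∣
      (∏ i ∈ U p b, ((i:ℤ) * ((p*b : ℕ) - (i:ℤ)) + (p:ℤ)^2 * a * c))
        - ∏ i ∈ U p b, ((i:ℤ) * ((p*b : ℕ) - (i:ℤ))) := by
  classical
  set ui : ℕ → ℤ := fun i => (i:ℤ) * ((p*b : ℕ) - (i:ℤ)) with hui
  set K : ℤ := (p:ℤ)^2 * a * c with hK
  have hKd : (p:ℤ)^(2+α+m) ∣ K := by
    rw [hK, show (p:ℤ)^(2+α+m) = (p:ℤ)^2 * (p:ℤ)^α * (p:ℤ)^m by rw [← pow_add, ← pow_add]]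
    have ha' : (p:ℤ)^α ∣ (a:ℤ) := by exact_mod_cast Int.natCast_dvd_natCast.2 ha
    have hc' : (p:ℤ)^m ∣ (c:ℤ) := by exact_mod_cast Int.natCast_dvd_natCast.2 hc
    exact mul_dvd_mul (mul_dvd_mul dvd_rfl ha') hc' 
  have hexp : ∏ i ∈ U p b, (ui i + K) = ∑ t ∈ (U p b).powerset,
      K ^ t.card * ∏ i ∈ (U p b) \ t, ui i := by
    have h := Finset.prod_add (fun _ => K) ui (U p b)
    have e : ∀ i, ui i + K = K + ui i := fun i => add_comm _ _
    calc ∏ i ∈ U p b, (ui i + K) = ∏ i ∈ U p b, (K + ui i) :=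
          Finset.prod_congr rfl (fun i _ => e i)
      _ = ∑ t ∈ (U p b).powerset, (∏ _i ∈ t, K) * ∏ i ∈ (U p b) \ t, ui i := h
      _ = ∑ t ∈ (U p b).powerset, K ^ t.card * ∏ i ∈ (U p b) \ t, ui i := by
          apply Finset.sum_congr rfl; intro t _; rw [Finset.prod_const]
  have hempty : (∅ : Finset ℕ) ∈ (U p b).powerset := Finset.empty_mem_powerset _
  have hsplit := Finset.sum_eq_sum_sdiff_singleton_add hempty
    (fun t => K ^ t.card * ∏ i ∈ (U p b) \ t, ui i)
  rw [hexp, hsplit]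
  have hemptyterm : K ^ (∅ : Finset ℕ).card * ∏ i ∈ (U p b) \ ∅, ui i = ∏ i ∈ U p b, ui i := by
    simp
  rw [hemptyterm, add_sub_cancel_right]
  -- split the remaining sum into singletons and card ≥ 2
  rw [← Finset.sum_filter_add_sum_filter_not ((U p b).powerset \ {∅}) (fun t => t.card = 1)]
  apply dvd_add
  · -- singletons
    have hset : ((U p b).powerset \ {∅}).filter (fun t => t.card = 1)
        = (U p b).map ⟨fun i => ({i} : Finset ℕ), Finset.singleton_injective⟩ := by
      ext s
      simp only [Finset.mem_filter, Finset.mem_sdiff, Finset.mem_powerset, Finset.mem_map,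
        Finset.mem_singleton, Function.Embedding.coeFn_mk]
      constructor
      · rintro ⟨⟨hsub, hne⟩, hcard⟩
        obtain ⟨x, rfl⟩ := Finset.card_eq_one.1 hcard
        exact ⟨x, hsub (Finset.mem_singleton_self x), rfl⟩
      · rintro ⟨x, hx, rfl⟩
        refine ⟨⟨Finset.singleton_subset_iff.2 hx, ?_⟩, Finset.card_singleton x⟩
        exact Finset.singleton_ne_empty x
    rw [hset, Finset.sum_map]
    simp only [Function.Embedding.coeFn_mk, Finset.card_singleton, pow_one]
    have hrw : ∀ i ∈ U p b, K * ∏ j ∈ (U p b) \ {i}, ui j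
        = K * ∏ j ∈ (U p b).erase i, ui j := by
      intro i _
      rw [Finset.sdiff_singleton_eq_erase]
    rw [Finset.sum_congr rfl hrw, ← Finset.mul_sum]
    have h1 : (p:ℤ)^(m+1) ∣ ∑ i ∈ U p b, ∏ j ∈ (U p b).erase i, ui j :=
      Nlem p hp hp5 b m hb
    have := mul_dvd_mul hKd h1
    rw [← pow_add] at this
    refine dvd_trans (pow_dvd_pow _ ?_) this
    omega
  · -- card ≥ 2
    apply Finset.dvd_sum
    intro t ht
    rw [Finset.mem_filter, Finset.mem_sdiff, Finset.mem_singleton] at ht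
    obtain ⟨⟨_, hne⟩, hcard⟩ := ht
    have hc2 : 2 ≤ t.card := by
      rcases Nat.lt_or_ge t.card 2 with h | h
      · exfalso
        have hor : t.card = 0 ∨ t.card = 1 := by omega
        rcases hor with h' | h'
        · exact hne (Finset.card_eq_zero.1 h')
        · exact hcard h'
      · exact h
    have h1 : ((p:ℤ)^(2+α+m))^t.card ∣ K ^ t.card := pow_dvd_pow_of_dvd hKd _
    rw [← pow_mul] at h1
    have h2 : 3+α+2*m ≤ (2+α+m) * t.card := by
      calc 3+α+2*m ≤ (2+α+m)*2 := by omega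
      _ ≤ (2+α+m) * t.card := Nat.mul_le_mul_left _ hc2
    exact dvd_mul_of_dvd_left (dvd_trans (pow_dvd_pow _ h2) h1) _

/-- main local lemma: Kazandzidis-type congruence -/
lemma eq_pow_aux (p δ γ x y : ℕ) (hp : p.Prime) (hx : ¬ p ∣ x) (hy : ¬ p ∣ y)
    (h : p^δ * x = p^γ * y) : δ = γ ∧ x = y := by
  have hmain : ∀ δ γ x y : ℕ, ¬ p ∣ x → ¬ p ∣ y → p^δ * x = p^γ * y → δ ≤ γ → δ = γ ∧ x = y := by
    intro δ γ x y hx hy h hle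
    have hpow : p^γ = p^δ * p^(γ-δ) := by rw [← pow_add]; congr 1; omega
    have h2 : p^δ * x = p^δ * (p^(γ-δ) * y) := by rw [h, hpow]; ring
    have h3 : x = p^(γ-δ) * y := Nat.eq_of_mul_eq_mul_left (pow_pos hp.pos δ) h2
    have h4 : γ - δ = 0 := by
      by_contra h5
      exact hx (h3 ▸ Dvd.dvd.mul_right (dvd_pow_self p h5) y)
    rw [h4, pow_zero, one_mul] at h3
    exact ⟨by omega, h3⟩
  rcases Nat.le_total δ γ with hle | hle
  · exact hmain δ γ x y hx hy h hle
  · obtain ⟨h1, h2⟩ := hmain γ δ y x hy hx h.symm hle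
    exact ⟨h1.symm, h2.symm⟩

lemma L (p a b α m : ℕ) (hp : p.Prime) (hp5 : 5 ≤ p)
    (hαa : p^α ∣ a) (hmb : p^m ∣ b) (hmc : (p:ℤ)^m ∣ (a:ℤ) - (b:ℤ)) :
    (p:ℤ)^(3+α+2*m) ∣ ((p*a).choose (p*b) : ℤ) - (a.choose b : ℤ) := by
  classical
  have hp0 : 0 < p := hp.pos
  have hpZ : Prime (p : ℤ) := Nat.prime_iff_prime_int.mp hp
  by_cases hba : b ≤ a
  swap
  · have h1 : a < b := by omega
    rw [Nat.choose_eq_zero_of_lt h1,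
      Nat.choose_eq_zero_of_lt ((Nat.mul_lt_mul_left hp0).2 h1)]
    simp
  by_cases hb0 : b = 0
  · subst hb0
    simp [Nat.mul_zero]
  have hbpos : 0 < b := by omega
  have hUne : (U p b).Nonempty := by
    refine ⟨1, mem_U.2 ⟨?_, ?_⟩⟩
    · have : 5 * 1 ≤ p * b := Nat.mul_le_mul hp5 hbpos
      omega
    · intro h
      have := Nat.le_of_dvd one_pos h
      omega
  obtain ⟨c, rfl⟩ : ∃ c, a = b + c := ⟨a - b, by omega⟩
  have hmc' : p^m ∣ c := by
    have h2 : (p:ℤ)^m ∣ (c:ℤ) := by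
      have he : ((b:ℕ):ℤ) + (c:ℕ) - (b:ℕ) = (c:ℤ) := by ring
      have := hmc
      push_cast at this
      rwa [he] at this
    have h3 : ((p^m : ℕ) : ℤ) ∣ (c : ℤ) := by push_cast; exact h2
    exact_mod_cast h3
  have hCpos : 0 < (b+c).choose b := Nat.choose_pos (by omega)
  have hC'pos : 0 < (p*(b+c)).choose (p*b) :=
    Nat.choose_pos (Nat.mul_le_mul_left p (by omega))
  obtain ⟨δ, X, hX, hXe⟩ := Nat.exists_eq_pow_mul_and_not_dvd hC'pos.ne' p hp.ne_one
  obtain ⟨γ, Y, hY, hYe⟩ := Nat.exists_eq_pow_mul_and_not_dvd hCpos.ne' p hp.ne_one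
  have hkey := keyid p hp0 b c
  have hAnd : ¬ p ∣ F p b := not_p_dvd_F hp
  have hBnd : ¬ p ∣ ∏ i ∈ U p b, (p*c + i) := by
    intro h
    rcases (Nat.Prime.prime hp).dvd_finset_prod_iff _ |>.1 h with ⟨i, hi, hdvd⟩
    have : p ∣ i := (Nat.dvd_add_right (Dvd.intro c rfl)).1 hdvd
    exact (mem_U.1 hi).2 this
  -- p^δ * (X * F p b) = p^γ * (Y * B)
  have heq0 : p^δ * (X * F p b) = p^γ * (Y * ∏ i ∈ U p b, (p*c + i)) := by
    rw [hXe, hYe] at hkey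
    calc p^δ * (X * F p b) = p ^ δ * X * F p b := by ring
      _ = p ^ γ * Y * ∏ i ∈ U p b, (p*c + i) := hkey
      _ = p^γ * (Y * ∏ i ∈ U p b, (p*c + i)) := by ring
  have hXAnd : ¬ p ∣ X * F p b := by
    intro h
    rcases (Nat.Prime.dvd_mul hp).1 h with h | h
    · exact hX h
    · exact hAnd h
  have hYBnd : ¬ p ∣ Y * ∏ i ∈ U p b, (p*c + i) := by
    intro h
    rcases (Nat.Prime.dvd_mul hp).1 h with h | h
    · exact hY h
    · exact hBnd h
  obtain ⟨hδγ, hXAYB⟩ := eq_pow_aux p δ γ _ _ hp hXAnd hYBnd heq0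
  subst hδγ
  -- squared identity, cancel p^(2δ)
  have hsq := sqid p hp0 b c
  have hsq2 : (X:ℤ)^2 * ∏ i ∈ U p b, ((i : ℤ) * ((p*b : ℕ) - (i:ℤ)))
      = (Y:ℤ)^2 * ∏ i ∈ U p b, ((i:ℤ) * ((p*b : ℕ) - (i:ℤ)) + (p:ℤ)^2 * (b+c) * c) := by
    have hXZ : ((p*(b+c)).choose (p*b) : ℤ) = (p:ℤ)^δ * X := by
      rw [hXe]; push_cast; ring
    have hYZ : (((b+c)).choose b : ℤ) = (p:ℤ)^δ * Y := by
      rw [hYe]; push_cast; ring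
    rw [hXZ, hYZ] at hsq
    have hne : ((p:ℤ)^δ)^2 ≠ 0 := pow_ne_zero _ (pow_ne_zero _ (by exact_mod_cast hp0.ne'))
    apply mul_left_cancel₀ hne
    calc ((p:ℤ)^δ)^2 * ((X:ℤ)^2 * ∏ i ∈ U p b, ((i : ℤ) * ((p*b : ℕ) - (i:ℤ))))
        = ((p:ℤ)^δ * X)^2 * ∏ i ∈ U p b, ((i : ℤ) * ((p*b : ℕ) - (i:ℤ))) := by ring
      _ = ((p:ℤ)^δ * Y)^2 *
          ∏ i ∈ U p b, ((i:ℤ) * ((p*b : ℕ) - (i:ℤ)) + (p:ℤ)^2 * (b+c) * c) := hsq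
      _ = ((p:ℤ)^δ)^2 * ((Y:ℤ)^2 *
          ∏ i ∈ U p b, ((i:ℤ) * ((p*b : ℕ) - (i:ℤ)) + (p:ℤ)^2 * (b+c) * c)) := by ring
  have hD := diff_dvd p hp hp5 (b+c) b c α m hαa hmb hmc'
  have hfact : ((X:ℤ)^2 - (Y:ℤ)^2) * ∏ i ∈ U p b, ((i : ℤ) * ((p*b : ℕ) - (i:ℤ)))
      = (Y:ℤ)^2 * ((∏ i ∈ U p b, ((i:ℤ) * ((p*b : ℕ) - (i:ℤ)) + (p:ℤ)^2 * (b+c) * c))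
        - ∏ i ∈ U p b, ((i : ℤ) * ((p*b : ℕ) - (i:ℤ)))) := by
    linear_combination hsq2
  have hdvd1 : (p:ℤ)^(3+α+2*m) ∣ ((X:ℤ)^2 - (Y:ℤ)^2)
      * ∏ i ∈ U p b, ((i : ℤ) * ((p*b : ℕ) - (i:ℤ))) := by
    rw [hfact]
    exact Dvd.dvd.mul_left hD _
  have hPnd : ¬ (p:ℤ) ∣ ∏ i ∈ U p b, ((i : ℤ) * ((p*b : ℕ) - (i:ℤ))) := by
    intro h
    rcases hpZ.dvd_finset_prod_iff _ |>.1 h with ⟨i, hi, hdvd⟩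
    rcases hpZ.dvd_mul.1 hdvd with h1 | h1
    · exact (mem_U.1 hi).2 (Int.natCast_dvd_natCast.1 h1)
    · have h2 : (p:ℤ) ∣ ((p*b:ℕ):ℤ) := by push_cast; exact dvd_mul_right _ _
      have h3 : (p:ℤ) ∣ (i:ℤ) := by
        have := dvd_sub h2 h1
        simpa using this
      exact (mem_U.1 hi).2 (Int.natCast_dvd_natCast.1 h3)
  have hdvd2 : (p:ℤ)^(3+α+2*m) ∣ ((X:ℤ) - Y) * ((X:ℤ) + Y) := by
    have := hpZ.pow_dvd_of_dvd_mul_right _ hPnd hdvd1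
    rwa [show (X:ℤ)^2 - (Y:ℤ)^2 = ((X:ℤ) - Y) * ((X:ℤ) + Y) by ring] at this
  -- X ≡ Y mod p
  have hXY : (p:ℤ) ∣ (X:ℤ) - Y := by
    have hAB : (p:ℤ) ∣ (∏ i ∈ U p b, ((p*c + i : ℕ) : ℤ)) - ∏ i ∈ U p b, ((i:ℕ) : ℤ) := by
      have htel := tele (U p b) hUne (fun i => ((p*c + i : ℕ) : ℤ)) (fun i => ((i:ℕ) : ℤ))
        (p:ℤ) 0 1 (fun i _ => by simp) (fun i _ => by simp)
        (fun i hi => by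
          rw [pow_one]
          have : ((p*c + i : ℕ) : ℤ) - ((i:ℕ) : ℤ) = (p:ℤ) * c := by push_cast; ring
          rw [this]
          exact dvd_mul_right _ _)
      simpa using htel
    have hXAYB' : (X:ℤ) * (F p b : ℤ) = (Y:ℤ) * ∏ i ∈ U p b, ((p*c + i:ℕ) : ℤ) := by
      have : (X * F p b : ℕ) = (Y * ∏ i ∈ U p b, (p*c + i) : ℕ) := hXAYB
      have h2 := congrArg (Nat.cast : ℕ → ℤ) this
      push_cast at h2
      exact_mod_cast h2
    have hFZ : (F p b : ℤ) = ∏ i ∈ U p b, ((i:ℕ) : ℤ) := by unfold F; push_cast; rfl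
    have hmix : ((X:ℤ) - Y) * (F p b : ℤ)
        = (Y:ℤ) * ((∏ i ∈ U p b, ((p*c + i : ℕ) : ℤ)) - ∏ i ∈ U p b, ((i:ℕ) : ℤ)) := by
      rw [hFZ] at hXAYB' ⊢
      linear_combination hXAYB'
    have hdvd3 : (p:ℤ) ∣ ((X:ℤ) - Y) * (F p b : ℤ) := by
      rw [hmix]
      exact Dvd.dvd.mul_left hAB _
    rcases hpZ.dvd_mul.1 hdvd3 with h | h
    · exact h
    · exact absurd (Int.natCast_dvd_natCast.1 h) hAnd
  have hXYsum : ¬ (p:ℤ) ∣ (X:ℤ) + Y := by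
    intro h
    have h2x : (p:ℤ) ∣ 2 * X := by
      have := dvd_add h hXY
      rwa [show ((X:ℤ) + Y) + ((X:ℤ) - Y) = 2 * X by ring] at this
    rcases hpZ.dvd_mul.1 h2x with h | h
    · have : (p:ℤ) ∣ ((2:ℕ):ℤ) := by exact_mod_cast h
      have := Nat.le_of_dvd (by norm_num) (Int.natCast_dvd_natCast.1 this)
      omega
    · exact hX (Int.natCast_dvd_natCast.1 h)
  have hfinal : (p:ℤ)^(3+α+2*m) ∣ (X:ℤ) - Y :=
    hpZ.pow_dvd_of_dvd_mul_right _ hXYsum hdvd2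
  have hconc : ((p*(b+c)).choose (p*b) : ℤ) - ((b+c).choose b : ℤ)
      = (p:ℤ)^δ * ((X:ℤ) - Y) := by
    rw [hXe, hYe]; push_cast; ring
  rw [hconc]
  exact Dvd.dvd.mul_left hfinal _

/-- Kummer-type valuation bound -/
lemma kum (p r n u t : ℕ) (hp : p.Prime) (hur : u ≤ r) (ht : ¬ p ∣ t) (ht0 : 0 < t) :
    p^(r-u) ∣ (p^r * n).choose (p^u * t) := by
  rcases Nat.eq_zero_or_pos n with rfl | hn
  · rcases Nat.eq_zero_or_pos (r - u) with h | h
    · simp [h]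
    · have hk : 0 < p^u * t := Nat.mul_pos (pow_pos hp.pos u) ht0
      rw [Nat.mul_zero, Nat.choose_eq_zero_of_lt hk]
      exact dvd_zero _
  · set N := p^r * n with hN
    set k := p^u * t with hk
    have hk0 : 0 < k := Nat.mul_pos (pow_pos hp.pos u) ht0
    have hN0 : 0 < N := Nat.mul_pos (pow_pos hp.pos r) hn
    -- N * (N-1).choose (k-1) = N.choose k * k
    have hid : N * (N-1).choose (k-1) = N.choose k * k := by
      have := Nat.add_one_mul_choose_eq (N-1) (k-1)
      rwa [show N-1+1 = N by omega, show k-1+1 = k by omega] at this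
    have hdvd : p^r ∣ N.choose k * k := by
      rw [← hid]; exact Dvd.dvd.mul_right (Dvd.intro n rfl) _
    have hdvd2 : p^u * p^(r-u) ∣ (N.choose k * t) * p^u := by
      have h1 : p^u * p^(r-u) = p^r := by rw [← pow_add]; congr 1; omega
      have h2 : N.choose k * k = (N.choose k * t) * p^u := by rw [hk]; ring
      rw [h1, ← h2]; exact hdvd
    have hdvd3 : p^(r-u) ∣ N.choose k * t := by
      rcases hdvd2 with ⟨z, hz⟩
      refine ⟨z, ?_⟩
      have hppos : 0 < p^u := pow_pos hp.pos u
      have : (N.choose k * t) * p^u = (p^(r-u) * z) * p^u := by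
        rw [hz]; ring
      exact Nat.eq_of_mul_eq_mul_right hppos this
    have hcop : (p^(r-u)).Coprime t :=
      Nat.Coprime.pow_left _ (hp.coprime_iff_not_dvd.mpr ht)
    exact hcop.dvd_of_dvd_mul_right hdvd3


lemma Y_eq (d : ℕ) (hd : 0 < d) (n : Fin d → ℕ) (N : ℕ) (hN : (⨅ i, n i) ≤ N) :
    Y d n = ∑ k ∈ Finset.range (N+1), ∏ i : Fin d, ((n i).choose k : ℤ) := by
  have hne : Nonempty (Fin d) := ⟨⟨0, hd⟩⟩
  have hmem : (⨅ i, n i) ∈ Set.range n := by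
    rw [iInf]
    exact Nat.sInf_mem (Set.range_nonempty n)
  obtain ⟨i₀, hi₀⟩ := hmem
  unfold Y
  apply Finset.sum_subset
  · exact Finset.range_subset_range.2 (by omega)
  · intro k _ hk
    rw [Finset.mem_range, not_lt] at hk
    apply Finset.prod_eq_zero (Finset.mem_univ i₀)
    rw [Nat.choose_eq_zero_of_lt (by omega), Int.natCast_zero]

lemma vdm (m : Fin 2 → ℕ) : Y 2 m = ((m 0 + m 1).choose (m 0) : ℤ) := by
  have h1 : Y 2 m = ∑ k ∈ Finset.range (m 0 + 1), ∏ i : Fin 2, ((m i).choose k : ℤ) := by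
    apply Y_eq 2 (by norm_num) m (m 0)
    exact Nat.sInf_le ⟨0, rfl⟩
  have h2 : (m 0 + m 1).choose (m 0)
      = ∑ k ∈ Finset.range (m 0 + 1), (m 0).choose k * (m 1).choose k := by
    rw [Nat.add_choose_eq, Finset.Nat.sum_antidiagonal_eq_sum_range_succ_mk]
    rw [← Finset.sum_range_reflect]
    apply Finset.sum_congr rfl
    intro k hk
    rw [Finset.mem_range] at hk
    have hk' : k ≤ m 0 := by omega
    have e1 : m 0 + 1 - 1 - k = m 0 - k := by omega
    have e2 : m 0 - (m 0 - k) = k := by omega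
    rw [e1, e2, Nat.choose_symm hk']
  rw [h1, h2]
  push_cast
  apply Finset.sum_congr rfl
  intro k _
  rw [Fin.prod_univ_two]

lemma inner (d : ℕ) (hd : 0 < d) (hd3 : 3 ≤ d) (n : Fin d → ℕ) (p r : ℕ) (hp : p.Prime)
    (hp5 : 5 ≤ p) (hr : 1 ≤ r) (k' : ℕ) :
    (p:ℤ)^(3*r) ∣ (∏ i : Fin d, ((p^r * n i).choose (p*k') : ℤ))
      - ∏ i : Fin d, ((p^(r-1) * n i).choose k' : ℤ) := by
  haveI : Nonempty (Fin d) := ⟨⟨0, hd⟩⟩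
  rcases Nat.eq_zero_or_pos k' with rfl | hk'
  · simp
  obtain ⟨u, t, ht, hkt⟩ := Nat.exists_eq_pow_mul_and_not_dvd hk'.ne' p hp.ne_one
  have ht0 : 0 < t := by
    rcases Nat.eq_zero_or_pos t with rfl | h
    · rw [Nat.mul_zero] at hkt; omega
    · exact h
  set u' := min u (r-1) with hu'
  set w := (r-1) - u' with hw
  set E := 3 + (r-1) + 2*u' with hE
  have hu'le : u' ≤ r - 1 := min_le_right _ _
  have hre : r = (r-1) + 1 := by omega
  have hpr : p^r = p^(r-1) * p := by
    conv_lhs => rw [show r = (r-1)+1 by omega]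
    exact pow_succ p (r-1)
  have htel := tele (Finset.univ : Finset (Fin d)) Finset.univ_nonempty
    (fun i => ((p^r * n i).choose (p*k') : ℤ)) (fun i => ((p^(r-1) * n i).choose k' : ℤ))
    (p:ℤ) w E
    (by
      intro i _
      rcases le_or_gt u (r-1) with hur | hur
      · have hk := kum p r (n i) (u+1) t hp (by omega) ht ht0
        have harg : p^(u+1) * t = p * k' := by rw [hkt, pow_succ]; ring
        rw [harg] at hk
        have hexp : r - (u+1) = w := by omega
        rw [hexp] at hk
        have h2 := Int.natCast_dvd_natCast.2 hk
        push_cast at h2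
        exact h2
      · have hw0 : w = 0 := by omega
        rw [hw0, pow_zero]; exact one_dvd _)
    (by
      intro i _
      rcases le_or_gt u (r-1) with hur | hur
      · have hk := kum p (r-1) (n i) u t hp hur ht ht0
        rw [← hkt] at hk
        have hexp : (r-1) - u = w := by omega
        rw [hexp] at hk
        have h2 := Int.natCast_dvd_natCast.2 hk
        push_cast at h2
        exact h2
      · have hw0 : w = 0 := by omega
        rw [hw0, pow_zero]; exact one_dvd _)
    (by
      intro i _
      have h2 : p^u' ∣ k' := by
        rw [hkt]
        exact Dvd.dvd.mul_right (pow_dvd_pow p (min_le_left _ _)) t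
      have happ := L p (p^(r-1) * n i) k' (r-1) u' hp hp5 (dvd_mul_right _ _) h2 (by
        apply dvd_sub
        · have h3 : (p:ℤ)^u' ∣ ((p^(r-1) : ℕ) : ℤ) := by
            push_cast
            exact pow_dvd_pow _ hu'le
          have h4 : ((p^(r-1) * n i : ℕ) : ℤ) = ((p^(r-1):ℕ) : ℤ) * (n i : ℤ) := by push_cast; ring
          rw [h4]
          exact Dvd.dvd.mul_right h3 _
        · have h5 := Int.natCast_dvd_natCast.2 h2
          push_cast at h5
          exact h5)
      have harg : p * (p^(r-1) * n i) = p^r * n i := by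
        rw [hpr]; ring
      rw [harg] at happ
      exact happ)
  have hcard : (Finset.univ : Finset (Fin d)).card = d := by simp
  rw [hcard] at htel
  refine dvd_trans (pow_dvd_pow _ ?_) htel
  have h1 : w*2 ≤ w*(d-1) := Nat.mul_le_mul_left w (by omega)
  have h2 : 3*r = E + w*2 := by omega
  omega

end Aux13

/-- For `d ≥ 2`, primes `p ≥ 5` and `r ≥ 1`, the supercongruence
`Y_d(pʳ·n) ≡ Y_d(p^{r-1}·n) (mod p^{3r})` holds. -/
theorem stmt13 (d : ℕ) (hd : 2 ≤ d) (n : Fin d → ℕ) (p : ℕ) (hp : p.Prime) (hp5 : 5 ≤ p)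
    (r : ℕ) (hr : 1 ≤ r) :
    (p : ℤ) ^ (3 * r) ∣ Y d (fun i => p ^ r * n i) - Y d (fun i => p ^ (r - 1) * n i) := by
  classical
  open Aux13 in
  have hd0 : 0 < d := by omega
  haveI : Nonempty (Fin d) := ⟨⟨0, hd0⟩⟩
  rcases eq_or_lt_of_le hd with hd2 | hd3
  · -- d = 2 : Vandermonde + Kazandzidis-type lemma
    subst hd2
    have h1 : Y 2 (fun i => p ^ r * n i)
        = (((p^r * n 0) + (p^r * n 1)).choose (p^r * n 0) : ℤ) := Aux13.vdm _
    have h2 : Y 2 (fun i => p ^ (r-1) * n i)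
        = (((p^(r-1) * n 0) + (p^(r-1) * n 1)).choose (p^(r-1) * n 0) : ℤ) := Aux13.vdm _
    have hpr : p^r = p^(r-1) * p := by
      conv_lhs => rw [show r = (r-1)+1 by omega]
      exact pow_succ p (r-1)
    have e1 : p^r * n 0 + p^r * n 1 = p * (p^(r-1) * (n 0 + n 1)) := by
      rw [hpr]; ring
    have e2 : p^r * n 0 = p * (p^(r-1) * n 0) := by
      rw [hpr]; ring
    have e3 : p^(r-1) * n 0 + p^(r-1) * n 1 = p^(r-1) * (n 0 + n 1) := by ring
    rw [h1, h2, e1, e2, e3]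
    have hsub : (p:ℤ)^(r-1) ∣ ((p^(r-1) * (n 0 + n 1) : ℕ) : ℤ) - ((p^(r-1) * n 0 : ℕ) : ℤ) := by
      have : ((p^(r-1) * (n 0 + n 1) : ℕ) : ℤ) - ((p^(r-1) * n 0 : ℕ) : ℤ)
          = (p:ℤ)^(r-1) * (n 1 : ℤ) := by push_cast; ring
      rw [this]
      exact dvd_mul_right _ _
    have happ := Aux13.L p (p^(r-1) * (n 0 + n 1)) (p^(r-1) * n 0) (r-1) (r-1) hp hp5
      (dvd_mul_right _ _) (dvd_mul_right _ _) hsub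
    rw [show 3*r = 3 + (r-1) + 2*(r-1) by omega]
    exact happ
  · -- 3 ≤ d
    have hd3' : 3 ≤ d := hd3
    set M := ⨅ i, n i with hM
    obtain ⟨i₀, hi₀⟩ : ∃ i₀, n i₀ = M := by
      have hmem : M ∈ Set.range n := by
        rw [hM, iInf]
        exact Nat.sInf_mem (Set.range_nonempty n)
      obtain ⟨i₀, h⟩ := hmem
      exact ⟨i₀, h⟩
    have hpr : p^r = p^(r-1) * p := by
      conv_lhs => rw [show r = (r-1)+1 by omega]
      exact pow_succ p (r-1)
    have hmul : p * (p^(r-1) * M) = p^r * M := by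
      rw [hpr]; ring
    have hYr : Y d (fun i => p^r * n i) = ∑ k ∈ Finset.range (p * (p^(r-1)*M) + 1),
        ∏ i : Fin d, ((p^r * n i).choose k : ℤ) := by
      apply Aux13.Y_eq d hd0
      have h1 : (⨅ i, p^r * n i) ≤ p^r * n i₀ := Nat.sInf_le ⟨i₀, rfl⟩
      rw [hi₀] at h1
      omega
    have hYr1 : Y d (fun i => p^(r-1) * n i) = ∑ k ∈ Finset.range ((p^(r-1)*M) + 1),
        ∏ i : Fin d, ((p^(r-1) * n i).choose k : ℤ) := by
      apply Aux13.Y_eq d hd0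
      have h1 : (⨅ i, p^(r-1) * n i) ≤ p^(r-1) * n i₀ := Nat.sInf_le ⟨i₀, rfl⟩
      rw [hi₀] at h1
      exact h1
    set Q := p^(r-1) * M with hQ
    rw [hYr, hYr1]
    rw [← Finset.sum_filter_add_sum_filter_not (Finset.range (p*Q+1)) (fun k => p ∣ k)]
    have hbij : ∑ k ∈ (Finset.range (p*Q+1)).filter (fun k => p ∣ k),
        ∏ i : Fin d, ((p^r * n i).choose k : ℤ)
        = ∑ k' ∈ Finset.range (Q+1), ∏ i : Fin d, ((p^r * n i).choose (p*k') : ℤ) := by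
      refine Finset.sum_nbij' (i := fun k => k / p) (j := fun k' => p * k') ?_ ?_ ?_ ?_ ?_
      · intro k hk
        rcases Finset.mem_filter.1 hk with ⟨hk1, hk2⟩
        rw [Finset.mem_range] at hk1 ⊢
        obtain ⟨s, rfl⟩ := hk2
        rw [Nat.mul_div_cancel_left s hp.pos]
        have hle : p * s ≤ p * Q := by omega
        have : s ≤ Q := Nat.le_of_mul_le_mul_left hle hp.pos
        omega
      · intro k' hk'
        rw [Finset.mem_range] at hk'
        refine Finset.mem_filter.2 ⟨Finset.mem_range.2 ?_, Dvd.intro k' rfl⟩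
        have h1 : k' ≤ Q := by omega
        have h2 := Nat.mul_le_mul_left p h1
        omega
      · intro k hk
        rcases Finset.mem_filter.1 hk with ⟨_, hk2⟩
        exact Nat.mul_div_cancel' hk2
      · intro k' _
        exact Nat.mul_div_cancel_left k' hp.pos
      · intro k hk
        rcases Finset.mem_filter.1 hk with ⟨_, hk2⟩
        rw [Nat.mul_div_cancel' hk2]
    rw [hbij]
    rw [show ∀ A B S : ℤ, (A + B) - S = (A - S) + B from fun _ _ _ => by ring]
    apply dvd_add
    · rw [← Finset.sum_sub_distrib]
      apply Finset.dvd_sum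
      intro k' _
      exact Aux13.inner d hd0 hd3' n p r hp hp5 hr k'
    · apply Finset.dvd_sum
      intro k hk
      rcases Finset.mem_filter.1 hk with ⟨_, hk2⟩
      have hk0 : 0 < k := by
        rcases Nat.eq_zero_or_pos k with rfl | h
        · exact absurd (dvd_zero p) hk2
        · exact h
      have hfac : ∀ i : Fin d, (p:ℤ)^r ∣ ((p^r * n i).choose k : ℤ) := by
        intro i
        have hkk := Aux13.kum p r (n i) 0 k hp (Nat.zero_le r) hk2 hk0
        rw [pow_zero, one_mul, Nat.sub_zero] at hkk
        have h2 := Int.natCast_dvd_natCast.2 hkk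
        push_cast at h2
        exact h2
      have hprod : ((p:ℤ)^r)^d ∣ ∏ i : Fin d, ((p^r * n i).choose k : ℤ) := by
        have hpp : (∏ _i : Fin d, (p:ℤ)^r) ∣ ∏ i : Fin d, ((p^r * n i).choose k : ℤ) :=
          Finset.prod_dvd_prod_of_dvd _ _ (fun i _ => hfac i)
        simpa [Finset.prod_const, Finset.card_univ] using hpp
      refine dvd_trans ?_ hprod
      rw [← pow_mul]
      apply pow_dvd_pow
      have := Nat.mul_le_mul_left r hd3'
      omega
end

section
/- Let p ≥ 5 be a prime, let ε ∈ {-1, 1}, and let r ≥ 0 be an integer. Then in the ring ZMod(p^r), the sum Σ_{k=1, p ∤ k}^{p^r - 1} ε^k · ((k : ZMod(p^r))⁻¹)² equals 0; equivalently, Σ_{k=1, p ∤ k}^{p^r - 1} ε^k / k² ≡ 0 (mod p^r). -/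
/-- For primes `p ≥ 5`, `ε ∈ {-1, 1}` and `r ≥ 0`, the sum `∑ ε^k/k²` over `1 ≤ k ≤ pʳ - 1`
with `p ∤ k` vanishes modulo `pʳ`, i.e. it equals `0` in `ZMod (pʳ)`. -/
theorem stmt15 (p : ℕ) (hp : p.Prime) (hp5 : 5 ≤ p) (ε : ℤ) (hε : ε = 1 ∨ ε = -1) (r : ℕ) :
    ∑ k ∈ (Finset.range (p ^ r)).filter (fun k => ¬ p ∣ k),
      (ε : ZMod (p ^ r)) ^ k * ((k : ZMod (p ^ r))⁻¹) ^ 2 = 0 := by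
  rcases Nat.eq_zero_or_pos r with rfl | hr
  · rw [pow_zero]; exact Subsingleton.elim _ _
  set n := p ^ r with hn
  have hp1 : 1 < p := hp.one_lt
  have hpn : p ∣ n := dvd_pow_self p hr.ne'
  have hnpos : 0 < n := pow_pos hp.pos r
  have hne : NeZero n := ⟨hnpos.ne'⟩
  have hodd : Odd n := (hp.odd_of_ne_two (by omega)).pow
  have hcop : ∀ a : ℕ, ¬ p ∣ a → Nat.Coprime a n := fun a h =>
    Nat.Coprime.pow_right r (Nat.coprime_comm.mp (hp.coprime_iff_not_dvd.mpr h))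
  have hunit : ∀ a : ℕ, ¬ p ∣ a → IsUnit ((a : ZMod n)) := fun a h =>
    (ZMod.isUnit_iff_coprime a n).mpr (hcop a h)
  rcases hε with rfl | rfl
  · simp only [Int.cast_one, one_pow, one_mul]
    have key : ∑ k ∈ (Finset.range n).filter (fun k => ¬ p ∣ k), ((k : ZMod n)⁻¹)^2
        = ∑ u : (ZMod n)ˣ, (((u : ZMod n))⁻¹)^2 := by
      apply Finset.sum_bij (fun k hk => ZMod.unitOfCoprime k
        (hcop k (Finset.mem_filter.mp hk).2))
      · intro a ha; exact Finset.mem_univ _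
      · intro a ha b hb hab
        have := congrArg (fun u : (ZMod n)ˣ => (u : ZMod n).val) hab
        simpa [ZMod.val_cast_of_lt (Finset.mem_range.mp (Finset.mem_filter.mp ha).1),
          ZMod.val_cast_of_lt (Finset.mem_range.mp (Finset.mem_filter.mp hb).1)] using this
      · intro u _
        refine ⟨(u : ZMod n).val, ?_, ?_⟩
        · refine Finset.mem_filter.mpr ⟨Finset.mem_range.mpr (ZMod.val_lt _), ?_⟩
          intro hdvd
          have h1 : p ∣ Nat.gcd (u : ZMod n).val n := Nat.dvd_gcd hdvd hpn
          rw [ZMod.val_coe_unit_coprime u] at h1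
          have := Nat.le_of_dvd one_pos h1; omega
        · apply Units.ext
          simp [ZMod.natCast_val, ZMod.cast_id]
      · intro a ha; simp
    rw [key]
    have hinv : ∑ u : (ZMod n)ˣ, (((u : ZMod n))⁻¹)^2
        = ∑ u : (ZMod n)ˣ, ((u : ZMod n))^2 := by
      refine Fintype.sum_equiv (Equiv.inv _) _ _ fun u => ?_
      simp [ZMod.inv_coe_unit]
    rw [hinv]
    have h2 : ¬ p ∣ 2 := fun h => by have := Nat.le_of_dvd (by norm_num) h; omega
    set u2 : (ZMod n)ˣ := ZMod.unitOfCoprime 2 (hcop 2 h2) with hu2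
    have htr : ∑ u : (ZMod n)ˣ, ((u : ZMod n))^2
        = ∑ u : (ZMod n)ˣ, ((u2 * u : (ZMod n)ˣ) : ZMod n)^2 := by
      refine Fintype.sum_equiv (Equiv.mulLeft u2).symm _ _ fun u => ?_
      simp
    have h4 : (4 : ZMod n) * ∑ u : (ZMod n)ˣ, ((u : ZMod n))^2
        = ∑ u : (ZMod n)ˣ, ((u : ZMod n))^2 := by
      nth_rewrite 2 [htr]
      rw [Finset.mul_sum]
      refine Finset.sum_congr rfl fun u _ => ?_
      have h2' : ((u2 : (ZMod n)ˣ) : ZMod n) = 2 := by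
        rw [hu2, ZMod.coe_unitOfCoprime]; norm_num
      rw [Units.val_mul, h2']; ring
    have h3 : IsUnit (3 : ZMod n) := by
      have : ¬ p ∣ 3 := fun h => by have := Nat.le_of_dvd (by norm_num) h; omega
      simpa using hunit 3 this
    have : (3 : ZMod n) * ∑ u : (ZMod n)ˣ, ((u : ZMod n))^2 = (3 : ZMod n) * 0 := by
      rw [mul_zero]; linear_combination h4
    exact h3.mul_left_cancel this
  · simp only [Int.cast_neg, Int.cast_one]
    apply Finset.sum_involution (fun a _ => n - a)
    · intro a ha
      obtain ⟨har, hap⟩ := Finset.mem_filter.mp ha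
      have haL : a < n := Finset.mem_range.mp har
      have ha0 : a ≠ 0 := fun h => hap (h ▸ dvd_zero p)
      have hcast : ((n - a : ℕ) : ZMod n) = -(a : ZMod n) := by
        have h0 : ((n - a : ℕ) : ZMod n) + (a : ZMod n) = 0 := by
          rw [← Nat.cast_add, Nat.sub_add_cancel haL.le, ZMod.natCast_self]
        exact eq_neg_of_add_eq_zero_left h0
      have hu := hunit a hap
      have hinva : (-(a : ZMod n))⁻¹ = -((a : ZMod n)⁻¹) := by
        apply ZMod.inv_eq_of_mul_eq_one
        rw [neg_mul_neg, ZMod.mul_inv_of_unit _ hu]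
      have hs1 : (-1 : ZMod n)^(n-a) * (-1)^a = -1 := by
        rw [← pow_add, Nat.sub_add_cancel haL.le]; exact hodd.neg_one_pow
      have hs2 : ((-1 : ZMod n)^a) * (-1)^a = 1 := by
        rw [← mul_pow]; norm_num
      have hsign : (-1 : ZMod n)^(n-a) = -((-1 : ZMod n)^a) := by
        calc (-1:ZMod n)^(n-a) = (-1)^(n-a) * ((-1)^a * (-1)^a) := by rw [hs2, mul_one]
          _ = -((-1)^a) := by rw [← mul_assoc, hs1]; ring
      rw [hcast, hinva, hsign]; ring
    · intro a ha _
      obtain ⟨har, hap⟩ := Finset.mem_filter.mp ha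
      have haL : a < n := Finset.mem_range.mp har
      intro h
      have h2a : n = 2 * a := by omega
      have : p ∣ 2 * a := h2a ▸ hpn
      rcases (Nat.Prime.dvd_mul hp).mp this with h' | h'
      · have := Nat.le_of_dvd (by norm_num) h'; omega
      · exact hap h'
    · intro a ha
      obtain ⟨har, hap⟩ := Finset.mem_filter.mp ha
      have haL : a < n := Finset.mem_range.mp har
      have ha0 : a ≠ 0 := fun h => hap (h ▸ dvd_zero p)
      refine Finset.mem_filter.mpr ⟨Finset.mem_range.mpr (by omega), ?_⟩
      intro h
      have : p ∣ a := by
        have := Nat.dvd_sub hpn h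
        rwa [Nat.sub_sub_self haL.le] at this
      exact hap this
    · intro a ha
      have haL : a < n := Finset.mem_range.mp (Finset.mem_filter.mp ha).1
      omega
end

section
/- Let p be a prime, let m, k be integers, and let r ≥ 1 be an integer. Then binom(p^r·m - 1, k)·(-1)^k ≡ binom(p^{r-1}·m - 1, ⌊k/p⌋)·(-1)^{⌊k/p⌋} (mod p^r), where ⌊k/p⌋ denotes the floor of k/p (floor division of integers). -/
open Finset

private lemma desc_prod (n : ℤ) (k : ℕ) :
    (descPochhammer ℤ k).eval n = ∏ i ∈ range k, (n - (i : ℤ)) := by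
  induction k with
  | zero => simp
  | succ k ih => rw [descPochhammer_succ_eval, ih, prod_range_succ]

private lemma fac_mul_choose (n : ℤ) (k : ℕ) :
    (k.factorial : ℤ) * Ring.choose n k = ∏ i ∈ range k, (n - (i : ℤ)) := by
  rw [← desc_prod, Polynomial.eval_eq_smeval, Ring.descPochhammer_eq_factorial_smul_choose,
    nsmul_eq_mul]

private lemma binom_div (n : ℤ) (j : ℕ) :
    (∏ i ∈ range j, (n - (i : ℤ))) / (j.factorial : ℤ) = Ring.choose n j := by
  rw [← fac_mul_choose, Int.mul_ediv_cancel_left _ (by exact_mod_cast j.factorial_ne_zero)]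

private lemma fdiv_eq_of {p a b : ℤ} (hp : 0 < p) (h1 : p * b ≤ a) (h2 : a < p * b + p) :
    a.fdiv p = b := by
  have h3 := Int.mul_fdiv_add_fmod a p
  have h4 := Int.fmod_nonneg_of_pos a hp
  have h5 := Int.fmod_lt_of_pos a hp
  set f := a.fdiv p with hf
  have hb : p * (b - f) < p * 1 := by nlinarith
  have hb' : p * (f - b) < p * 1 := by nlinarith
  have := lt_of_mul_lt_mul_left hb hp.le
  have := lt_of_mul_lt_mul_left hb' hp.le
  omega

private lemma fdiv_natCast {p : ℕ} (hp : 0 < p) (a : ℕ) :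
    (a : ℤ).fdiv p = ((a / p : ℕ) : ℤ) := by
  have h2 := Nat.mod_lt a hp
  have g1 : p * (a / p) ≤ a := Nat.mul_div_le a p
  have g2 : a < p * (a / p) + p := by
    conv_lhs => rw [← Nat.div_add_mod a p]
    exact Nat.add_lt_add_left h2 _
  refine fdiv_eq_of (by exact_mod_cast hp) ?_ ?_
  · exact_mod_cast g1
  · exact_mod_cast g2

private lemma key_s17 (p : ℕ) (hp : p.Prime) (m : ℤ) (r : ℕ) (hr : 1 ≤ r) (k : ℕ) :
    Ring.choose ((p : ℤ) ^ r * m - 1) k * (-1 : ℤ) ^ k ≡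
      Ring.choose ((p : ℤ) ^ (r - 1) * m - 1) (k / p) * (-1 : ℤ) ^ (k / p)
      [ZMOD (p : ℤ) ^ r] := by
  have hp0 : 0 < p := hp.pos
  set q := k / p with hq
  set nL : ℤ := (p : ℤ) ^ r * m - 1 with hnL
  set nR : ℤ := (p : ℤ) ^ (r - 1) * m - 1 with hnR
  have hpow : (p : ℤ) ^ r = (p : ℤ) * (p : ℤ) ^ (r - 1) := by
    conv_lhs => rw [show r = (r - 1) + 1 by omega]
    rw [pow_succ']
  set T : Finset ℕ := (range k).filter (fun i => p ∣ (i + 1)) with hT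
  set S : Finset ℕ := (range k).filter (fun i => ¬ p ∣ (i + 1)) with hS
  -- bijection facts
  have hmem1 : ∀ j ∈ range q, p * (j + 1) - 1 ∈ T := by
    intro j hj
    rw [mem_range] at hj
    have h1 : (j + 1) * p ≤ k := (Nat.le_div_iff_mul_le hp0).mp (by omega)
    have h2 : 1 ≤ p * (j + 1) := Nat.mul_pos hp0 (Nat.succ_pos j)
    rw [hT, mem_filter, mem_range]
    constructor
    · have : p * (j + 1) = (j + 1) * p := Nat.mul_comm _ _
      omega
    · have : p * (j + 1) - 1 + 1 = p * (j + 1) := by omega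
      rw [this]
      exact Dvd.intro _ rfl
  have hmem2 : ∀ i ∈ T, (i + 1) / p - 1 ∈ range q := by
    intro i hi
    rw [hT, mem_filter, mem_range] at hi
    obtain ⟨hik, c, hc⟩ := hi
    have hc1 : 1 ≤ c := by nlinarith
    have hdiv : (i + 1) / p = c := by rw [hc, Nat.mul_div_cancel_left _ hp0]
    rw [mem_range, hdiv]
    have : c * p ≤ k := by nlinarith
    have := (Nat.le_div_iff_mul_le hp0).mpr this
    omega
  have hinv1 : ∀ j ∈ range q, (p * (j + 1) - 1 + 1) / p - 1 = j := by
    intro j hj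
    have h2 : 1 ≤ p * (j + 1) := Nat.mul_pos hp0 (Nat.succ_pos j)
    have : p * (j + 1) - 1 + 1 = p * (j + 1) := by omega
    rw [this, Nat.mul_div_cancel_left _ hp0]
    omega
  have hinv2 : ∀ i ∈ T, p * ((i + 1) / p - 1 + 1) - 1 = i := by
    intro i hi
    rw [hT, mem_filter, mem_range] at hi
    obtain ⟨hik, c, hc⟩ := hi
    have hc1 : 1 ≤ c := by nlinarith
    have hdiv : (i + 1) / p = c := by rw [hc, Nat.mul_div_cancel_left _ hp0]
    have h3 : c - 1 + 1 = c := by omega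
    rw [hdiv, h3, ← hc]
    omega
  have hTprod : ∀ g : ℕ → ℤ, ∏ i ∈ T, g i = ∏ j ∈ range q, g (p * (j + 1) - 1) := by
    intro g
    exact (Finset.prod_nbij' (fun j => p * (j + 1) - 1) (fun i => (i + 1) / p - 1)
      hmem1 hmem2 hinv1 hinv2 (fun a _ => rfl)).symm
  have hTcard : T.card = q := by
    rw [show q = (range q).card from (card_range q).symm]
    exact (Finset.card_nbij' (fun i => (i + 1) / p - 1) (fun j => p * (j + 1) - 1)
      hmem2 hmem1 hinv2 hinv1)
  have hScard : k = S.card + q := by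
    have h := Finset.card_filter_add_card_filter_not (s := range k)
      (p := fun i => p ∣ (i + 1))
    rw [← hT, ← hS, card_range] at h
    omega
  have hcast1 : ∀ j ∈ range q, ((p * (j + 1) - 1 : ℕ) : ℤ) = (p : ℤ) * ((j : ℤ) + 1) - 1 := by
    intro j _
    have h2 : 1 ≤ p * (j + 1) := Nat.mul_pos hp0 (Nat.succ_pos j)
    push_cast [Nat.cast_sub h2]
    ring
  set B : ℤ := ∏ i ∈ S, ((i : ℤ) + 1) with hB
  set A : ℤ := ∏ i ∈ S, (nL - (i : ℤ)) with hA
  -- e1 : factorial splits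
  have e1 : (k.factorial : ℤ) = B * ((p : ℤ) ^ q * (q.factorial : ℤ)) := by
    have h0 : (k.factorial : ℤ) = ∏ i ∈ range k, ((i : ℤ) + 1) := by
      rw [← Finset.prod_range_add_one_eq_factorial]
      push_cast
      rfl
    rw [h0, ← Finset.prod_filter_mul_prod_filter_not (range k) (fun i => ¬ p ∣ (i + 1)),
      ← hS]
    have hTT : (range k).filter (fun i => ¬¬ p ∣ (i + 1)) = T := by
      rw [hT]
      congr 1
      ext i
      exact not_not
    rw [hTT, hTprod (fun i => ((i : ℤ) + 1))]
    congr 1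
    calc ∏ j ∈ range q, (((p * (j + 1) - 1 : ℕ) : ℤ) + 1)
        = ∏ j ∈ range q, ((p : ℤ) * ((j : ℤ) + 1)) := by
          refine Finset.prod_congr rfl fun j hj => ?_
          rw [hcast1 j hj]; ring
      _ = (p : ℤ) ^ q * (q.factorial : ℤ) := by
          rw [Finset.prod_mul_distrib, Finset.prod_const, card_range]
          congr 1
          rw [← Finset.prod_range_add_one_eq_factorial]
          push_cast
          rfl
  -- e2 : falling factorial splits
  have e2 : (∏ i ∈ range k, (nL - (i : ℤ))) =
      A * ((p : ℤ) ^ q * ∏ j ∈ range q, (nR - (j : ℤ))) := by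
    rw [← Finset.prod_filter_mul_prod_filter_not (range k) (fun i => ¬ p ∣ (i + 1)), ← hS]
    have hTT : (range k).filter (fun i => ¬¬ p ∣ (i + 1)) = T := by
      rw [hT]; congr 1; ext i; exact not_not
    rw [hTT, hTprod (fun i => nL - (i : ℤ)), ← hA]
    congr 1
    calc ∏ j ∈ range q, (nL - ((p * (j + 1) - 1 : ℕ) : ℤ))
        = ∏ j ∈ range q, ((p : ℤ) * (nR - (j : ℤ))) := by
          refine Finset.prod_congr rfl fun j hj => ?_
          rw [hcast1 j hj, hnL, hnR, hpow]; ring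
      _ = (p : ℤ) ^ q * ∏ j ∈ range q, (nR - (j : ℤ)) := by
          rw [Finset.prod_mul_distrib, Finset.prod_const, card_range]
  -- exact integer identity
  have hexact : B * Ring.choose nL k = A * Ring.choose nR q := by
    have h1 := fac_mul_choose nL k
    have h2 := fac_mul_choose nR q
    rw [e1, e2, ← h2] at h1
    have h0 : ((p : ℤ) ^ q * (q.factorial : ℤ)) ≠ 0 := by
      have : (q.factorial : ℤ) ≠ 0 := by exact_mod_cast q.factorial_ne_zero
      positivity
    apply mul_left_cancel₀ h0
    linear_combination h1
  -- pass to ZMod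
  set N : ℕ := p ^ r with hN
  haveI : NeZero N := ⟨by positivity⟩
  rw [show ((p : ℤ) ^ r) = ((N : ℕ) : ℤ) by rw [hN]; push_cast; ring,
    ← ZMod.intCast_eq_intCast_iff]
  have hcastexact : (B : ZMod N) * ((Ring.choose nL k : ℤ) : ZMod N) =
      (A : ZMod N) * ((Ring.choose nR q : ℤ) : ZMod N) := by
    have := congrArg (fun z : ℤ => (z : ZMod N)) hexact
    push_cast at this
    exact this
  have hnL0 : ((nL : ℤ) : ZMod N) = -1 := by
    rw [hnL]
    push_cast
    have : ((p : ZMod N)) ^ r = 0 := by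
      rw [← Nat.cast_pow, ← hN, ZMod.natCast_self]
    rw [this]
    ring
  have hAcong : ((A : ℤ) : ZMod N) = (-1) ^ S.card * ((B : ℤ) : ZMod N) := by
    rw [hA, hB]
    push_cast
    rw [show (∏ i ∈ S, (((nL : ℤ) : ZMod N) - (i : ZMod N))) =
        ∏ i ∈ S, ((-1) * ((i : ZMod N) + 1)) from
      Finset.prod_congr rfl (fun i _ => by rw [hnL0]; ring)]
    rw [Finset.prod_mul_distrib, Finset.prod_const]
  have hBunit : IsUnit ((B : ℤ) : ZMod N) := by
    rw [hB]
    push_cast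
    refine Finset.prod_induction _ IsUnit (fun a b ha hb => ha.mul hb) isUnit_one ?_
    intro i hi
    rw [hS, mem_filter] at hi
    have hcop : Nat.Coprime (i + 1) N := by
      rw [hN]
      exact Nat.Coprime.pow_right r (Nat.coprime_comm.mp (hp.coprime_iff_not_dvd.mpr hi.2))
    have := (ZMod.isUnit_iff_coprime (i + 1) N).mpr hcop
    simpa using this
  -- conclude
  push_cast
  set CL := ((Ring.choose nL k : ℤ) : ZMod N)
  set CR := ((Ring.choose nR q : ℤ) : ZMod N)
  apply hBunit.mul_left_cancel
  rw [hAcong] at hcastexact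
  have hss : ((-1 : ZMod N)) ^ S.card * (-1) ^ S.card = 1 := by
    rw [← pow_add]
    exact Even.neg_one_pow ⟨S.card, rfl⟩
  calc ((B : ℤ) : ZMod N) * (CL * (-1) ^ k)
      = ((B : ℤ) : ZMod N) * CL * (-1) ^ k := by ring
    _ = (-1) ^ S.card * ((B : ℤ) : ZMod N) * CR * (-1) ^ k := by rw [hcastexact]
    _ = ((B : ℤ) : ZMod N) * (CR * (-1) ^ q) := by
        rw [hScard, pow_add]
        calc (-1) ^ S.card * ((B : ℤ) : ZMod N) * CR * ((-1) ^ S.card * (-1) ^ q)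
            = ((-1) ^ S.card * (-1) ^ S.card) * (((B : ℤ) : ZMod N) * (CR * (-1) ^ q)) := by
              ring
          _ = ((B : ℤ) : ZMod N) * (CR * (-1) ^ q) := by rw [hss, one_mul]

private lemma binom_natCast (n : ℤ) (a : ℕ) : binom n (a : ℤ) = Ring.choose n a := by
  rw [binom, if_pos (by exact_mod_cast Nat.zero_le a : (0 : ℤ) ≤ (a : ℤ))]
  simp only [Int.toNat_natCast]
  exact binom_div n a

private lemma binom_neg (n k : ℤ) (hk : k < 0) (h : 0 ≤ n - k) :
    binom n k = Ring.choose n (n - k).toNat := by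
  rw [binom, if_neg (not_le.mpr hk), if_pos h]
  exact binom_div n (n - k).toNat

/-- For primes `p`, integers `m, k`, and `r ≥ 1`:
`binom(pʳm - 1, k)(-1)^k ≡ binom(p^{r-1}m - 1, ⌊k/p⌋)(-1)^{⌊k/p⌋} (mod pʳ)`. -/
theorem stmt17 (p : ℕ) (hp : p.Prime) (m k : ℤ) (r : ℕ) (hr : 1 ≤ r) :
    binom ((p : ℤ) ^ r * m - 1) k * (k.negOnePow : ℤ) ≡
      binom ((p : ℤ) ^ (r - 1) * m - 1) (k.fdiv p) * ((k.fdiv p).negOnePow : ℤ)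
      [ZMOD (p : ℤ) ^ r] := by
  have hp0 : 0 < p := hp.pos
  have hpz : (0 : ℤ) < (p : ℤ) := by exact_mod_cast hp0
  set nL : ℤ := (p : ℤ) ^ r * m - 1 with hnL
  set nR : ℤ := (p : ℤ) ^ (r - 1) * m - 1 with hnR
  have hpow : (p : ℤ) ^ r = (p : ℤ) * (p : ℤ) ^ (r - 1) := by
    conv_lhs => rw [show r = (r - 1) + 1 by omega]
    rw [pow_succ']
  rcases le_or_gt 0 k with hk | hk
  · -- k ≥ 0
    lift k to ℕ using hk with a
    rw [fdiv_natCast hp0 a, binom_natCast, binom_natCast, Int.coe_negOnePow_natCast,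
      Int.coe_negOnePow_natCast]
    exact key_s17 p hp m r hr a
  · -- k < 0
    set q : ℤ := k.fdiv (p : ℤ) with hqdef
    have hfd : (nL - k).fdiv (p : ℤ) = nR - q := by
      have h3 := Int.mul_fdiv_add_fmod k (p : ℤ)
      have h4 := Int.fmod_nonneg_of_pos k hpz
      have h5 := Int.fmod_lt_of_pos k hpz
      refine fdiv_eq_of hpz ?_ ?_ <;>
        · rw [hnL, hnR, hpow]
          nlinarith [h3, h4, h5]
    rcases le_or_gt 0 (nL - k) with h1 | h1
    · -- nonzero branch
      have h2 : 0 ≤ nR - q := hfd ▸ Int.fdiv_nonneg h1 hpz.le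
      set a : ℕ := (nL - k).toNat with hadef
      set b : ℕ := (nR - q).toNat with hbdef
      have ha : (a : ℤ) = nL - k := Int.toNat_of_nonneg h1
      have hb : (b : ℤ) = nR - q := Int.toNat_of_nonneg h2
      have hqneg : q < 0 := Int.fdiv_neg_of_neg_of_pos hk hpz
      have hdivab : a / p = b := by
        have : ((a / p : ℕ) : ℤ) = ((b : ℕ) : ℤ) := by
          rw [← fdiv_natCast hp0 a, ha, hfd, hb]
        exact_mod_cast this
      have hkey := key_s17 p hp m r hr a
      rw [hdivab] at hkey
      rw [binom_neg nL k hk h1, binom_neg nR q hqneg h2, ← hadef, ← hbdef]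
      have hea : ((nL - k).negOnePow : ℤ) = (-1 : ℤ) ^ a := by
        rw [← ha, Int.coe_negOnePow_natCast]
      have heb : ((nR - q).negOnePow : ℤ) = (-1 : ℤ) ^ b := by
        rw [← hb, Int.coe_negOnePow_natCast]
      have huL : (nL.negOnePow : ℤ) * (nL.negOnePow : ℤ) = 1 := by
        rw [← Units.val_mul, Int.units_mul_self, Units.val_one]
      have huR : (nR.negOnePow : ℤ) * (nR.negOnePow : ℤ) = 1 := by
        rw [← Units.val_mul, Int.units_mul_self, Units.val_one]
      have hk_eps : (k.negOnePow : ℤ) = (-1 : ℤ) ^ a * (nL.negOnePow : ℤ) := by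
        have e3 : ((nL - k).negOnePow : ℤ) = (nL.negOnePow : ℤ) * (k.negOnePow : ℤ) := by
          rw [Int.negOnePow_sub, Units.val_mul]
        calc (k.negOnePow : ℤ)
            = ((nL.negOnePow : ℤ) * (nL.negOnePow : ℤ)) * (k.negOnePow : ℤ) := by
              rw [huL]; ring
          _ = (nL.negOnePow : ℤ) * ((nL - k).negOnePow : ℤ) := by rw [e3]; ring
          _ = (-1 : ℤ) ^ a * (nL.negOnePow : ℤ) := by rw [hea]; ring
      have hq_eps : (q.negOnePow : ℤ) = (-1 : ℤ) ^ b * (nR.negOnePow : ℤ) := by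
        have e3 : ((nR - q).negOnePow : ℤ) = (nR.negOnePow : ℤ) * (q.negOnePow : ℤ) := by
          rw [Int.negOnePow_sub, Units.val_mul]
        calc (q.negOnePow : ℤ)
            = ((nR.negOnePow : ℤ) * (nR.negOnePow : ℤ)) * (q.negOnePow : ℤ) := by
              rw [huR]; ring
          _ = (nR.negOnePow : ℤ) * ((nR - q).negOnePow : ℤ) := by rw [e3]; ring
          _ = (-1 : ℤ) ^ b * (nR.negOnePow : ℤ) := by rw [heb]; ring
      have hsg : (nL.negOnePow : ℤ) ≡ (nR.negOnePow : ℤ) [ZMOD (p : ℤ) ^ r] := by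
        rcases Int.even_or_odd (nL - nR) with he | ho
        · rw [(Int.negOnePow_eq_iff nL nR).mpr he]
        · -- necessarily p = 2 and r = 1
          have hdiff : nL - nR = (p : ℤ) ^ (r - 1) * m * ((p : ℤ) - 1) := by
            rw [hnL, hnR, hpow]; ring
          rw [hdiff, Int.odd_mul] at ho
          have hpeven : Even ((p : ℤ)) := by
            have := ho.2
            rcases this with ⟨c, hc⟩
            exact ⟨c + 1, by linarith⟩
          have hp2 : p = 2 := by
            have : Even p := by exact_mod_cast hpeven
            exact ((Nat.Prime.even_iff hp).mp this)
          have hr1 : r = 1 := by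
            by_contra hcon
            have hr2 : 2 ≤ r := by omega
            have : (2 : ℤ) ∣ (p : ℤ) ^ (r - 1) := by
              rw [hp2]; push_cast
              exact dvd_pow_self 2 (by omega)
            have hodd := (Int.odd_mul.mp ho.1).1
            rw [Int.odd_iff] at hodd
            omega
          rw [Int.modEq_iff_dvd, hp2, hr1]
          have d1 := Int.units_eq_one_or nL.negOnePow
          have d2 := Int.units_eq_one_or nR.negOnePow
          rcases d1 with d1 | d1 <;> rcases d2 with d2 | d2 <;>
            rw [d1, d2] <;> norm_num
      rw [hk_eps, hq_eps]
      have hfin := hkey.mul hsg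
      calc Ring.choose nL a * ((-1 : ℤ) ^ a * (nL.negOnePow : ℤ))
          = Ring.choose nL a * (-1 : ℤ) ^ a * (nL.negOnePow : ℤ) := by ring
        _ ≡ Ring.choose nR b * (-1 : ℤ) ^ b * (nR.negOnePow : ℤ) [ZMOD (p : ℤ) ^ r] := hfin
        _ = Ring.choose nR b * ((-1 : ℤ) ^ b * (nR.negOnePow : ℤ)) := by ring
    · -- both sides vanish
      have h2 : nR - q < 0 := by
        have := Int.fdiv_neg_of_neg_of_pos h1 hpz
        rw [hfd] at this
        exact this
      rw [binom, if_neg (not_le.mpr hk), if_neg (not_le.mpr h1)]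
      rw [binom, if_neg (not_le.mpr (Int.fdiv_neg_of_neg_of_pos hk hpz)), if_neg (not_le.mpr h2)]
      simp
end
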